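/- arXiv:1805.02362 — 9 statements merged into one kernel-verified Lean document; each statement's English description precedes it below -/
import Mathlib

section
/- The spectral radius of B equals (1 − q)^{−1/2}; moreover, writing α_n = √((1 − q^{n+1})/(1 − q)) for the weights of B, both r(B) = lim_{k→∞} sup_{n∈ℕ} (∏_{i=0}^{k−1} α_{n+i})^{1/k} and i(B) = lim_{k→∞} inf_{n∈ℕ} (∏_{i=0}^{k−1} α_{n+i})^{1/k} exist and are equal to (1 − q)^{−1/2}. -/
open Filter Topology

noncomputable section

abbrev H2 : Type := lp (fun _ : ℕ => ℂ) 2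

def Phi (n : ℕ) : H2 := lp.single 2 n 1

open scoped ENNReal

namespace Stmt8Aux

def al (q : ℝ) (n : ℕ) : ℝ := Real.sqrt ((1 - q ^ (n + 1)) / (1 - q))

def cst (q : ℝ) : ℝ := (1 - q) ^ (-(1 / 2 : ℝ))

variable {q : ℝ}

lemma hq' (hq1 : q < 1) : 0 < 1 - q := by linarith

lemma hqn (hq0 : 0 < q) (hq1 : q < 1) (n : ℕ) : 0 < 1 - q ^ (n + 1) := by
  have : q ^ (n + 1) < 1 := pow_lt_one₀ hq0.le hq1 (Nat.succ_ne_zero n)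
  linarith

lemma cst_eq (hq1 : q < 1) : cst q = (Real.sqrt (1 - q))⁻¹ := by
  rw [cst, Real.rpow_neg (hq' hq1).le, ← Real.sqrt_eq_rpow]

lemma cst_pos (hq1 : q < 1) : 0 < cst q := by
  rw [cst_eq hq1]
  exact inv_pos.2 (Real.sqrt_pos.2 (hq' hq1))

lemma al_eq (hq0 : 0 < q) (hq1 : q < 1) (n : ℕ) :
    al q n = Real.sqrt (1 - q ^ (n + 1)) * (Real.sqrt (1 - q))⁻¹ := by
  rw [al, Real.sqrt_div (hqn hq0 hq1 n).le, div_eq_mul_inv]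

lemma al_pos (hq0 : 0 < q) (hq1 : q < 1) (n : ℕ) : 0 < al q n :=
  Real.sqrt_pos.2 (div_pos (hqn hq0 hq1 n) (hq' hq1))

lemma al_le_cst (hq0 : 0 < q) (hq1 : q < 1) (n : ℕ) : al q n ≤ cst q := by
  rw [al_eq hq0 hq1, cst_eq hq1]
  have h1 : Real.sqrt (1 - q ^ (n + 1)) ≤ 1 := by
    apply Real.sqrt_le_one.2
    nlinarith [pow_pos hq0 (n+1)]
  calc Real.sqrt (1 - q ^ (n + 1)) * (Real.sqrt (1 - q))⁻¹
      ≤ 1 * (Real.sqrt (1 - q))⁻¹ := mul_le_mul_of_nonneg_right h1 (by positivity)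
    _ = (Real.sqrt (1 - q))⁻¹ := one_mul _

lemma al_mono (hq0 : 0 < q) (hq1 : q < 1) : Monotone (al q) := by
  intro n m hnm
  apply Real.sqrt_le_sqrt
  apply (div_le_div_iff_of_pos_right (hq' hq1)).2
  have : q ^ (m + 1) ≤ q ^ (n + 1) := pow_le_pow_of_le_one hq0.le hq1.le (by omega)
  linarith

lemma al_tendsto (hq0 : 0 < q) (hq1 : q < 1) :
    Tendsto (al q) atTop (𝓝 (cst q)) := by
  have h0 : Tendsto (fun n : ℕ => q ^ (n + 1)) atTop (𝓝 0) :=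
    (tendsto_pow_atTop_nhds_zero_of_lt_one hq0.le hq1).comp (tendsto_add_atTop_nat 1)
  have h1 : Tendsto (fun n : ℕ => Real.sqrt (1 - q ^ (n + 1))) atTop (𝓝 1) := by
    have h2 : Tendsto (fun n : ℕ => (1 - q ^ (n + 1) : ℝ)) atTop (𝓝 1) := by
      simpa using tendsto_const_nhds.sub h0
    have := (Real.continuous_sqrt.tendsto 1).comp h2
    simpa [Function.comp_def] using this
  have h3 := h1.mul_const (Real.sqrt (1 - q))⁻¹
  rw [one_mul] at h3
  rw [cst_eq hq1]
  exact h3.congr fun n => (al_eq hq0 hq1 n).symm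

lemma prod_tendsto (hq0 : 0 < q) (hq1 : q < 1) (k : ℕ) :
    Tendsto (fun n => ∏ i ∈ Finset.range k, al q (n + i)) atTop (𝓝 (cst q ^ k)) := by
  have : (cst q ^ k) = ∏ i ∈ Finset.range k, cst q := by simp
  rw [this]
  apply tendsto_finset_prod
  intro i _
  exact (al_tendsto hq0 hq1).comp (tendsto_atTop_atTop.2 fun b => ⟨b, fun a ha => by omega⟩)


def g (q : ℝ) (k n : ℕ) : ℝ := (∏ i ∈ Finset.range k, al q (n + i)) ^ ((k : ℝ)⁻¹)

lemma g_nonneg (hq0 : 0 < q) (hq1 : q < 1) (k n : ℕ) : 0 ≤ g q k n := by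
  apply Real.rpow_nonneg
  exact Finset.prod_nonneg fun i _ => (al_pos hq0 hq1 _).le

lemma g_mono (hq0 : 0 < q) (hq1 : q < 1) (k : ℕ) : Monotone (g q k) := by
  intro n m hnm
  apply Real.rpow_le_rpow (Finset.prod_nonneg fun i _ => (al_pos hq0 hq1 _).le)
    (Finset.prod_le_prod (fun i _ => (al_pos hq0 hq1 _).le)
      (fun i _ => al_mono hq0 hq1 (by omega)))
    (by positivity)

lemma hck (hq1 : q < 1) {k : ℕ} (hk : 1 ≤ k) : (cst q ^ k) ^ ((k : ℝ)⁻¹) = cst q := by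
  rw [← Real.rpow_natCast (cst q) k, ← Real.rpow_mul (cst_pos hq1).le,
    mul_inv_cancel₀ (by exact_mod_cast Nat.one_le_iff_ne_zero.1 hk), Real.rpow_one]

lemma g_le (hq0 : 0 < q) (hq1 : q < 1) {k : ℕ} (hk : 1 ≤ k) (n : ℕ) : g q k n ≤ cst q := by
  rw [← hck hq1 hk]
  apply Real.rpow_le_rpow (Finset.prod_nonneg fun i _ => (al_pos hq0 hq1 _).le) ?_ (by positivity)
  calc ∏ i ∈ Finset.range k, al q (n + i) ≤ ∏ i ∈ Finset.range k, cst q :=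
        Finset.prod_le_prod (fun i _ => (al_pos hq0 hq1 _).le)
          (fun i _ => al_le_cst hq0 hq1 _)
    _ = cst q ^ k := by simp

lemma g_tendsto (hq0 : 0 < q) (hq1 : q < 1) {k : ℕ} (hk : 1 ≤ k) :
    Tendsto (g q k) atTop (𝓝 (cst q)) := by
  have := (prod_tendsto hq0 hq1 k).rpow_const (p := ((k : ℝ)⁻¹))
    (Or.inl (pow_pos (cst_pos hq1) k).ne')
  rwa [hck hq1 hk] at this

lemma sup_eq (hq0 : 0 < q) (hq1 : q < 1) {k : ℕ} (hk : 1 ≤ k) :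
    ⨆ n, g q k n = cst q := by
  have h1 : Tendsto (g q k) atTop (𝓝 (⨆ n, g q k n)) :=
    tendsto_atTop_ciSup (g_mono hq0 hq1 k)
      ⟨cst q, by rintro x ⟨n, rfl⟩; exact g_le hq0 hq1 hk n⟩
  exact tendsto_nhds_unique h1 (g_tendsto hq0 hq1 hk)

lemma inf_eq (hq0 : 0 < q) (hq1 : q < 1) (k : ℕ) : ⨅ n, g q k n = g q k 0 := by
  refine le_antisymm (ciInf_le ⟨0, ?_⟩ 0) (le_ciInf fun n => g_mono hq0 hq1 k (Nat.zero_le n))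
  rintro x ⟨n, rfl⟩
  exact g_nonneg hq0 hq1 k n

lemma prod_rpow_tendsto (hq0 : 0 < q) (hq1 : q < 1) :
    Tendsto (fun k : ℕ => (∏ i ∈ Finset.range k, al q i) ^ ((k : ℝ)⁻¹)) atTop (𝓝 (cst q)) := by
  have hlog : Tendsto (fun i => Real.log (al q i)) atTop (𝓝 (Real.log (cst q))) :=
    (Real.continuousAt_log (cst_pos hq1).ne').tendsto.comp (al_tendsto hq0 hq1)
  have hexp := (Real.continuous_exp.tendsto _).comp hlog.cesaro
  rw [Real.exp_log (cst_pos hq1)] at hexp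
  refine hexp.congr fun k => ?_
  simp only [Function.comp]
  rw [← Real.log_prod (fun i _ => (al_pos hq0 hq1 i).ne'),
    Real.rpow_def_of_pos (Finset.prod_pos fun i _ => al_pos hq0 hq1 i), mul_comm]

lemma g_zero_tendsto (hq0 : 0 < q) (hq1 : q < 1) :
    Tendsto (fun k : ℕ => g q k 0) atTop (𝓝 (cst q)) := by
  refine (prod_rpow_tendsto hq0 hq1).congr fun k => ?_
  unfold g
  norm_num


lemma Phi_norm (n : ℕ) : ‖Phi n‖ = 1 := by
  have := lp.norm_single (p := 2) (E := fun _ : ℕ => ℂ) (by norm_num) n (1:ℂ)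
  simpa [Phi] using this

lemma single_eq_smul_Phi (n : ℕ) (a : ℂ) : lp.single 2 n a = a • Phi n := by
  rw [Phi, ← lp.single_smul, smul_eq_mul, mul_one]

lemma single_zero (n : ℕ) : lp.single 2 n (0 : ℂ) = (0 : H2) := by
  rw [single_eq_smul_Phi, zero_smul]

variable {B : H2 →L[ℂ] H2}
variable (hB : ∀ n : ℕ, B (Phi n) =
  (Real.sqrt ((1 - q ^ (n + 1)) / (1 - q)) : ℂ) • Phi (n + 1))

include hB in
lemma Bpow (k n : ℕ) :
    (B ^ k) (Phi n) = ((∏ i ∈ Finset.range k, al q (n + i) : ℝ) : ℂ) • Phi (n + k) := by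
  induction k generalizing n with
  | zero => simp
  | succ k ih =>
    have h1 : (B ^ (k + 1)) (Phi n) = (B ^ k) (B (Phi n)) := by
      rw [pow_succ, ContinuousLinearMap.mul_apply]
    have hprod : ∏ i ∈ Finset.range (k + 1), al q (n + i)
        = (∏ i ∈ Finset.range k, al q (n + 1 + i)) * al q n := by
      rw [Finset.prod_range_succ']
      exact congrArg (· * al q n)
        (Finset.prod_congr rfl fun i _ => by rw [show n + (i + 1) = n + 1 + i by omega])
    rw [h1, hB n, show (Real.sqrt ((1 - q ^ (n + 1)) / (1 - q)) : ℂ) = (al q n : ℂ) from rfl,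
      map_smul, ih (n + 1), hprod, show n + 1 + k = n + (k + 1) by omega, smul_smul]
    congr 1
    push_cast
    try ring

include hB in
lemma Bpow_norm (hq0 : 0 < q) (hq1 : q < 1) (k n : ℕ) :
    ‖(B ^ k) (Phi n)‖ = ∏ i ∈ Finset.range k, al q (n + i) := by
  rw [Bpow hB k n, norm_smul, Phi_norm, mul_one, Complex.norm_real, Real.norm_eq_abs,
    abs_of_nonneg (Finset.prod_nonneg fun i _ => (al_pos hq0 hq1 _).le)]

include hB in
lemma norm_Bpow_ge (hq0 : 0 < q) (hq1 : q < 1) (k : ℕ) : cst q ^ k ≤ ‖B ^ k‖ := by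
  refine le_of_tendsto (prod_tendsto hq0 hq1 k) (Eventually.of_forall fun n => ?_)
  rw [← Bpow_norm hB hq0 hq1 k n]
  calc ‖(B ^ k) (Phi n)‖ ≤ ‖B ^ k‖ * ‖Phi n‖ := (B ^ k).le_opNorm _
    _ = ‖B ^ k‖ := by rw [Phi_norm, mul_one]

include hB in
lemma norm_B_le (hq0 : 0 < q) (hq1 : q < 1) : ‖B‖ ≤ cst q := by
  refine B.opNorm_le_bound (cst_pos hq1).le fun x => ?_
  classical
  set c := cst q with hc
  -- the shifted coordinate function
  set yf : ℕ → ℂ := fun m => Nat.rec 0 (fun n _ => (al q n : ℂ) * x n) m with hyf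
  have hyf0 : yf 0 = 0 := rfl
  have hyfs : ∀ n, yf (n + 1) = (al q n : ℂ) * x n := fun n => rfl
  have htwo : (0:ℝ) < (2 : ℝ≥0∞).toReal := by norm_num
  have hxsum : Summable fun n => ‖x n‖ ^ (2 : ℝ≥0∞).toReal := (lp.memℓp x).summable htwo
  have hbound : ∀ n : ℕ, ‖yf (n + 1)‖ ^ (2 : ℝ≥0∞).toReal
      ≤ c ^ (2 : ℝ≥0∞).toReal * ‖x n‖ ^ (2 : ℝ≥0∞).toReal := by
    intro n
    rw [hyfs n, ← Real.mul_rpow (cst_pos hq1).le (norm_nonneg _)]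
    apply Real.rpow_le_rpow (norm_nonneg _) ?_ htwo.le
    rw [norm_mul, Complex.norm_real, Real.norm_eq_abs, abs_of_nonneg (al_pos hq0 hq1 n).le]
    exact mul_le_mul_of_nonneg_right (al_le_cst hq0 hq1 n) (norm_nonneg _)
  have hzero : ∀ m : ℕ, m ∉ Set.range Nat.succ → ‖yf m‖ ^ (2 : ℝ≥0∞).toReal = 0 := by
    intro m hm
    match m with
    | 0 => rw [hyf0]; simp [Real.zero_rpow htwo.ne']
    | n + 1 => exact absurd ⟨n, rfl⟩ hm
  have hymem : Memℓp yf 2 := by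
    apply memℓp_gen
    rw [← Function.Injective.summable_iff Nat.succ_injective hzero]
    exact Summable.of_nonneg_of_le (fun n => Real.rpow_nonneg (norm_nonneg _) _) hbound
      (hxsum.mul_left _)
  set y : H2 := ⟨yf, hymem⟩ with hy
  have hycoe : ∀ m, (y : ∀ _ : ℕ, ℂ) m = yf m := fun m => rfl
  -- B x = y
  have hx : HasSum (fun n => lp.single 2 n (x n)) x :=
    lp.hasSum_single (by norm_num) x
  have hBx : HasSum (fun n => lp.single 2 (n + 1) (yf (n + 1))) (B x) := by
    have h2 := B.hasSum hx
    refine h2.congr_fun fun n => ?_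
    rw [single_eq_smul_Phi, single_eq_smul_Phi, map_smul, hB n, smul_smul, hyfs n,
      show (Real.sqrt ((1 - q ^ (n + 1)) / (1 - q)) : ℂ) = (al q n : ℂ) from rfl, mul_comm]
  have hyS : HasSum (fun n => lp.single 2 (n + 1) (yf (n + 1))) y := by
    have h3 : HasSum (fun m => (lp.single 2 m (yf m) : H2)) y := by
      have := lp.hasSum_single (E := fun _ : ℕ => ℂ) (p := 2) (by norm_num) y
      exact this.congr_fun fun m => by rw [hycoe]
    have h4 : ∀ m : ℕ, m ∉ Set.range Nat.succ → lp.single 2 m (yf m) = (0 : H2) := by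
      intro m hm
      match m with
      | 0 => rw [hyf0, single_zero]
      | n + 1 => exact absurd ⟨n, rfl⟩ hm
    exact (Function.Injective.hasSum_iff Nat.succ_injective h4).2 h3
  have hBxy : B x = y := hBx.unique hyS
  -- norm estimate
  have hny : HasSum (fun m => ‖yf m‖ ^ (2 : ℝ≥0∞).toReal) (‖y‖ ^ (2 : ℝ≥0∞).toReal) := by
    have := lp.hasSum_norm htwo y
    exact this.congr_fun fun m => by rw [hycoe]
  have hny' : HasSum (fun n => ‖yf (n + 1)‖ ^ (2 : ℝ≥0∞).toReal) (‖y‖ ^ (2 : ℝ≥0∞).toReal) :=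
    (Function.Injective.hasSum_iff Nat.succ_injective hzero).2 hny
  have hnx : HasSum (fun n => c ^ (2 : ℝ≥0∞).toReal * ‖x n‖ ^ (2 : ℝ≥0∞).toReal)
      (c ^ (2 : ℝ≥0∞).toReal * ‖x‖ ^ (2 : ℝ≥0∞).toReal) := (lp.hasSum_norm htwo x).mul_left _
  have hle : ‖y‖ ^ (2 : ℝ≥0∞).toReal ≤ c ^ (2 : ℝ≥0∞).toReal * ‖x‖ ^ (2 : ℝ≥0∞).toReal :=
    hasSum_le hbound hny' hnx
  rw [← Real.mul_rpow (cst_pos hq1).le (norm_nonneg _)] at hle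
  rw [hBxy]
  exact (Real.rpow_le_rpow_iff (norm_nonneg _) (mul_nonneg (cst_pos hq1).le (norm_nonneg _)) htwo).1 hle


include hB in
lemma norm_Bpow_eq (hq0 : 0 < q) (hq1 : q < 1) {k : ℕ} (hk : 1 ≤ k) :
    ‖B ^ k‖ = cst q ^ k :=
  le_antisymm
    (calc ‖B ^ k‖ ≤ ‖B‖ ^ k := norm_pow_le' B hk
      _ ≤ cst q ^ k := pow_le_pow_left₀ (norm_nonneg _) (norm_B_le hB hq0 hq1) k)
    (norm_Bpow_ge hB hq0 hq1 k)

include hB in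
lemma spec (hq0 : 0 < q) (hq1 : q < 1) :
    spectralRadius ℂ B = ENNReal.ofReal (cst q) := by
  have h := spectrum.pow_nnnorm_pow_one_div_tendsto_nhds_spectralRadius B
  have h2 : (fun k : ℕ => ((‖B ^ k‖₊ : ℝ≥0∞) ^ (1 / (k : ℝ)) : ℝ≥0∞))
      =ᶠ[atTop] (fun _ => ENNReal.ofReal (cst q)) := by
    filter_upwards [eventually_ge_atTop 1] with k hk
    have hn : (‖B ^ k‖₊ : ℝ≥0∞) = ENNReal.ofReal (cst q) ^ k := by
      rw [← enorm_eq_nnnorm, ← ofReal_norm, norm_Bpow_eq hB hq0 hq1 hk,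
        ← ENNReal.ofReal_pow (cst_pos hq1).le]
    rw [hn, ← ENNReal.rpow_natCast, ← ENNReal.rpow_mul, mul_one_div,
      div_self (by exact_mod_cast Nat.one_le_iff_ne_zero.1 hk : (k:ℝ) ≠ 0),
      ENNReal.rpow_one]
  exact tendsto_nhds_unique h (Tendsto.congr' h2.symm tendsto_const_nhds)

end Stmt8Aux

/-- The spectral radius of `B` equals `(1−q)^{-1/2}`; moreover, with weights
`α_n = √((1−q^{n+1})/(1−q))`, the quantities
`r(B) = lim_k sup_n (∏_{i<k} α_{n+i})^{1/k}` and
`i(B) = lim_k inf_n (∏_{i<k} α_{n+i})^{1/k}` exist and equal `(1−q)^{-1/2}`. -/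
theorem stmt_8 (q : ℝ) (hq0 : 0 < q) (hq1 : q < 1)
    (B : H2 →L[ℂ] H2)
    (hB : ∀ n : ℕ, B (Phi n) = (Real.sqrt ((1 - q ^ (n + 1)) / (1 - q)) : ℂ) • Phi (n + 1)) :
    spectralRadius ℂ B = ENNReal.ofReal ((1 - q) ^ (-(1 / 2 : ℝ))) ∧
    Tendsto
      (fun k : ℕ => ⨆ n : ℕ,
        (∏ i ∈ Finset.range k, Real.sqrt ((1 - q ^ (n + i + 1)) / (1 - q))) ^ ((k : ℝ)⁻¹))
      atTop (𝓝 ((1 - q) ^ (-(1 / 2 : ℝ)))) ∧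
    Tendsto
      (fun k : ℕ => ⨅ n : ℕ,
        (∏ i ∈ Finset.range k, Real.sqrt ((1 - q ^ (n + i + 1)) / (1 - q))) ^ ((k : ℝ)⁻¹))
      atTop (𝓝 ((1 - q) ^ (-(1 / 2 : ℝ)))) := by
  refine ⟨Stmt8Aux.spec hB hq0 hq1, ?_, ?_⟩
  · show Tendsto (fun k : ℕ => ⨆ n : ℕ, Stmt8Aux.g q k n) atTop (𝓝 (Stmt8Aux.cst q))
    have h2 : ∀ᶠ k : ℕ in atTop,
        Stmt8Aux.cst q = ⨆ n : ℕ, Stmt8Aux.g q k n := by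
      filter_upwards [eventually_ge_atTop 1] with k hk
      exact (Stmt8Aux.sup_eq hq0 hq1 hk).symm
    exact Tendsto.congr' h2 tendsto_const_nhds
  · show Tendsto (fun k : ℕ => ⨅ n : ℕ, Stmt8Aux.g q k n) atTop (𝓝 (Stmt8Aux.cst q))
    exact (Stmt8Aux.g_zero_tendsto hq0 hq1).congr
      fun k => (Stmt8Aux.inf_eq hq0 hq1 k).symm

end
end

section
/- The spectrum of B is the closed disk {c ∈ ℂ : |c| ≤ (1 − q)^{−1/2}} centered at the origin in the complex plane. -/
noncomputable section
namespace Stmt9Aux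

/-- evaluation at a coordinate as a CLM -/
def ev (m : ℕ) : H2 →L[ℂ] ℂ :=
  LinearMap.mkContinuous
    { toFun := fun f => f m
      map_add' := fun f g => by simp
      map_smul' := fun c f => by simp } 1
    (fun f => by rw [one_mul]; exact lp.norm_apply_le_norm (two_ne_zero) f m)

@[simp] lemma ev_apply (m : ℕ) (f : H2) : ev m f = f m := rfl

lemma phi_apply (k m : ℕ) : (Phi k : ∀ _ : ℕ, ℂ) m = if m = k then 1 else 0 := by
  simp [Phi, lp.single_apply, Pi.single_apply]

lemma single_eq_smul (n : ℕ) (a : ℂ) : lp.single 2 n a = a • Phi n := by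
  rw [Phi, ← lp.single_smul, smul_eq_mul, mul_one]

variable {q : ℝ} (hq0 : 0 < q) (hq1 : q < 1) (B : H2 →L[ℂ] H2)
  (hB : ∀ n : ℕ, B (Phi n) = (Real.sqrt ((1 - q ^ (n + 1)) / (1 - q)) : ℂ) • Phi (n + 1))

-- weights
local notation "w" => fun n : ℕ => Real.sqrt ((1 - q ^ (n + 1)) / (1 - q))

include hq0 hq1 in
lemma wpos (n : ℕ) : 0 < w n := by
  have h1 : 0 < 1 - q := by linarith
  have h2 : q ^ (n+1) < 1 := pow_lt_one₀ hq0.le hq1 (Nat.succ_ne_zero n)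
  exact Real.sqrt_pos.2 (div_pos (by linarith) h1)

include hq0 hq1 in
lemma wsq (n : ℕ) : (w n) ^ 2 = (1 - q ^ (n+1)) / (1 - q) := by
  have h1 : 0 < 1 - q := by linarith
  have h2 : q ^ (n+1) < 1 := pow_lt_one₀ hq0.le hq1 (Nat.succ_ne_zero n)
  exact Real.sq_sqrt (le_of_lt (div_pos (by linarith) h1))

include hB in
lemma coord_zero (f : H2) : (B f : ∀ _ : ℕ, ℂ) 0 = 0 := by
  have hs : HasSum (fun n : ℕ => lp.single 2 n (f n)) f := lp.hasSum_single ENNReal.ofNat_ne_top f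
  have h2 := hs.mapL ((ev 0).comp B)
  have : ∀ n : ℕ, ((ev 0).comp B) (lp.single 2 n (f n)) = 0 := by
    intro n
    rw [single_eq_smul]
    simp only [ContinuousLinearMap.comp_apply, map_smul, hB n, ev_apply]
    have : ((Real.sqrt ((1 - q ^ (n + 1)) / (1 - q)) : ℂ) • Phi (n + 1) : ∀ _ : ℕ, ℂ) 0
        = (Real.sqrt ((1 - q ^ (n + 1)) / (1 - q)) : ℂ) * (Phi (n+1) : ∀ _ : ℕ, ℂ) 0 := rfl
    simp [this, phi_apply]
  simp only [this] at h2
  have := h2.unique hasSum_zero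
  simpa using this

include hB in
lemma coord_succ (f : H2) (k : ℕ) :
    (B f : ∀ _ : ℕ, ℂ) (k+1) = (w k : ℂ) * f k := by
  have hs : HasSum (fun n : ℕ => lp.single 2 n (f n)) f := lp.hasSum_single ENNReal.ofNat_ne_top f
  have h2 := hs.mapL ((ev (k+1)).comp B)
  have heq : ∀ n : ℕ, ((ev (k+1)).comp B) (lp.single 2 n (f n))
      = if n = k then (w k : ℂ) * f k else 0 := by
    intro n
    rw [single_eq_smul]
    simp only [ContinuousLinearMap.comp_apply, map_smul, hB n, ev_apply]
    simp only [lp.coeFn_smul, Pi.smul_apply, smul_eq_mul, phi_apply]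
    by_cases h : n = k
    · subst h; simp [mul_comm]
    · have : ¬ (k + 1 = n + 1) := by omega
      simp [this, h, Ne.symm h]
  simp only [heq] at h2
  have h3 : HasSum (fun n : ℕ => if n = k then (w k : ℂ) * f k else 0) ((w k : ℂ) * f k) :=
    hasSum_ite_eq k _
  have := h2.unique h3
  simpa using this


include hq0 hq1 in
lemma w_le (n : ℕ) : w n ≤ (1 - q) ^ (-(1 / 2 : ℝ)) := by
  have h1 : 0 < 1 - q := by linarith
  have hr : (1 - q) ^ (-(1 / 2 : ℝ)) = Real.sqrt ((1-q)⁻¹) := by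
    have hinv : ((1-q)⁻¹ : ℝ) = (1-q) ^ (-(1:ℝ)) := (Real.rpow_neg_one _).symm
    rw [Real.sqrt_eq_rpow, hinv, ← Real.rpow_mul h1.le]
    norm_num
  rw [hr]
  apply Real.sqrt_le_sqrt
  rw [div_le_iff₀ h1, inv_mul_cancel₀ h1.ne']
  nlinarith [pow_nonneg hq0.le (n+1)]

include hq0 hq1 hB in
lemma norm_bound (f : H2) : ‖B f‖ ≤ (1 - q) ^ (-(1 / 2 : ℝ)) * ‖f‖ := by
  set r : ℝ := (1 - q) ^ (-(1 / 2 : ℝ)) with hrdef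
  have h1 : 0 < 1 - q := by linarith
  have hr : 0 < r := Real.rpow_pos_of_pos h1 _
  have hBf : HasSum (fun m => ‖(B f : ∀ _ : ℕ, ℂ) m‖ ^ 2) (‖B f‖ ^ 2) := by
    have := lp.hasSum_norm (p := 2) (by norm_num) (B f)
    simpa [Real.rpow_two] using this
  have hf : HasSum (fun n => ‖(f : ∀ _ : ℕ, ℂ) n‖ ^ 2) (‖f‖ ^ 2) := by
    have := lp.hasSum_norm (p := 2) (by norm_num) f
    simpa [Real.rpow_two] using this
  -- reindex
  have hshift : HasSum (fun n : ℕ => ‖(B f : ∀ _ : ℕ, ℂ) (n+1)‖ ^ 2) (‖B f‖ ^ 2) := by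
    refine (Function.Injective.hasSum_iff (f := fun m => ‖(B f : ∀ _ : ℕ, ℂ) m‖ ^ 2)
      (fun a b h => Nat.succ_injective h) ?_).2 hBf
    intro m hm
    have hm0 : m = 0 := by
      rcases m with _ | m
      · rfl
      · exact absurd ⟨m, rfl⟩ hm
    subst hm0
    simp [coord_zero B hB f]
  have hterm : ∀ n : ℕ, ‖(B f : ∀ _ : ℕ, ℂ) (n+1)‖ ^ 2 = (w n) ^ 2 * ‖(f : ∀ _ : ℕ, ℂ) n‖ ^ 2 := by
    intro n
    rw [coord_succ B hB f n]
    have hwn : 0 ≤ w n := Real.sqrt_nonneg _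
    rw [norm_mul, mul_pow, Complex.norm_real, Real.norm_of_nonneg hwn]
  rw [funext hterm] at hshift
  have hle : ‖B f‖ ^ 2 ≤ r ^ 2 * ‖f‖ ^ 2 := by
    refine hasSum_le (fun n => ?_) hshift (hf.mul_left (r ^ 2))
    have : (w n) ^ 2 ≤ r ^ 2 :=
      pow_le_pow_left₀ (Real.sqrt_nonneg _) (w_le hq0 hq1 n) 2
    exact mul_le_mul_of_nonneg_right this (sq_nonneg _)
  have : ‖B f‖ ^ 2 ≤ (r * ‖f‖) ^ 2 := by rw [mul_pow]; exact hle
  exact (pow_le_pow_iff_left₀ (norm_nonneg _) (by positivity) two_ne_zero).1 this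


include hq0 hq1 in
lemma mem_spec (hB : ∀ n : ℕ, B (Phi n) = (Real.sqrt ((1 - q ^ (n + 1)) / (1 - q)) : ℂ) • Phi (n + 1))
    {c : ℂ} (hc : ‖c‖ < (1 - q) ^ (-(1 / 2 : ℝ))) : c ∈ spectrum ℂ B := by
  have h1 : 0 < 1 - q := by linarith
  -- the candidate orthogonal vector
  set vs : ℕ → ℂ := fun n => ((starRingEnd ℂ) c) ^ n / (∏ k ∈ Finset.range n, (w k : ℂ)) with hvs
  have hwne : ∀ k : ℕ, ((w k : ℂ)) ≠ 0 := fun k => by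
    exact_mod_cast Complex.ofReal_ne_zero.2 (wpos hq0 hq1 k).ne'
  have hprod_ne : ∀ n : ℕ, (∏ k ∈ Finset.range n, (w k : ℂ)) ≠ 0 := fun n =>
    Finset.prod_ne_zero_iff.2 (fun k _ => hwne k)
  have hrec : ∀ n : ℕ, vs (n+1) * (w n : ℂ) = (starRingEnd ℂ) c * vs n := by
    intro n
    simp only [hvs]
    rw [Finset.prod_range_succ, ← div_div, div_mul_cancel₀ _ (hwne n), pow_succ]
    ring
  have hvs0 : vs 0 = 1 := by simp [hvs]
  -- ℓ² membership
  have hnorm_ratio : ∀ n : ℕ, ‖vs (n+1)‖ ^ 2 = (‖c‖^2 * (1-q) / (1 - q^(n+1))) * ‖vs n‖ ^ 2 := by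
    intro n
    have := congrArg norm (hrec n)
    rw [norm_mul, norm_mul, Complex.norm_real, Real.norm_of_nonneg (Real.sqrt_nonneg _),
      RCLike.norm_conj] at this
    have hwn := wpos hq0 hq1 n
    have hqn : 0 < 1 - q^(n+1) := by
      have : q ^ (n+1) < 1 := pow_lt_one₀ hq0.le hq1 (by omega); linarith
    have hsq := congrArg (fun x : ℝ => x^2) this
    simp only [mul_pow] at hsq
    rw [wsq hq0 hq1 n] at hsq
    have hne : (1 - q^(n+1)) ≠ 0 := hqn.ne'
    field_simp at hsq ⊢
    nlinarith [hsq]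
  set l : ℝ := (‖c‖^2 * (1-q) + 1) / 2 with hl
  have hc2 : ‖c‖^2 * (1-q) < 1 := by
    have hr2 : ((1 - q) ^ (-(1 / 2 : ℝ)))^2 = (1-q)⁻¹ := by
      rw [← Real.rpow_natCast ((1-q) ^ (-(1/2:ℝ))) 2, ← Real.rpow_mul h1.le]
      norm_num [Real.rpow_neg_one]
    have : ‖c‖^2 < (1-q)⁻¹ := by
      calc ‖c‖^2 < ((1 - q) ^ (-(1 / 2 : ℝ)))^2 :=
          pow_lt_pow_left₀ hc (norm_nonneg _) two_ne_zero
        _ = (1-q)⁻¹ := hr2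
    have h4 : (1-q)⁻¹ * (1-q) = 1 := inv_mul_cancel₀ h1.ne'
    nlinarith [this, h1]
  have hl1 : l < 1 := by rw [hl]; nlinarith
  have hl0 : ‖c‖^2 * (1-q) < l := by
    rw [hl]; nlinarith
  have htend : Filter.Tendsto (fun n : ℕ => ‖c‖^2 * (1-q) / (1 - q^(n+1))) Filter.atTop
      (nhds (‖c‖^2 * (1-q))) := by
    have hq : Filter.Tendsto (fun n : ℕ => q^(n+1)) Filter.atTop (nhds 0) := by
      have := tendsto_pow_atTop_nhds_zero_of_lt_one hq0.le hq1
      exact this.comp (Filter.tendsto_add_atTop_nat 1)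
    have hden : Filter.Tendsto (fun n : ℕ => 1 - q^(n+1)) Filter.atTop (nhds 1) := by
      simpa using (tendsto_const_nhds (x := (1:ℝ))).sub hq
    have := (tendsto_const_nhds (x := ‖c‖^2 * (1-q))).div hden one_ne_zero
    simp only [div_one] at this; exact this
  have hev : ∀ᶠ n : ℕ in Filter.atTop, ‖c‖^2 * (1-q) / (1 - q^(n+1)) ≤ l :=
    (htend.eventually (gt_mem_nhds hl0)).mono (fun n hn => hn.le)
  have hsum : Summable (fun n : ℕ => ‖vs n‖ ^ 2) := by
    refine summable_of_ratio_norm_eventually_le hl1 ?_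
    refine hev.mono (fun n hn => ?_)
    rw [Real.norm_of_nonneg (sq_nonneg _), Real.norm_of_nonneg (sq_nonneg _), hnorm_ratio n]
    exact mul_le_mul_of_nonneg_right hn (sq_nonneg _)
  have hmem : Memℓp vs 2 := memℓp_gen (by simpa [Real.rpow_two] using hsum)
  set v : H2 := ⟨vs, hmem⟩ with hv
  have hvcoe : ∀ n, (v : ∀ _ : ℕ, ℂ) n = vs n := fun n => rfl
  have hvne : v ≠ 0 := by
    intro h
    have : (v : ∀ _ : ℕ, ℂ) 0 = 0 := by rw [h]; exact congrFun (lp.coeFn_zero _ _) 0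
    rw [hvcoe, hvs0] at this
    exact one_ne_zero this
  -- orthogonality functional
  by_contra hspec
  rw [spectrum.notMem_iff] at hspec
  set T : H2 →L[ℂ] H2 := algebraMap ℂ (H2 →L[ℂ] H2) c - B with hT
  set φ : H2 →L[ℂ] ℂ := (innerSL ℂ v).comp T with hφ
  have hφn : ∀ n : ℕ, φ (Phi n) = 0 := by
    intro n
    have hT1 : T (Phi n) = c • Phi n - B (Phi n) := by
      simp [hT, Algebra.algebraMap_eq_smul_one, ContinuousLinearMap.sub_apply]
    have hBP : (B (Phi n) : H2) = lp.single 2 (n+1) ((w n : ℂ)) := by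
      rw [hB n, single_eq_smul]
    rw [hφ, ContinuousLinearMap.comp_apply, hT1, innerSL_apply_apply, inner_sub_right, inner_smul_right,
      hBP, Phi, lp.inner_single_right, lp.inner_single_right]
    have h1' : (inner (𝕜 := ℂ) ((v : ∀ _ : ℕ, ℂ) n) (1:ℂ)) = (starRingEnd ℂ) (vs n) := by
      simp [RCLike.inner_apply, hvcoe]
    have h2' : (inner (𝕜 := ℂ) ((v : ∀ _ : ℕ, ℂ) (n+1)) ((w n : ℂ))) 
        = (starRingEnd ℂ) (vs (n+1)) * (w n : ℂ) := by
      simp [RCLike.inner_apply, hvcoe, mul_comm]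
    rw [h1', h2']
    have h3 := congrArg (starRingEnd ℂ) (hrec n)
    rw [map_mul, map_mul, Complex.conj_ofReal, Complex.conj_conj] at h3
    rw [sub_eq_zero]
    exact h3.symm
  have hφ0 : ∀ f : H2, φ f = 0 := by
    intro f
    have hs : HasSum (fun n : ℕ => lp.single 2 n (f n)) f := lp.hasSum_single ENNReal.ofNat_ne_top f
    have h2 := hs.mapL φ
    have : ∀ n : ℕ, φ (lp.single 2 n (f n)) = 0 := by
      intro n
      rw [single_eq_smul, map_smul, hφn n, smul_zero]
    simp only [this] at h2
    simpa using h2.unique hasSum_zero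
  obtain ⟨binv, hbinv⟩ := hspec.exists_right_inv
  have hTv : T (binv v) = v := by
    have := congrArg (fun (S : H2 →L[ℂ] H2) => S v) hbinv
    simpa [ContinuousLinearMap.mul_apply] using this
  have := hφ0 (binv v)
  rw [hφ, ContinuousLinearMap.comp_apply, hTv, innerSL_apply_apply, inner_self_eq_zero] at this
  exact hvne this

end Stmt9Aux

/-- The spectrum of `B` is the closed disk of radius `(1−q)^{-1/2}` centered at the
origin. -/
theorem stmt_9 (q : ℝ) (hq0 : 0 < q) (hq1 : q < 1)
    (B : H2 →L[ℂ] H2)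
    (hB : ∀ n : ℕ, B (Phi n) = (Real.sqrt ((1 - q ^ (n + 1)) / (1 - q)) : ℂ) • Phi (n + 1)) :
    spectrum ℂ B = {c : ℂ | ‖c‖ ≤ (1 - q) ^ (-(1 / 2 : ℝ))} := by
  have h1 : 0 < 1 - q := by linarith
  set r : ℝ := (1 - q) ^ (-(1 / 2 : ℝ)) with hrdef
  have hr : 0 < r := Real.rpow_pos_of_pos h1 _
  haveI : Nontrivial H2 := by
    refine ⟨Phi 0, 0, fun h => ?_⟩
    have : (Phi 0 : ∀ _ : ℕ, ℂ) 0 = 0 := by rw [h]; exact congrFun (lp.coeFn_zero _ _) 0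
    rw [Stmt9Aux.phi_apply] at this
    simp at this
  ext c
  simp only [Set.mem_setOf_eq]
  constructor
  · intro hc
    have hnorm : ‖B‖ ≤ r :=
      ContinuousLinearMap.opNorm_le_bound B hr.le (Stmt9Aux.norm_bound hq0 hq1 B hB)
    exact le_trans (spectrum.norm_le_norm_of_mem hc) hnorm
  · intro hc
    have hball : Metric.ball (0:ℂ) r ⊆ spectrum ℂ B := by
      intro x hx
      exact Stmt9Aux.mem_spec hq0 hq1 B hB (hrdef ▸ mem_ball_zero_iff.1 hx)
    have hcl : Metric.closedBall (0:ℂ) r ⊆ spectrum ℂ B := by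
      rw [← closure_ball (0:ℂ) hr.ne']
      exact closure_minimal hball (spectrum.isClosed B)
    exact hcl (mem_closedBall_zero_iff.2 hc)

end
end

section
/- The approximate point spectrum of B is the circle of radius (1 − q)^{−1/2} centered at the origin: for a complex number c, the operator B − c·I fails to be bounded below (i.e., there is no ε > 0 such that ‖(B − c·I)x‖ ≥ ε‖x‖ for all x ∈ H) if and only if |c| = (1 − q)^{−1/2}. -/
open scoped ENNReal

set_option maxHeartbeats 1000000

noncomputable section

namespace Stmt11

def w (q : ℝ) (n : ℕ) : ℝ := Real.sqrt ((1 - q ^ (n + 1)) / (1 - q))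
def r (q : ℝ) : ℝ := (Real.sqrt (1 - q))⁻¹
def P (q : ℝ) (n : ℕ) : ℝ := ∏ k ∈ Finset.range n, (1 - q ^ (k + 1))
def CP (q : ℝ) : ℝ := Real.exp (-(q / (1 - q) ^ 2))

def aseq (q : ℝ) (c : ℂ) : ℕ → ℂ
  | 0 => 1
  | n+1 => ((w q n : ℂ) / c) * aseq q c n

variable {q : ℝ} (hq0 : 0 < q) (hq1 : q < 1)
include hq0 hq1

lemma hqn (n : ℕ) : 0 < 1 - q ^ (n + 1) := by
  have : q ^ (n + 1) < 1 := pow_lt_one₀ hq0.le hq1 (Nat.succ_ne_zero n)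
  linarith

lemma qn_le (n : ℕ) : q ^ (n + 1) ≤ q := by
  calc q ^ (n + 1) ≤ q ^ 1 := pow_le_pow_of_le_one hq0.le hq1.le (Nat.one_le_iff_ne_zero.2 (Nat.succ_ne_zero n))
  _ = q := pow_one q

lemma r_pos : 0 < r q := inv_pos.2 (Real.sqrt_pos.2 (by linarith))

lemma r_eq_rpow : r q = (1 - q) ^ (-(1 / 2 : ℝ)) := by
  rw [Real.rpow_neg (by linarith : (0:ℝ) ≤ 1 - q), r, Real.sqrt_eq_rpow]

lemma w_nonneg (n : ℕ) : 0 ≤ w q n := Real.sqrt_nonneg _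

lemma w_sq (n : ℕ) : (w q n) ^ 2 = (1 - q ^ (n + 1)) / (1 - q) := by
  rw [w, Real.sq_sqrt]
  have h1 := hqn hq0 hq1 n
  have h2 : (0:ℝ) < 1 - q := by linarith
  positivity

lemma w_eq (n : ℕ) : w q n = Real.sqrt (1 - q ^ (n + 1)) * r q := by
  rw [w, r, Real.sqrt_div (hqn hq0 hq1 n).le, div_eq_mul_inv]

lemma w_le_r (n : ℕ) : w q n ≤ r q := by
  rw [w_eq hq0 hq1]
  nth_rewrite 2 [show r q = 1 * r q by ring]
  have : Real.sqrt (1 - q ^ (n+1)) ≤ 1 :=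
    Real.sqrt_le_one.2 (by nlinarith [pow_pos hq0 (n+1)])
  exact mul_le_mul_of_nonneg_right this (r_pos hq0 hq1).le

lemma P_pos (n : ℕ) : 0 < P q n :=
  Finset.prod_pos fun k _ => hqn hq0 hq1 k

lemma P_le_one (n : ℕ) : P q n ≤ 1 := by
  apply Finset.prod_le_one
  · intro k _; exact (hqn hq0 hq1 k).le
  · intro k _; nlinarith [pow_pos hq0 (k+1)]

lemma CP_pos : 0 < CP q := Real.exp_pos _

lemma CP_le_P (n : ℕ) : CP q ≤ P q n := by
  have key : ∀ k : ℕ, Real.exp (-(q ^ (k+1) / (1 - q))) ≤ 1 - q ^ (k+1) := by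
    intro k
    have h1 := hqn hq0 hq1 k
    have h2 : (0:ℝ) < 1 - q := by linarith
    have h3 : Real.log (1 - q^(k+1))⁻¹ ≤ (1 - q^(k+1))⁻¹ - 1 :=
      Real.log_le_sub_one_of_pos (inv_pos.2 h1)
    rw [Real.log_inv] at h3
    have h4 : (1 - q^(k+1))⁻¹ - 1 = q^(k+1) / (1 - q^(k+1)) := by
      field_simp
      ring
    have h5 : q^(k+1) / (1 - q^(k+1)) ≤ q^(k+1) / (1 - q) := by
      apply div_le_div_of_nonneg_left (pow_pos hq0 (k+1)).le h2
      have := qn_le hq0 hq1 k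
      linarith
    have h6 : -(q ^ (k+1) / (1 - q)) ≤ Real.log (1 - q^(k+1)) := by
      rw [h4] at h3; linarith
    calc Real.exp (-(q ^ (k+1) / (1 - q))) ≤ Real.exp (Real.log (1 - q^(k+1))) :=
          Real.exp_le_exp.2 h6
      _ = 1 - q^(k+1) := Real.exp_log h1
  have h2 : (0:ℝ) < 1 - q := by linarith
  have hgeom : ∑ k ∈ Finset.range n, q^(k+1) ≤ q/(1-q) := by
    have e1 : ∑ k ∈ Finset.range n, q^(k+1) = q * ∑ k ∈ Finset.range n, q^k := by
      rw [Finset.mul_sum]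
      exact Finset.sum_congr rfl fun k _ => by ring
    have e2 : ∑ k ∈ Finset.range n, q^k = (1 - q^n)/(1 - q) := by
      rw [geom_sum_eq (by linarith : q ≠ 1) n, ← neg_sub (1:ℝ) (q^n), ← neg_sub (1:ℝ) q,
        neg_div_neg_eq]
    rw [e1, e2, mul_div_assoc', div_le_div_iff₀ h2 h2]
    have : q ^ n ≥ 0 := pow_nonneg hq0.le n
    nlinarith [mul_nonneg (mul_nonneg hq0.le h2.le) this]
  calc CP q ≤ Real.exp (∑ k ∈ Finset.range n, -(q^(k+1)/(1-q))) := by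
        apply Real.exp_le_exp.2
        rw [Finset.sum_neg_distrib, ← Finset.sum_div, neg_le_neg_iff, div_le_div_iff₀ h2 (by positivity)]
        calc (∑ k ∈ Finset.range n, q^(k+1)) * (1-q)^2 ≤ (q/(1-q)) * (1-q)^2 := by
              apply mul_le_mul_of_nonneg_right hgeom (by positivity)
          _ = q * (1-q) := by field_simp
    _ = ∏ k ∈ Finset.range n, Real.exp (-(q^(k+1)/(1-q))) := Real.exp_sum _ _
    _ ≤ P q n := Finset.prod_le_prod (fun k _ => (Real.exp_pos _).le) (fun k _ => key k)



section Bfacts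

omit hq0 hq1

lemma norm_sq_eq (f : H2) : ‖f‖^2 = ∑' m, ‖f m‖^2 := by
  have h := lp.norm_rpow_eq_tsum (p := 2) (by norm_num) f
  have h2 : ((2:ℝ≥0∞)).toReal = ((2:ℕ):ℝ) := by norm_num
  rw [h2] at h
  simpa [Real.rpow_natCast] using h

lemma summable_sq (f : H2) : Summable (fun m => ‖f m‖^2) := by
  have h := (lp.memℓp f).summable (p := 2) (by norm_num)
  have h2 : ((2:ℝ≥0∞)).toReal = ((2:ℕ):ℝ) := by norm_num
  rw [h2] at h
  simpa [Real.rpow_natCast] using h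

lemma mem_l2 {f : ℕ → ℂ} (h : Summable (fun m => ‖f m‖^2)) : Memℓp f 2 := by
  apply memℓp_gen
  have h2 : ((2:ℝ≥0∞)).toReal = ((2:ℕ):ℝ) := by norm_num
  rw [h2]
  simpa [Real.rpow_natCast] using h

variable (B : H2 →L[ℂ] H2)
  (hB : ∀ n : ℕ, B (Phi n) = (Real.sqrt ((1 - q ^ (n + 1)) / (1 - q)) : ℂ) • Phi (n + 1))
include hB

lemma B_single (n : ℕ) (a : ℂ) :
    B (lp.single 2 n a) = lp.single 2 (n+1) ((w q n : ℂ) * a) := by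
  have h1 : lp.single 2 n a = a • Phi n := by
    rw [Phi, ← lp.single_smul]
    norm_num
  rw [h1, map_smul, hB n, Phi, ← lp.single_smul, ← lp.single_smul]
  congr 1
  simp only [smul_eq_mul, w]
  ring

lemma B_apply_succ (x : H2) (m : ℕ) : (B x) (m+1) = (w q m : ℂ) * x m := by
  classical
  have hs : HasSum (fun n => lp.single 2 n (x n)) x := lp.hasSum_single (by norm_num) x
  have hs2 : HasSum (fun n => B (lp.single 2 n (x n))) (B x) := B.hasSum hs
  have hs3 : HasSum (fun n => (inner ℂ (Phi (m+1)) (B (lp.single 2 n (x n))) : ℂ))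
      (inner ℂ (Phi (m+1)) (B x) : ℂ) := (innerSL ℂ (Phi (m+1))).hasSum hs2
  have hterm : ∀ n, (inner ℂ (Phi (m+1)) (B (lp.single 2 n (x n))) : ℂ)
      = if n = m then (w q m : ℂ) * x m else 0 := by
    intro n
    rw [B_single B hB, Phi, lp.inner_single_left]
    by_cases h : n = m
    · subst h
      simp [lp.single_apply_self]
    · rw [lp.single_apply_ne 2 (n+1) _ (by omega)]
      simp [h]
  rw [funext hterm] at hs3
  have hs4 : HasSum (fun n => if n = m then (w q m : ℂ) * x m else 0) ((w q m : ℂ) * x m) :=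
    hasSum_ite_eq m _
  have h5 : (inner ℂ (Phi (m+1)) (B x) : ℂ) = (B x) (m+1) := by
    rw [Phi, lp.inner_single_left]
    simp
  rw [← h5, ← hs4.unique hs3]

lemma B_apply_zero (x : H2) : (B x) 0 = 0 := by
  classical
  have hs : HasSum (fun n => lp.single 2 n (x n)) x := lp.hasSum_single (by norm_num) x
  have hs2 : HasSum (fun n => B (lp.single 2 n (x n))) (B x) := B.hasSum hs
  have hs3 : HasSum (fun n => (inner ℂ (Phi 0) (B (lp.single 2 n (x n))) : ℂ))
      (inner ℂ (Phi 0) (B x) : ℂ) := (innerSL ℂ (Phi 0)).hasSum hs2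
  have hterm : ∀ n, (inner ℂ (Phi 0) (B (lp.single 2 n (x n))) : ℂ) = 0 := by
    intro n
    rw [B_single B hB, Phi, lp.inner_single_left]
    rw [lp.single_apply_ne 2 (n+1) _ (by omega)]
    simp
  rw [funext hterm] at hs3
  have h5 : (inner ℂ (Phi 0) (B x) : ℂ) = (B x) 0 := by
    rw [Phi, lp.inner_single_left]
    simp
  rw [← h5, ← hasSum_zero.unique hs3]


section withq
include hq0 hq1

lemma B_norm_le (x : H2) : ‖B x‖ ≤ r q * ‖x‖ := by
  have hr := r_pos hq0 hq1
  have hsq : ‖B x‖^2 ≤ (r q * ‖x‖)^2 := by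
    rw [norm_sq_eq]
    have hshift : ∑' m, ‖(B x) m‖^2 = ∑' n, ‖(B x) (n+1)‖^2 := by
      rw [Summable.tsum_eq_zero_add (summable_sq (B x))]
      simp [B_apply_zero B hB]
    rw [hshift]
    have hle : ∀ n, ‖(B x) (n+1)‖^2 ≤ (r q)^2 * ‖x n‖^2 := by
      intro n
      rw [B_apply_succ B hB, norm_mul, Complex.norm_real, Real.norm_of_nonneg (w_nonneg hq0 hq1 n),
        mul_pow]
      have : (w q n)^2 ≤ (r q)^2 := by
        have := w_le_r hq0 hq1 n
        nlinarith [w_nonneg hq0 hq1 n]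
      nlinarith [sq_nonneg (‖x n‖)]
    have hsum1 : Summable (fun n => ‖(B x) (n+1)‖^2) :=
      (summable_nat_add_iff 1).2 (summable_sq (B x))
    have hsum2 : Summable (fun n => (r q)^2 * ‖x n‖^2) := (summable_sq x).mul_left _
    have e1 : ∑' n, (r q)^2 * ‖x n‖^2 = (r q)^2 * ∑' n, ‖x n‖^2 := tsum_mul_left
    have e2 : ‖x‖^2 = ∑' n, ‖x n‖^2 := norm_sq_eq x
    calc ∑' n, ‖(B x) (n+1)‖^2 ≤ ∑' n, (r q)^2 * ‖x n‖^2 := Summable.tsum_le_tsum hle hsum1 hsum2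
      _ = (r q * ‖x‖)^2 := by rw [e1, ← e2]; ring
  have h0 : (0:ℝ) ≤ r q * ‖x‖ := mul_nonneg hr.le (norm_nonneg _)
  exact (pow_le_pow_iff_left₀ (norm_nonneg _) h0 (by norm_num)).1 hsq

lemma bdd_of_gt {c : ℂ} (hc : r q < ‖c‖) :
    ∃ ε : ℝ, 0 < ε ∧ ∀ x : H2, ε * ‖x‖ ≤ ‖(B - c • (1 : H2 →L[ℂ] H2)) x‖ := by
  refine ⟨‖c‖ - r q, by linarith, fun x => ?_⟩
  have h1 : (B - c • (1:H2 →L[ℂ] H2)) x = B x - c • x := by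
    simp [ContinuousLinearMap.sub_apply]
  rw [h1, norm_sub_rev]
  have h2 : ‖c • x‖ - ‖B x‖ ≤ ‖c • x - B x‖ := norm_sub_norm_le _ _
  have h3 : ‖c • x‖ = ‖c‖ * ‖x‖ := norm_smul c x
  have h4 := B_norm_le hq0 hq1 B hB x
  nlinarith [norm_nonneg x, h2, h3, h4]


lemma bdd_of_lt {c : ℂ} (hc : ‖c‖ < r q) :
    ∃ ε : ℝ, 0 < ε ∧ ∀ x : H2, ε * ‖x‖ ≤ ‖(B - c • (1 : H2 →L[ℂ] H2)) x‖ := by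
  classical
  set D : ℝ := (Real.sqrt (CP q))⁻¹ with hD
  have hCP : 0 < CP q := CP_pos hq0 hq1
  have hCPs : 0 < Real.sqrt (CP q) := Real.sqrt_pos.2 hCP
  have hD0 : 0 < D := inv_pos.2 hCPs
  have hrr := r_pos hq0 hq1
  set d : ℕ → ℝ := fun n => (Real.sqrt (P q n))⁻¹ with hdd
  have hP : ∀ n, 0 < P q n := fun n => P_pos hq0 hq1 n
  have hd0 : ∀ n, 0 < d n := fun n => inv_pos.2 (Real.sqrt_pos.2 (hP n))
  have hd1 : ∀ n, 1 ≤ d n := fun n =>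
    (one_le_inv₀ (Real.sqrt_pos.2 (hP n))).2
      (Real.sqrt_le_one.2 (P_le_one hq0 hq1 n))
  have hdD : ∀ n, d n ≤ D := fun n =>
    inv_anti₀ hCPs (Real.sqrt_le_sqrt (CP_le_P hq0 hq1 n))
  have hdw : ∀ n, d (n+1) * w q n = r q * d n := by
    intro n
    have hs1 : (0:ℝ) < Real.sqrt (1 - q^(n+1)) := Real.sqrt_pos.2 (hqn hq0 hq1 n)
    have hP1 : P q (n+1) = P q n * (1 - q^(n+1)) := Finset.prod_range_succ _ _
    have : d (n+1) = (Real.sqrt (P q n))⁻¹ * (Real.sqrt (1 - q^(n+1)))⁻¹ := by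
      rw [hdd]
      simp only []
      rw [hP1, Real.sqrt_mul (hP n).le, mul_inv]
    have hdn : d n = (Real.sqrt (P q n))⁻¹ := rfl
    rw [this, w_eq hq0 hq1 n, hdn]
    calc (Real.sqrt (P q n))⁻¹ * (Real.sqrt (1 - q^(n+1)))⁻¹
          * (Real.sqrt (1 - q^(n+1)) * r q)
        = ((Real.sqrt (1 - q^(n+1)))⁻¹ * Real.sqrt (1 - q^(n+1)))
          * ((Real.sqrt (P q n))⁻¹ * r q) := by ring
      _ = r q * (Real.sqrt (P q n))⁻¹ := by rw [inv_mul_cancel₀ hs1.ne']; ring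
  refine ⟨(r q - ‖c‖) * Real.sqrt (CP q), mul_pos (by linarith) hCPs, fun x => ?_⟩
  set y : H2 := (B - c • (1 : H2 →L[ℂ] H2)) x with hy
  have hy0 : y 0 = - (c * x 0) := by
    rw [hy]
    simp [ContinuousLinearMap.sub_apply, ContinuousLinearMap.smul_apply,
      ContinuousLinearMap.one_apply, lp.coeFn_sub, Pi.sub_apply, lp.coeFn_smul, Pi.smul_apply,
      smul_eq_mul, B_apply_zero B hB]
    show (B x) 0 - c * x 0 = _
    rw [B_apply_zero B hB]; ring
  have hyS : ∀ m, y (m+1) = (w q m : ℂ) * x m - c * x (m+1) := by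
    intro m
    rw [hy]
    simp [ContinuousLinearMap.sub_apply, ContinuousLinearMap.smul_apply,
      ContinuousLinearMap.one_apply, lp.coeFn_sub, Pi.sub_apply, lp.coeFn_smul, Pi.smul_apply,
      smul_eq_mul, B_apply_succ B hB]
    show (B x) (m+1) - c * x (m+1) = _
    rw [B_apply_succ B hB]
  have hsq_le : ∀ (g : H2) (m : ℕ), ‖(d m:ℂ) * g m‖^2 ≤ D^2 * ‖g m‖^2 := by
    intro g m
    rw [norm_mul, Complex.norm_real, Real.norm_of_nonneg (hd0 m).le, mul_pow]
    have h3 : d m^2 ≤ D^2 := by nlinarith [hdD m, hd0 m]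
    nlinarith [mul_nonneg (sub_nonneg.2 h3) (sq_nonneg (‖g m‖))]
  have hsum : ∀ g : H2, Summable (fun m => ‖(d m:ℂ) * g m‖^2) := fun g =>
    Summable.of_nonneg_of_le (fun n => sq_nonneg _) (hsq_le g) ((summable_sq g).mul_left _)
  set u : H2 := ⟨fun n => (d n:ℂ) * x n, mem_l2 (hsum x)⟩ with hu
  set z : H2 := ⟨fun m => (d m:ℂ) * y m, mem_l2 (hsum y)⟩ with hz
  have hv_mem : Memℓp (fun m : ℕ => match m with | 0 => (0:ℂ) | Nat.succ n => (d n:ℂ) * x n) 2 := by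
    apply mem_l2
    apply (summable_nat_add_iff 1).1
    exact hsum x
  set v : H2 := ⟨_, hv_mem⟩ with hv
  have hu_apply : ∀ n, u n = (d n:ℂ) * x n := fun n => rfl
  have hz_apply : ∀ n, z n = (d n:ℂ) * y n := fun n => rfl
  have hv0 : v 0 = 0 := rfl
  have hvS : ∀ n, v (n+1) = (d n:ℂ) * x n := fun n => rfl
  have hkey : z = (r q : ℂ) • v - c • u := by
    refine lp.ext (funext fun m => ?_)
    have hrhs : ((r q : ℂ) • v - c • u) m = (r q:ℂ) * v m - c * u m := by
      rfl
    show z m = _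
    rw [hrhs, hz_apply, hu_apply]
    cases m with
    | zero =>
      have hd00 : d 0 = 1 := by simp [hdd, P]
      rw [hy0, hv0, hd00]
      push_cast
      ring
    | succ m =>
      rw [hyS, hvS]
      have hc1 : ((d (m+1) * w q m : ℝ) : ℂ) = ((r q * d m : ℝ) : ℂ) := by rw [hdw m]
      push_cast at hc1 ⊢
      linear_combination (x m) * hc1
  have hnu : ‖x‖ ≤ ‖u‖ := by
    have h1 : ‖x‖^2 ≤ ‖u‖^2 := by
      rw [norm_sq_eq, norm_sq_eq]
      refine Summable.tsum_le_tsum (fun n => ?_) (summable_sq x) (summable_sq u)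
      show ‖x n‖^2 ≤ ‖(u : ∀ _, ℂ) n‖^2
      rw [hu_apply, norm_mul, Complex.norm_real, Real.norm_of_nonneg (hd0 n).le]
      have h9 : ‖x n‖ ≤ d n * ‖x n‖ := by
        nlinarith [mul_le_mul_of_nonneg_right (hd1 n) (norm_nonneg (x n))]
      exact pow_le_pow_left₀ (norm_nonneg _) h9 2
    exact (pow_le_pow_iff_left₀ (norm_nonneg _) (norm_nonneg _) two_ne_zero).1 h1
  have hzy : ‖z‖ ≤ D * ‖y‖ := by
    have h2 : ‖z‖^2 ≤ (D * ‖y‖)^2 := by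
      rw [norm_sq_eq]
      have e1 : ∑' m, D^2 * ‖y m‖^2 = D^2 * ∑' m, ‖y m‖^2 := tsum_mul_left
      have e2 : ‖y‖^2 = ∑' m, ‖y m‖^2 := norm_sq_eq y
      calc ∑' m, ‖(z : ∀ _, ℂ) m‖^2 ≤ ∑' m, D^2 * ‖y m‖^2 :=
            Summable.tsum_le_tsum (fun m => hsq_le y m) (summable_sq z) ((summable_sq y).mul_left _)
        _ = (D * ‖y‖)^2 := by rw [e1, ← e2]; ring
    have h0 : (0:ℝ) ≤ D * ‖y‖ := mul_nonneg hD0.le (norm_nonneg _)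
    exact (pow_le_pow_iff_left₀ (norm_nonneg _) h0 two_ne_zero).1 h2
  have hvu : ‖v‖ = ‖u‖ := by
    have h3 : ‖v‖^2 = ‖u‖^2 := by
      rw [norm_sq_eq, norm_sq_eq]
      rw [Summable.tsum_eq_zero_add (summable_sq v)]
      have e0 : ‖(v : ∀ _, ℂ) 0‖^2 = 0 := by rw [hv0]; simp
      rw [e0, zero_add]
      try exact tsum_congr fun n => rfl
    have := congrArg Real.sqrt h3
    simpa [Real.sqrt_sq (norm_nonneg _)] using this
  have hlow : (r q - ‖c‖) * ‖u‖ ≤ ‖z‖ := by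
    rw [hkey]
    have h4 : ‖(r q:ℂ) • v‖ - ‖c • u‖ ≤ ‖(r q:ℂ) • v - c • u‖ := norm_sub_norm_le _ _
    rw [norm_smul, norm_smul, Complex.norm_real, Real.norm_of_nonneg hrr.le, hvu] at h4
    nlinarith [h4]
  have h5 : (r q - ‖c‖) * ‖x‖ ≤ D * ‖y‖ := by
    have a1 : (r q - ‖c‖) * ‖x‖ ≤ (r q - ‖c‖) * ‖u‖ :=
      mul_le_mul_of_nonneg_left hnu (by linarith)
    linarith
  have h6 := mul_le_mul_of_nonneg_left h5 hCPs.le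
  have hDs : Real.sqrt (CP q) * D = 1 := mul_inv_cancel₀ hCPs.ne'
  calc (r q - ‖c‖) * Real.sqrt (CP q) * ‖x‖
      = Real.sqrt (CP q) * ((r q - ‖c‖) * ‖x‖) := by ring
    _ ≤ Real.sqrt (CP q) * (D * ‖y‖) := h6
    _ = (Real.sqrt (CP q) * D) * ‖y‖ := by ring
    _ = ‖y‖ := by rw [hDs, one_mul]

omit hB in
lemma aseq_norm_sq {c : ℂ} (hc : ‖c‖ = r q) (n : ℕ) : ‖aseq q c n‖^2 = P q n := by
  induction n with
  | zero => simp [aseq, P]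
  | succ n ih =>
    have hr2 : (r q)^2 = (1 - q)⁻¹ := by
      rw [r, inv_pow, Real.sq_sqrt (by linarith : (0:ℝ) ≤ 1 - q)]
    have h1q : (1 - q) ≠ 0 := by intro h; linarith [h]
    have hwr : (w q n / r q)^2 = 1 - q^(n+1) := by
      rw [div_pow, w_sq hq0 hq1, hr2]
      field_simp
    calc ‖aseq q c (n+1)‖^2 = (w q n / r q)^2 * ‖aseq q c n‖^2 := by
          rw [show aseq q c (n+1) = ((w q n:ℂ)/c) * aseq q c n from rfl, norm_mul, norm_div,
            Complex.norm_real, Real.norm_of_nonneg (w_nonneg hq0 hq1 n), hc, mul_pow]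
      _ = (1 - q^(n+1)) * P q n := by rw [hwr, ih]
      _ = P q (n+1) := by
          rw [show P q (n+1) = P q n * (1 - q^(n+1)) from Finset.prod_range_succ _ _]
          ring

lemma not_bdd {c : ℂ} (hc : ‖c‖ = r q) :
    ¬ ∃ ε : ℝ, 0 < ε ∧ ∀ x : H2, ε * ‖x‖ ≤ ‖(B - c • (1 : H2 →L[ℂ] H2)) x‖ := by
  rintro ⟨ε, hε, hbd⟩
  have hrr := r_pos hq0 hq1
  have hCP : 0 < CP q := CP_pos hq0 hq1
  have hc0 : c ≠ 0 := by
    rw [← norm_pos_iff, hc]; exact hrr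
  obtain ⟨N, hN⟩ := exists_nat_gt ((2 * r q)^2 / (ε^2 * CP q))
  set f : ℕ → H2 := fun n => lp.single 2 n (c * aseq q c n) with hf
  set xN : H2 := ∑ n ∈ Finset.range N, lp.single 2 n (aseq q c n) with hxN
  have hsingle : ∀ (n:ℕ) (a:ℂ), ‖(lp.single 2 n a : H2)‖ = ‖a‖ := by
    intro n a
    have h := lp.norm_single (p := 2) (E := fun _ : ℕ => ℂ) (by norm_num) n a
    simpa using h
  have hBx : (B - c • (1 : H2 →L[ℂ] H2)) xN = f N - f 0 := by
    rw [ContinuousLinearMap.sub_apply, ContinuousLinearMap.smul_apply,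
      ContinuousLinearMap.one_apply, hxN, map_sum, Finset.smul_sum]
    have h1 : ∀ n, B (lp.single 2 n (aseq q c n)) = f (n+1) := by
      intro n
      rw [B_single B hB, hf]
      congr 1
      show (w q n : ℂ) * aseq q c n = c * (((w q n:ℂ)/c) * aseq q c n)
      field_simp
    have h2 : ∀ n, c • (lp.single 2 n (aseq q c n) : H2) = f n := by
      intro n; rw [hf, ← lp.single_smul]; norm_num [smul_eq_mul]
    calc (∑ n ∈ Finset.range N, B (lp.single 2 n (aseq q c n)))
          - ∑ n ∈ Finset.range N, c • (lp.single 2 n (aseq q c n) : H2)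
        = ∑ n ∈ Finset.range N, (f (n+1) - f n) := by
          rw [← Finset.sum_sub_distrib]
          exact Finset.sum_congr rfl fun n _ => by rw [h1, h2]
      _ = f N - f 0 := Finset.sum_range_sub f N
  have haN : ‖aseq q c N‖ ≤ 1 := by
    have h1 := aseq_norm_sq hq0 hq1 hc N
    have h2 := P_le_one hq0 hq1 N
    nlinarith [norm_nonneg (aseq q c N)]
  have hup : ‖(B - c • (1 : H2 →L[ℂ] H2)) xN‖ ≤ 2 * r q := by
    rw [hBx]
    have e0 : ‖f 0‖ = r q := by
      rw [hf]
      show ‖(lp.single 2 0 (c * aseq q c 0) : H2)‖ = r q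
      rw [hsingle]
      simp [aseq, hc]
    have eN : ‖f N‖ ≤ r q := by
      rw [hf]
      show ‖(lp.single 2 N (c * aseq q c N) : H2)‖ ≤ r q
      rw [hsingle, norm_mul, hc]
      nlinarith [norm_nonneg (aseq q c N)]
    calc ‖f N - f 0‖ ≤ ‖f N‖ + ‖f 0‖ := norm_sub_le _ _
      _ ≤ 2 * r q := by rw [e0] at *; linarith
  have hlow : (N:ℝ) * CP q ≤ ‖xN‖^2 := by
    have h := lp.norm_sum_single (p := 2) (E := fun _ : ℕ => ℂ) (by norm_num)
      (fun n => aseq q c n) (Finset.range N)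
    have h2 : ((2:ℝ≥0∞)).toReal = ((2:ℕ):ℝ) := by norm_num
    rw [h2] at h
    simp only [Real.rpow_natCast] at h
    rw [hxN]
    rw [h]
    have h3 : ∀ n ∈ Finset.range N, CP q ≤ ‖aseq q c n‖^2 := by
      intro n _
      rw [aseq_norm_sq hq0 hq1 hc n]
      exact CP_le_P hq0 hq1 n
    calc (N:ℝ) * CP q = ∑ _n ∈ Finset.range N, CP q := by
          rw [Finset.sum_const, Finset.card_range, nsmul_eq_mul]
      _ ≤ ∑ n ∈ Finset.range N, ‖aseq q c n‖^2 := Finset.sum_le_sum h3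
  have h1 := hbd xN
  have h2 : ε * ‖xN‖ ≤ 2 * r q := le_trans h1 hup
  have h3 : (ε * ‖xN‖)^2 ≤ (2 * r q)^2 := by
    nlinarith [mul_nonneg hε.le (norm_nonneg xN)]
  have h4 : (2 * r q)^2 < (N:ℝ) * (ε^2 * CP q) := by
    rw [div_lt_iff₀ (by positivity)] at hN
    linarith
  nlinarith [sq_nonneg ε, hlow, mul_le_mul_of_nonneg_left hlow (sq_nonneg ε)]

end withq
end Bfacts

end Stmt11


/-- The approximate point spectrum of `B` is the circle of radius `(1−q)^{-1/2}`:
`B − c·I` fails to be bounded below iff `|c| = (1−q)^{-1/2}`. -/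
theorem stmt_11 (q : ℝ) (hq0 : 0 < q) (hq1 : q < 1)
    (B : H2 →L[ℂ] H2)
    (hB : ∀ n : ℕ, B (Phi n) = (Real.sqrt ((1 - q ^ (n + 1)) / (1 - q)) : ℂ) • Phi (n + 1)) :
    ∀ c : ℂ,
      (¬ ∃ ε : ℝ, 0 < ε ∧ ∀ x : H2, ε * ‖x‖ ≤ ‖(B - c • (1 : H2 →L[ℂ] H2)) x‖) ↔
        ‖c‖ = (1 - q) ^ (-(1 / 2 : ℝ)) := by
  intro c
  rw [← Stmt11.r_eq_rpow hq0 hq1]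
  constructor
  · intro h
    by_contra hne
    rcases lt_or_gt_of_ne hne with hlt | hgt
    · exact h (Stmt11.bdd_of_lt hq0 hq1 B hB hlt)
    · exact h (Stmt11.bdd_of_gt hq0 hq1 B hB hgt)
  · intro h
    exact Stmt11.not_bdd hq0 hq1 B hB h

end
end

section
/- The spectrum of A is the closed disk {c ∈ ℂ : |c| ≤ (1 − q)^{−1/2}}, and the point spectrum of A is its interior: a complex number c is an eigenvalue of A (i.e., A x = c x for some nonzero x ∈ H) if and only if |c| < (1 − q)^{−1/2}. -/
noncomputable section

namespace Stmt12

instance : Nontrivial H2 := by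
  refine ⟨Phi 0, 0, fun h => ?_⟩
  have h0 := congrArg (fun y : H2 => y 0) h
  simp only [Phi] at h0
  rw [lp.single_apply_self] at h0
  simp [lp.coeFn_zero] at h0

def ev (n : ℕ) : H2 →L[ℂ] ℂ :=
  LinearMap.mkContinuous
    { toFun := fun f => f n
      map_add' := fun f g => rfl
      map_smul' := fun c f => rfl }
    1 (fun f => by rw [one_mul]; exact lp.norm_apply_le_norm two_ne_zero f n)

@[simp] lemma ev_apply (n : ℕ) (f : H2) : ev n f = f n := rfl

lemma coord {q : ℝ} {A : H2 →L[ℂ] H2} (hA0 : A (Phi 0) = 0)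
    (hA : ∀ n : ℕ, A (Phi (n + 1)) = (Real.sqrt ((1 - q ^ (n + 1)) / (1 - q)) : ℂ) • Phi n)
    (x : H2) (n : ℕ) :
    (A x) n = (Real.sqrt ((1 - q ^ (n + 1)) / (1 - q)) : ℂ) * x (n + 1) := by
  have h1 : HasSum (fun k : ℕ => lp.single 2 k (x k)) x :=
    lp.hasSum_single (by norm_num) x
  have h2 := h1.mapL ((ev n).comp A)
  have h3 : (fun k : ℕ => ((ev n).comp A) (lp.single 2 k (x k))) =
      fun k : ℕ => if k = n + 1 then (Real.sqrt ((1 - q ^ (n + 1)) / (1 - q)) : ℂ) * x (n + 1) else 0 := by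
    funext k
    have hsingle : lp.single 2 k (x k) = x k • Phi k := by
      rw [Phi, ← lp.single_smul, smul_eq_mul, mul_one]
    match k with
    | 0 => simp [hsingle, hA0]
    | (m+1) =>
      simp only [hsingle, ContinuousLinearMap.comp_apply, map_smul, hA m, ev_apply,
        lp.coeFn_smul, Pi.smul_apply, smul_eq_mul]
      rcases eq_or_ne m n with rfl | hmn
      · rw [if_pos rfl, Phi, lp.single_apply_self]
        ring
      · rw [if_neg (by omega), Phi, lp.single_apply_ne 2 m _ (Ne.symm hmn)]
        ring
  rw [h3] at h2
  have h4 : HasSum (fun k : ℕ => if k = n + 1 then (Real.sqrt ((1 - q ^ (n + 1)) / (1 - q)) : ℂ) * x (n + 1) else 0)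
      ((Real.sqrt ((1 - q ^ (n + 1)) / (1 - q)) : ℂ) * x (n + 1)) := hasSum_ite_eq (n+1) _
  exact h2.unique h4

lemma eigen_mem_spec {A : H2 →L[ℂ] H2} {c : ℂ} (x : H2) (hx : x ≠ 0) (hAx : A x = c • x) :
    c ∈ spectrum ℂ A := by
  rw [spectrum.mem_iff]
  intro h
  obtain ⟨u, hu⟩ := h
  have h0 : ((algebraMap ℂ (H2 →L[ℂ] H2)) c - A) x = 0 := by
    rw [ContinuousLinearMap.sub_apply, hAx, Algebra.algebraMap_eq_smul_one]
    simp
  have h1 := congrArg (fun B : H2 →L[ℂ] H2 => B x) u.inv_mul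
  simp only [ContinuousLinearMap.mul_apply, hu, h0, map_zero,
    ContinuousLinearMap.one_apply] at h1
  exact hx h1.symm

end Stmt12

/-- The spectrum of `A` is the closed disk of radius `(1−q)^{-1/2}`, and the point
spectrum of `A` is its interior: `c` is an eigenvalue of `A` iff `|c| < (1−q)^{-1/2}`. -/
theorem stmt_12 (q : ℝ) (hq0 : 0 < q) (hq1 : q < 1)
    (A : H2 →L[ℂ] H2)
    (hA0 : A (Phi 0) = 0)
    (hA : ∀ n : ℕ, A (Phi (n + 1)) = (Real.sqrt ((1 - q ^ (n + 1)) / (1 - q)) : ℂ) • Phi n) :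
    spectrum ℂ A = {c : ℂ | ‖c‖ ≤ (1 - q) ^ (-(1 / 2 : ℝ))} ∧
    ∀ c : ℂ, (∃ x : H2, x ≠ 0 ∧ A x = c • x) ↔ ‖c‖ < (1 - q) ^ (-(1 / 2 : ℝ)) := by
  have hq' : 0 < 1 - q := by linarith
  set r : ℝ := (1 - q) ^ (-(1 / 2 : ℝ)) with hr_def
  set a : ℕ → ℝ := fun n => Real.sqrt ((1 - q ^ n) / (1 - q)) with ha_def
  have hr_eq : r = Real.sqrt (1 - q)⁻¹ := by
    rw [hr_def, Real.sqrt_eq_rpow, ← Real.rpow_neg_one (1 - q), ← Real.rpow_mul hq'.le]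
    norm_num
  have hr_pos : 0 < r := by
    rw [hr_eq]; exact Real.sqrt_pos.mpr (by positivity)
  have ha_pos : ∀ n : ℕ, 0 < a (n + 1) := by
    intro n
    apply Real.sqrt_pos.mpr
    have : q ^ (n + 1) < 1 := pow_lt_one₀ hq0.le hq1 (by omega)
    exact div_pos (by linarith) hq'
  have ha_lt : ∀ n : ℕ, a (n + 1) < r := by
    intro n
    rw [hr_eq, ha_def]
    apply Real.sqrt_lt_sqrt
    · have : q ^ (n + 1) < 1 := pow_lt_one₀ hq0.le hq1 (by omega)
      exact (div_pos (by linarith) hq').le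
    · rw [div_lt_iff₀ hq', inv_mul_cancel₀ hq'.ne']
      have h1 : 0 < q ^ (n + 1) := by positivity
      linarith
  have ha_mono : ∀ m n : ℕ, m ≤ n → a (m + 1) ≤ a (n + 1) := by
    intro m n hmn
    apply Real.sqrt_le_sqrt
    have hpow : q ^ (n + 1) ≤ q ^ (m + 1) := pow_le_pow_of_le_one hq0.le hq1.le (by omega)
    rw [div_le_div_iff₀ hq' hq']
    nlinarith
  -- find N with ‖c‖ < a (N+1) for ‖c‖ < r
  have hfind : ∀ c : ℂ, ‖c‖ < r → ∃ N : ℕ, ‖c‖ < a (N + 1) := by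
    intro c hc
    have hc2 : ‖c‖ ^ 2 < (1 - q)⁻¹ := by
      rw [hr_eq] at hc
      exact (Real.lt_sqrt (norm_nonneg c)).mp hc
    have hε : 0 < 1 - ‖c‖ ^ 2 * (1 - q) := by
      have := (mul_lt_mul_of_pos_right hc2 hq')
      rw [inv_mul_cancel₀ hq'.ne'] at this
      linarith
    obtain ⟨N, hN⟩ := exists_pow_lt_of_lt_one hε hq1
    refine ⟨N, ?_⟩
    rw [ha_def]
    apply (Real.lt_sqrt (norm_nonneg c)).mpr
    rw [lt_div_iff₀ hq']
    have : q ^ (N + 1) ≤ q ^ N := by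
      calc q ^ (N + 1) = q ^ N * q := by ring
        _ ≤ q ^ N * 1 := by
            apply mul_le_mul_of_nonneg_left hq1.le (by positivity)
        _ = q ^ N := by ring
    linarith
  have hcoord := Stmt12.coord hA0 hA
  have hsummx : ∀ x : H2, Summable (fun n : ℕ => ‖x n‖ ^ (2:ℝ)) := by
    intro x
    have := (lp.memℓp x).summable (p := 2) (by norm_num)
    simpa using this
  -- operator norm bound
  have hnorm : ∀ x : H2, ‖A x‖ ≤ r * ‖x‖ := by
    intro x
    have h2r : ((2:ENNReal)).toReal = (2:ℝ) := by norm_num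
    refine lp.norm_le_of_tsum_le (by norm_num) (by positivity) ?_
    rw [h2r]
    have hsum1 : Summable (fun n : ℕ => ‖(A x) n‖ ^ (2:ℝ)) := hsummx (A x)
    have hsum2 : Summable (fun n : ℕ => ‖x (n+1)‖ ^ (2:ℝ)) :=
      (hsummx x).comp_injective Nat.succ_injective
    calc ∑' n : ℕ, ‖(A x) n‖ ^ (2:ℝ)
        ≤ ∑' n : ℕ, r ^ (2:ℝ) * ‖x (n+1)‖ ^ (2:ℝ) := by
          apply Summable.tsum_le_tsum _ hsum1 (hsum2.mul_left _)
          intro n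
          rw [hcoord x n, norm_mul, Complex.norm_real, Real.norm_eq_abs,
            abs_of_nonneg (Real.sqrt_nonneg _),
            Real.mul_rpow (Real.sqrt_nonneg _) (norm_nonneg _)]
          apply mul_le_mul_of_nonneg_right ?_ (Real.rpow_nonneg (norm_nonneg _) _)
          exact Real.rpow_le_rpow (Real.sqrt_nonneg _) (ha_lt n).le (by norm_num)
      _ = r ^ (2:ℝ) * ∑' n : ℕ, ‖x (n+1)‖ ^ (2:ℝ) := tsum_mul_left
      _ ≤ r ^ (2:ℝ) * ∑' n : ℕ, ‖x n‖ ^ (2:ℝ) := by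
          apply mul_le_mul_of_nonneg_left ?_ (Real.rpow_nonneg hr_pos.le _)
          exact tsum_comp_le_tsum_of_inj (hsummx x)
            (fun n => Real.rpow_nonneg (norm_nonneg _) _) Nat.succ_injective
      _ = r ^ (2:ℝ) * ‖x‖ ^ (2:ℝ) := by
          have hx2 := lp.norm_rpow_eq_tsum (p := 2) (E := fun _ : ℕ => ℂ) (by norm_num) x
          rw [h2r] at hx2
          rw [hx2]
      _ = (r * ‖x‖) ^ (2:ℝ) := (Real.mul_rpow hr_pos.le (norm_nonneg _)).symm
  -- eigenvector existence
  have hexists : ∀ c : ℂ, ‖c‖ < r → ∃ x : H2, x ≠ 0 ∧ A x = c • x := by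
    intro c hc
    obtain ⟨N, hN⟩ := hfind c hc
    set w : ℕ → ℂ := fun n => Nat.rec (1:ℂ) (fun m wm => (c / (a (m+1) : ℂ)) * wm) n with hw_def
    have hw0 : w 0 = 1 := rfl
    have hws : ∀ n : ℕ, w (n+1) = (c / (a (n+1) : ℂ)) * w n := fun n => rfl
    have hkey : ∀ n : ℕ, (a (n+1) : ℂ) * w (n+1) = c * w n := by
      intro n
      rw [hws n]
      have : (a (n+1) : ℂ) ≠ 0 := by
        simp only [ne_eq, Complex.ofReal_eq_zero]
        exact (ha_pos n).ne'
      field_simp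
    have hwnorm : ∀ n : ℕ, ‖w (n+1)‖ = (‖c‖ / a (n+1)) * ‖w n‖ := by
      intro n
      rw [hws n, norm_mul, norm_div, Complex.norm_real, Real.norm_eq_abs,
        abs_of_nonneg (ha_pos n).le]
    set t : ℝ := ‖c‖ / a (N + 1) with ht_def
    have ht0 : 0 ≤ t := div_nonneg (norm_nonneg _) (ha_pos N).le
    have ht1 : t < 1 := (div_lt_one (ha_pos N)).mpr hN
    have hsumw : Summable (fun n : ℕ => ‖w n‖ ^ (2:ℕ)) := by
      apply summable_of_ratio_norm_eventually_le (r := t ^ 2)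
      · exact pow_lt_one₀ ht0 ht1 (by norm_num)
      · filter_upwards [Filter.eventually_ge_atTop N] with n hn
        have hdiv : ‖c‖ / a (n+1) ≤ t := by
          rw [ht_def]
          apply div_le_div_of_nonneg_left (norm_nonneg _) (ha_pos N) (ha_mono N n hn)
        have h1 : ‖w (n+1)‖ ≤ t * ‖w n‖ := by
          rw [hwnorm n]
          exact mul_le_mul_of_nonneg_right hdiv (norm_nonneg _)
        have h2 : (0:ℝ) ≤ ‖w n‖ ^ (2:ℕ) := by positivity
        have h3 : (0:ℝ) ≤ ‖w (n+1)‖ ^ (2:ℕ) := by positivity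
        rw [Real.norm_eq_abs, Real.norm_eq_abs, abs_of_nonneg h3, abs_of_nonneg h2]
        calc ‖w (n+1)‖ ^ (2:ℕ) ≤ (t * ‖w n‖) ^ (2:ℕ) :=
              pow_le_pow_left₀ (norm_nonneg _) h1 2
          _ = t ^ 2 * ‖w n‖ ^ (2:ℕ) := by ring
    have hmem : Memℓp w 2 := by
      apply memℓp_gen
      have h2r : ((2:ENNReal)).toReal = (2:ℝ) := by norm_num
      rw [h2r]
      have : (fun n : ℕ => ‖w n‖ ^ (2:ℝ)) = fun n : ℕ => ‖w n‖ ^ (2:ℕ) := by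
        funext n
        rw [show (2:ℝ) = ((2:ℕ):ℝ) by norm_num, Real.rpow_natCast]
      rw [this]
      exact hsumw
    set x : H2 := ⟨w, hmem⟩ with hx_def
    have hxcoe : ∀ n, x n = w n := fun n => rfl
    refine ⟨x, ?_, ?_⟩
    · intro h
      have h0 := congrArg (fun y : H2 => y 0) h
      simp only [hxcoe] at h0
      rw [hw0] at h0
      simp [lp.coeFn_zero] at h0
    · apply lp.ext
      funext n
      have := hcoord x n
      rw [hxcoe] at this
      show (A x) n = (c • x) n
      rw [this, lp.coeFn_smul, Pi.smul_apply, smul_eq_mul]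
      exact hkey n
  -- eigenvalue implies norm < r
  have hconv : ∀ c : ℂ, (∃ x : H2, x ≠ 0 ∧ A x = c • x) → ‖c‖ < r := by
    rintro c ⟨x, hx, hAx⟩
    by_contra hcr
    push_neg at hcr
    obtain ⟨n0, hn0⟩ : ∃ n : ℕ, x n ≠ 0 := by
      by_contra h
      push_neg at h
      exact hx (lp.ext (funext h))
    have hrel : ∀ n : ℕ, (a (n+1) : ℂ) * x (n+1) = c * x n := by
      intro n
      have h1 := hcoord x n
      rw [hAx, lp.coeFn_smul, Pi.smul_apply, smul_eq_mul] at h1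
      exact h1.symm
    have hmono2 : ∀ m : ℕ, n0 ≤ m → ‖x n0‖ ≤ ‖x m‖ := by
      intro m hm
      induction m, hm using Nat.le_induction with
      | base => exact le_refl _
      | succ m hm ih =>
        have h1 : a (m+1) * ‖x (m+1)‖ = ‖c‖ * ‖x m‖ := by
          have := congrArg norm (hrel m)
          rwa [norm_mul, norm_mul, Complex.norm_real, Real.norm_eq_abs,
            abs_of_nonneg (ha_pos m).le] at this
        have h2 : ‖x m‖ ≤ ‖x (m+1)‖ := by
          nlinarith [ha_lt m, ha_pos m, norm_nonneg (x m), norm_nonneg (x (m+1))]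
        exact le_trans ih h2
    have htend : Filter.Tendsto (fun n : ℕ => ‖x n‖ ^ (2:ℝ)) Filter.atTop (nhds 0) :=
      (hsummx x).tendsto_atTop_zero
    have hpos : 0 < ‖x n0‖ ^ (2:ℝ) := Real.rpow_pos_of_pos (norm_pos_iff.mpr hn0) _
    have hev := htend.eventually (gt_mem_nhds hpos)
    obtain ⟨m, hm1, hm2⟩ := (hev.and (Filter.eventually_ge_atTop n0)).exists
    have : ‖x n0‖ ^ (2:ℝ) ≤ ‖x m‖ ^ (2:ℝ) :=
      Real.rpow_le_rpow (norm_nonneg _) (hmono2 m hm2) (by norm_num)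
    linarith
  have hiff : ∀ c : ℂ, (∃ x : H2, x ≠ 0 ∧ A x = c • x) ↔ ‖c‖ < r :=
    fun c => ⟨hconv c, hexists c⟩
  refine ⟨?_, hiff⟩
  apply Set.eq_of_subset_of_subset
  · intro c hcs
    have h1 : ‖c‖ ≤ ‖A‖ := spectrum.norm_le_norm_of_mem hcs
    have h2 : ‖A‖ ≤ r := A.opNorm_le_bound hr_pos.le hnorm
    exact Set.mem_setOf_eq ▸ le_trans h1 h2
  · intro c hcr
    have hcr' : ‖c‖ ≤ r := hcr
    have hball : Metric.ball (0:ℂ) r ⊆ spectrum ℂ A := by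
      intro z hz
      obtain ⟨x, hx, hAx⟩ := hexists z (mem_ball_zero_iff.mp hz)
      exact Stmt12.eigen_mem_spec x hx hAx
    have hc2 : c ∈ closure (Metric.ball (0:ℂ) r) := by
      rw [closure_ball (0:ℂ) hr_pos.ne']
      simpa [Metric.mem_closedBall, dist_zero_right] using hcr'
    exact (IsClosed.closure_subset_iff (spectrum.isClosed A)).mpr hball hc2

end
end

section
/- For every positive integer k and all complex scalars c_1, c_2, …, c_k with c_1 = 1 and c_k ≠ 0, the operator c_1 B + c_2 B² + ⋯ + c_k B^k is not a compact operator on H. -/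
noncomputable section

open scoped InnerProductSpace

lemma inner_Phi (n m : ℕ) : ⟪Phi n, Phi m⟫_ℂ = if m = n then 1 else 0 := by
  rw [Phi, Phi, lp.inner_single_left, lp.single_apply]
  by_cases h : m = n
  · subst h; simp
  · rw [Pi.single_eq_of_ne (Ne.symm h), if_neg h]; simp

lemma norm_Phi (n : ℕ) : ‖Phi n‖ = 1 := by
  have := lp.norm_single (p := 2) (E := fun _ : ℕ => ℂ) (by norm_num) n (1:ℂ)
  simpa [Phi] using this

set_option maxHeartbeats 1000000 in
set_option synthInstance.maxHeartbeats 400000 in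
/-- For every positive integer `k` and scalars `c_1, …, c_k` with `c_1 = 1` and
`c_k ≠ 0`, the operator `c_1 B + c_2 B² + ⋯ + c_k B^k` is not compact. -/
theorem stmt_13 (q : ℝ) (hq0 : 0 < q) (hq1 : q < 1)
    (B : H2 →L[ℂ] H2)
    (hB : ∀ n : ℕ, B (Phi n) = (Real.sqrt ((1 - q ^ (n + 1)) / (1 - q)) : ℂ) • Phi (n + 1)) :
    ∀ (k : ℕ), 0 < k → ∀ c : ℕ → ℂ, c 1 = 1 → c k ≠ 0 →
      ¬ IsCompactOperator (⇑(∑ i ∈ Finset.Icc 1 k, c i • B ^ i)) := by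
  intro k hk c hc1 hck hcomp
  set T := ∑ i ∈ Finset.Icc 1 k, c i • B ^ i with hTdef
  have hq' : 0 < 1 - q := by linarith
  set a : ℕ → ℕ → ℝ := fun n i =>
    ∏ j ∈ Finset.range i, Real.sqrt ((1 - q ^ (n + j + 1)) / (1 - q)) with ha
  have hfac : ∀ n j : ℕ, 1 ≤ Real.sqrt ((1 - q ^ (n + j + 1)) / (1 - q)) := by
    intro n j
    refine Real.one_le_sqrt.mpr ?_
    rw [le_div_iff₀ hq']
    have : q ^ (n + j + 1) ≤ q := pow_le_of_le_one hq0.le hq1.le (by omega)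
    linarith
  have ha1 : ∀ n i, 1 ≤ a n i := by
    intro n i
    rw [ha]
    calc (1:ℝ) = ∏ _j ∈ Finset.range i, 1 := by simp
      _ ≤ ∏ j ∈ Finset.range i, Real.sqrt ((1 - q ^ (n + j + 1)) / (1 - q)) :=
        Finset.prod_le_prod (by simp) fun j _ => hfac n j
  have hpow : ∀ i n, (B ^ i) (Phi n) = ((a n i : ℝ) : ℂ) • Phi (n + i) := by
    intro i
    induction i with
    | zero => intro n; simp [ha]
    | succ i ih =>
      intro n
      rw [pow_succ, ContinuousLinearMap.mul_apply, hB n, map_smul, ih (n + 1), smul_smul]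
      have harith : a n (i + 1) = a (n + 1) i * Real.sqrt ((1 - q ^ (n + 1)) / (1 - q)) := by
        show (∏ j ∈ Finset.range (i + 1), Real.sqrt ((1 - q ^ (n + j + 1)) / (1 - q)))
            = (∏ j ∈ Finset.range i, Real.sqrt ((1 - q ^ (n + 1 + j + 1)) / (1 - q)))
              * Real.sqrt ((1 - q ^ (n + 1)) / (1 - q))
        rw [Finset.prod_range_succ']
        congr 1
        refine Finset.prod_congr rfl fun j _ => ?_
        have : n + (j + 1) + 1 = n + 1 + j + 1 := by omega
        rw [this]
      rw [harith]
      have hidx : n + 1 + i = n + (i + 1) := by omega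
      rw [hidx]
      push_cast
      ring_nf
  have hT : ∀ n, T (Phi n) = ∑ i ∈ Finset.Icc 1 k, (c i * ((a n i : ℝ) : ℂ)) • Phi (n + i) := by
    intro n
    rw [hTdef, ContinuousLinearMap.sum_apply]
    refine Finset.sum_congr rfl fun i _ => ?_
    rw [ContinuousLinearMap.smul_apply, hpow i n, smul_smul]
  -- separation estimate
  have hsep : ∀ n m : ℕ, n + k < m → ‖c k‖ ≤ ‖T (Phi n) - T (Phi m)‖ := by
    intro n m hnm
    have hinner : ⟪T (Phi n) - T (Phi m), Phi (n + k)⟫_ℂ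
        = (starRingEnd ℂ) (c k * ((a n k : ℝ) : ℂ)) := by
      rw [inner_sub_left, hT n, hT m, sum_inner, sum_inner]
      have h1 : ∑ i ∈ Finset.Icc 1 k, ⟪(c i * ((a n i : ℝ) : ℂ)) • Phi (n + i), Phi (n + k)⟫_ℂ
          = (starRingEnd ℂ) (c k * ((a n k : ℝ) : ℂ)) := by
        rw [Finset.sum_eq_single k]
        · rw [inner_smul_left, inner_Phi]
          rw [if_pos rfl, mul_one]
        · intro i hi hik
          rw [inner_smul_left, inner_Phi, if_neg (by omega), mul_zero]
        · intro h
          exact absurd (Finset.mem_Icc.mpr ⟨hk, le_rfl⟩) h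
      have h2 : ∑ i ∈ Finset.Icc 1 k, ⟪(c i * ((a m i : ℝ) : ℂ)) • Phi (m + i), Phi (n + k)⟫_ℂ
          = 0 := by
        refine Finset.sum_eq_zero fun i hi => ?_
        have : n + k ≠ m + i := by
          have := (Finset.mem_Icc.mp hi).1
          omega
        rw [inner_smul_left, inner_Phi, if_neg this, mul_zero]
      rw [h1, h2, sub_zero]
    have hle : ‖⟪T (Phi n) - T (Phi m), Phi (n + k)⟫_ℂ‖ ≤ ‖T (Phi n) - T (Phi m)‖ := by
      calc ‖⟪T (Phi n) - T (Phi m), Phi (n + k)⟫_ℂ‖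
          ≤ ‖T (Phi n) - T (Phi m)‖ * ‖Phi (n + k)‖ := norm_inner_le_norm _ _
        _ = ‖T (Phi n) - T (Phi m)‖ := by rw [norm_Phi, mul_one]
    rw [hinner] at hle
    have : ‖(starRingEnd ℂ) (c k * ((a n k : ℝ) : ℂ))‖ = ‖c k‖ * a n k := by
      rw [RingHomIsometric.norm_map, norm_mul, Complex.norm_real,
        Real.norm_of_nonneg (by linarith [ha1 n k])]
    rw [this] at hle
    have h1 := ha1 n k
    nlinarith [norm_nonneg (c k)]
  -- extract compact set
  obtain ⟨K, hK, hKmem⟩ := hcomp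
  obtain ⟨ε, hε, hball⟩ := Metric.mem_nhds_iff.mp hKmem
  set u : ℕ → H2 := fun j => T (((ε / 2 : ℝ) : ℂ) • Phi (j * (k + 1))) with hu
  have huK : ∀ j, u j ∈ K := by
    intro j
    apply hball
    rw [Metric.mem_ball, dist_zero_right, norm_smul, Complex.norm_real,
      Real.norm_of_nonneg (by linarith), norm_Phi, mul_one]
    linarith
  have husep : ∀ i j : ℕ, i ≠ j → ε / 2 * ‖c k‖ ≤ ‖u i - u j‖ := by
    have key : ∀ i j : ℕ, i < j → ε / 2 * ‖c k‖ ≤ ‖u i - u j‖ := by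
      intro i j hij
      have hlt : i * (k + 1) + k < j * (k + 1) := by
        have : (i + 1) * (k + 1) ≤ j * (k + 1) := Nat.mul_le_mul_right _ (by omega)
        nlinarith
      have := hsep (i * (k + 1)) (j * (k + 1)) hlt
      rw [hu]
      simp only [map_smul]
      rw [← smul_sub, norm_smul, Complex.norm_real, Real.norm_of_nonneg (by linarith)]
      exact mul_le_mul_of_nonneg_left this (by linarith)
    intro i j hij
    rcases lt_or_gt_of_ne hij with h | h
    · exact key i j h
    · rw [norm_sub_rev]; exact key j i h
  obtain ⟨x, -, φ, hφ, hconv⟩ := hK.tendsto_subseq huK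
  have hcauchy := hconv.cauchySeq
  have hpos : 0 < ε / 2 * ‖c k‖ := by
    have := norm_pos_iff.mpr hck
    positivity
  obtain ⟨N, hN⟩ := Metric.cauchySeq_iff.mp hcauchy (ε / 2 * ‖c k‖) hpos
  have h1 := hN (N + 1) (by omega) N le_rfl
  have h2 := husep (φ (N + 1)) (φ N) (by exact fun h => absurd (hφ.injective h) (by omega))
  rw [dist_eq_norm] at h1
  exact absurd h1 (not_lt.mpr h2)

end
end

section
/- The image π(ℋ(q)) of ℋ(q) in the Calkin algebra on H is isomorphic as a unital ℂ-algebra to the algebra ℂ[x, x⁻¹] of complex Laurent polynomials in one indeterminate, via an isomorphism sending π(B) to x; in particular, the integral powers π(B)^n for n ∈ ℤ (where π(B)^{−1} = (1 − q)π(A)) are linearly independent over ℂ and span π(ℋ(q)). -/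
noncomputable section

noncomputable section

namespace Stmt15Aux

open Filter Topology Metric ENNReal

lemma Phi_apply (m i : ℕ) : (Phi m) i = if i = m then 1 else 0 := by
  rcases eq_or_ne i m with h | h
  · subst h; simp [Phi, lp.single_apply_self]
  · simp [Phi, lp.single_apply_ne _ _ _ h, h]

lemma norm_Phi (n : ℕ) : ‖Phi n‖ = 1 := by
  have h := lp.norm_single (E := fun _ : ℕ => ℂ) (p := 2) (by norm_num) n (1:ℂ)
  simpa [Phi] using h

/-- coordinate evaluation as a linear map -/
def coordL (i : ℕ) : H2 →ₗ[ℂ] ℂ where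
  toFun f := f i
  map_add' f g := by simp [lp.coeFn_add]
  map_smul' c f := by simp [lp.coeFn_smul]

lemma coordL_norm_le (i : ℕ) (f : H2) : ‖coordL i f‖ ≤ ‖f‖ :=
  lp.norm_apply_le_norm (by norm_num) f i

def coordCLM (i : ℕ) : H2 →L[ℂ] ℂ :=
  LinearMap.mkContinuous (coordL i) 1 (fun f => by simpa using coordL_norm_le i f)

lemma coordCLM_apply (i : ℕ) (f : H2) : coordCLM i f = f i := rfl

lemma single_eq_smul_Phi (i : ℕ) (c : ℂ) : lp.single 2 i c = c • Phi i := by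
  have := lp.single_smul (E := fun _ : ℕ => ℂ) 2 i c (1:ℂ)
  rw [Phi, ← this, smul_eq_mul, mul_one]

lemma ext_Phi {T S : H2 →L[ℂ] H2} (h : ∀ n, T (Phi n) = S (Phi n)) : T = S := by
  refine ContinuousLinearMap.ext fun f => ?_
  have hs : HasSum (fun i : ℕ => lp.single 2 i (f i)) f :=
    lp.hasSum_single (by norm_num) f
  have h1 : ∀ U : H2 →L[ℂ] H2, HasSum (fun i : ℕ => f i • U (Phi i)) (U f) := by
    intro U
    have := hs.mapL U
    simpa only [single_eq_smul_Phi, map_smul] using this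
  have hT := h1 T
  simp only [h] at hT
  exact hT.unique (h1 S)

def rankOne (n : ℕ) : H2 →L[ℂ] H2 := (coordCLM n).smulRight (Phi n)

lemma rankOne_apply (n : ℕ) (f : H2) : rankOne n f = f n • Phi n := rfl

lemma rankOne_compact (n : ℕ) : IsCompactOperator ⇑(rankOne n) := by
  have h1 : IsCompactOperator ⇑(ContinuousLinearMap.toSpanSingleton ℂ (Phi n)) := by
    refine ⟨(fun c : ℂ => c • Phi n) '' Metric.closedBall 0 1,
      ((isCompact_closedBall 0 1).image (continuous_id.smul continuous_const)), ?_⟩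
    refine Filter.mem_of_superset (Metric.closedBall_mem_nhds 0 one_pos) ?_
    exact fun c hc => ⟨c, hc, rfl⟩
  exact h1.comp_clm (coordCLM n)

lemma norm_rankOne_le (n : ℕ) : ‖rankOne n‖ ≤ 1 := by
  refine ContinuousLinearMap.opNorm_le_bound _ zero_le_one fun f => ?_
  rw [rankOne_apply, norm_smul, norm_Phi, mul_one, one_mul]
  exact coordL_norm_le n f

variable {q : ℝ}

lemma summable_M (hq0 : 0 < q) (hq1 : q < 1) :
    Summable (fun n : ℕ => ((q : ℂ) ^ n) • rankOne n) := by
  refine Summable.of_norm_bounded (summable_geometric_of_lt_one hq0.le hq1) fun n => ?_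
  refine (norm_smul_le ((q:ℂ)^n) (rankOne n)).trans ?_
  rw [norm_pow, Complex.norm_real, Real.norm_eq_abs, abs_of_pos hq0]
  calc q ^ n * ‖rankOne n‖ ≤ q ^ n * 1 :=
        mul_le_mul_of_nonneg_left (norm_rankOne_le n) (by positivity)
    _ = q ^ n := mul_one _

def Mop (q : ℝ) : H2 →L[ℂ] H2 := ∑' n : ℕ, ((q : ℂ) ^ n) • rankOne n

lemma Mop_compact (hq0 : 0 < q) (hq1 : q < 1) : IsCompactOperator ⇑(Mop q) := by
  have hsum := (summable_M hq0 hq1).hasSum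
  refine isCompactOperator_of_tendsto hsum.tendsto_sum_nat (Eventually.of_forall fun N => ?_)
  have : ∀ s : Finset ℕ, IsCompactOperator ⇑(∑ i ∈ s, ((q : ℂ) ^ i) • rankOne i) := by
    intro s
    induction s using Finset.cons_induction with
    | empty => simpa using isCompactOperator_zero
    | cons a s ha ih =>
        rw [Finset.sum_cons]
        have h1 : IsCompactOperator ⇑(((q : ℂ) ^ a) • rankOne a) := by
          rw [ContinuousLinearMap.coe_smul']
          exact (rankOne_compact a).smul _
        have h2 := h1.add ih
        rwa [← ContinuousLinearMap.coe_add'] at h2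
  exact this (Finset.range N)

lemma Mop_apply_Phi (hq0 : 0 < q) (hq1 : q < 1) (n : ℕ) :
    Mop q (Phi n) = ((q : ℂ) ^ n) • Phi n := by
  have hsum := ((summable_M hq0 hq1).hasSum).mapL (ContinuousLinearMap.apply ℂ H2 (Phi n))
  have h2 : HasSum (fun m : ℕ => (((q : ℂ) ^ m) • rankOne m) (Phi n)) (Mop q (Phi n)) := hsum
  have h3 : ∀ m : ℕ, m ≠ n → (((q : ℂ) ^ m) • rankOne m) (Phi n) = 0 := by
    intro m hm
    simp [rankOne_apply, Phi_apply, hm, Ne.symm hm]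
  have h4 := hasSum_single (f := fun m : ℕ => (((q : ℂ) ^ m) • rankOne m) (Phi n)) n h3
  have := h2.unique h4
  rw [this]
  simp [rankOne_apply, Phi_apply]

/-- coordinates of a fixed `ℓ²` element tend to zero -/
lemma coord_tendsto_zero (f : H2) : Tendsto (fun i : ℕ => ‖f i‖) atTop (𝓝 0) := by
  have hs : Summable (fun i : ℕ => ‖f i‖ ^ (2 : ℝ≥0∞).toReal) :=
    (lp.memℓp f).summable (by norm_num)
  have h2 : Tendsto (fun i : ℕ => ‖f i‖ ^ (2 : ℝ≥0∞).toReal) atTop (𝓝 0) :=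
    hs.tendsto_atTop_zero
  have h3 : Tendsto (fun i : ℕ => (‖f i‖ ^ (2 : ℝ≥0∞).toReal) ^ ((1:ℝ)/2)) atTop
      (𝓝 ((0:ℝ) ^ ((1:ℝ)/2))) := by
    exact (Real.continuousAt_rpow_const 0 ((1:ℝ)/2) (Or.inr (by norm_num))).tendsto.comp h2
  have h4 : ∀ i : ℕ, (‖f i‖ ^ (2 : ℝ≥0∞).toReal) ^ ((1:ℝ)/2) = ‖f i‖ := by
    intro i
    rw [← Real.rpow_mul (norm_nonneg _)]
    norm_num
  simp only [h4] at h3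
  simpa using h3

/-- coordinates along a shifted diagonal of images of `Phi n` under a compact operator tend to 0 -/
lemma compact_coord_tendsto (T : H2 →L[ℂ] H2) (hT : IsCompactOperator ⇑T) (j : ℕ) :
    Tendsto (fun n : ℕ => ‖T (Phi n) (n + j)‖) atTop (𝓝 0) := by
  rw [NormedAddCommGroup.tendsto_nhds_zero]
  intro ε hε
  obtain ⟨K, hK, hTK⟩ := hT.image_closedBall_subset_compact (1 : ℝ)
  have htb := hK.totallyBounded
  rw [totallyBounded_iff] at htb
  obtain ⟨t, htfin, htcover⟩ := htb (ε/2) (by linarith)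
  have hy : ∀ y ∈ t, ∀ᶠ i : ℕ in atTop, ‖(y : H2) i‖ < ε/2 := by
    intro y _
    exact (coord_tendsto_zero y).eventually_lt_const (by linarith)
  have hall : ∀ᶠ i : ℕ in atTop, ∀ y ∈ t, ‖(y : H2) i‖ < ε/2 := htfin.eventually_all.2 hy
  obtain ⟨N, hN⟩ := eventually_atTop.1 hall
  filter_upwards [eventually_ge_atTop N] with n hn
  have hmem : T (Phi n) ∈ K := hTK ⟨Phi n, by simp [mem_closedBall, norm_Phi], rfl⟩
  have hcov := htcover hmem
  rw [Set.mem_iUnion₂] at hcov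
  obtain ⟨y, hyt, hball⟩ := hcov
  rw [mem_ball, dist_eq_norm] at hball
  have hcoord : ‖T (Phi n) (n + j) - y (n + j)‖ ≤ ‖T (Phi n) - y‖ := by
    have h6 := lp.norm_apply_le_norm (by norm_num : (2:ℝ≥0∞) ≠ 0) (T (Phi n) - y) (n + j)
    simpa [lp.coeFn_sub] using h6
  have h5 : ‖y (n + j)‖ < ε/2 := hN (n + j) (le_trans hn (Nat.le_add_right n j)) y hyt
  have h7 : ‖T (Phi n) (n + j)‖ ≤ ‖T (Phi n) (n + j) - y (n + j)‖ + ‖y (n + j)‖ := by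
    have := norm_add_le (T (Phi n) (n + j) - y (n + j)) (y (n + j))
    simpa using this
  have : ‖T (Phi n) (n + j)‖ < ε := by
    have h8 := hcoord.trans_lt hball
    calc ‖T (Phi n) (n + j)‖ ≤ ‖T (Phi n) (n + j) - y (n + j)‖ + ‖y (n + j)‖ := h7
      _ < ε/2 + ε/2 := add_lt_add h8 h5
      _ = ε := by ring
  simpa using this

lemma weight_nonneg (hq0 : 0 < q) (hq1 : q < 1) (n : ℕ) :
    (0:ℝ) ≤ (1 - q ^ (n+1)) / (1 - q) := by
  have h1 : q ^ (n+1) ≤ 1 := pow_le_one₀ hq0.le hq1.le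
  have h2 : (0:ℝ) < 1 - q := by linarith
  exact div_nonneg (by linarith) h2.le

lemma one_le_weight (hq0 : 0 < q) (hq1 : q < 1) (n : ℕ) :
    (1:ℝ) ≤ Real.sqrt ((1 - q ^ (n+1)) / (1 - q)) := by
  have h2 : (0:ℝ) < 1 - q := by linarith
  have h3 : q ^ (n+1) ≤ q := by
    calc q ^ (n+1) ≤ q ^ 1 := pow_le_pow_of_le_one hq0.le hq1.le (by omega)
      _ = q := pow_one q
  have h4 : (1:ℝ) ≤ (1 - q ^ (n+1)) / (1 - q) := by
    rw [le_div_iff₀ h2]; linarith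
  calc (1:ℝ) = Real.sqrt 1 := by simp
    _ ≤ _ := Real.sqrt_le_sqrt h4

lemma mul_self_weight (hq0 : 0 < q) (hq1 : q < 1) (n : ℕ) :
    ((Real.sqrt ((1 - q ^ (n+1)) / (1 - q)) : ℝ) : ℂ) *
      ((Real.sqrt ((1 - q ^ (n+1)) / (1 - q)) : ℝ) : ℂ) =
      (((1 - q ^ (n+1)) / (1 - q) : ℝ) : ℂ) := by
  rw [← Complex.ofReal_mul, Real.mul_self_sqrt (weight_nonneg hq0 hq1 n)]

lemma scalar_id (hq1 : q < 1) (n : ℕ) :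
    (1:ℂ) - ((1:ℂ) - (q:ℂ)) * (((1 - q ^ (n+1)) / (1 - q) : ℝ) : ℂ) = (q:ℂ) ^ (n+1) := by
  have h2 : (1:ℝ) - q ≠ 0 := by intro h; linarith [sub_eq_zero.1 h]
  have hr : (1:ℝ) - (1 - q) * ((1 - q ^ (n+1)) / (1 - q)) = q ^ (n+1) := by
    field_simp
    ring
  calc (1:ℂ) - ((1:ℂ) - (q:ℂ)) * (((1 - q ^ (n+1)) / (1 - q) : ℝ) : ℂ)
      = (((1:ℝ) - (1 - q) * ((1 - q ^ (n+1)) / (1 - q)) : ℝ) : ℂ) := by push_cast; ring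
    _ = (q:ℂ) ^ (n+1) := by rw [hr]; push_cast; ring

lemma pow_B_Phi (hq0 : 0 < q) (hq1 : q < 1) (B : H2 →L[ℂ] H2)
    (hB : ∀ n : ℕ, B (Phi n) = (Real.sqrt ((1 - q ^ (n + 1)) / (1 - q)) : ℂ) • Phi (n + 1)) :
    ∀ j n : ℕ, ∃ c : ℝ, 1 ≤ c ∧ (B ^ j) (Phi n) = ((c:ℝ) : ℂ) • Phi (n + j) := by
  intro j
  induction j with
  | zero => exact fun n => ⟨1, le_refl 1, by simp⟩
  | succ j ih =>
      intro n
      obtain ⟨c, hc1, hc2⟩ := ih (n+1)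
      refine ⟨Real.sqrt ((1 - q ^ (n + 1)) / (1 - q)) * c, ?_, ?_⟩
      · nlinarith [one_le_weight hq0 hq1 n]
      · rw [pow_succ, ContinuousLinearMap.mul_apply, hB n, map_smul, hc2,
          smul_smul, ← Complex.ofReal_mul]
        congr 2
        omega

lemma identity_BA (hq0 : 0 < q) (hq1 : q < 1) (A B : H2 →L[ℂ] H2)
    (hB : ∀ n : ℕ, B (Phi n) = (Real.sqrt ((1 - q ^ (n + 1)) / (1 - q)) : ℂ) • Phi (n + 1))
    (hA0 : A (Phi 0) = 0)
    (hA : ∀ n : ℕ, A (Phi (n + 1)) = (Real.sqrt ((1 - q ^ (n + 1)) / (1 - q)) : ℂ) • Phi n) :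
    (1 : H2 →L[ℂ] H2) - ((1:ℂ) - (q:ℂ)) • (B * A) = Mop q := by
  refine ext_Phi fun n => ?_
  rw [Mop_apply_Phi hq0 hq1 n]
  rw [ContinuousLinearMap.sub_apply, ContinuousLinearMap.one_apply,
    ContinuousLinearMap.smul_apply, ContinuousLinearMap.mul_apply]
  cases n with
  | zero => rw [hA0, map_zero, smul_zero, sub_zero, pow_zero, one_smul]
  | succ n =>
      rw [hA n, map_smul, hB n, smul_smul, smul_smul]
      have hkey : ((1:ℂ) - ↑q) * ↑(Real.sqrt ((1 - q ^ (n + 1)) / (1 - q))) *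
          ↑(Real.sqrt ((1 - q ^ (n + 1)) / (1 - q))) = 1 - (q:ℂ) ^ (n+1) := by
        rw [mul_assoc, mul_self_weight hq0 hq1 n]
        linear_combination -scalar_id (q := q) hq1 n
      rw [hkey, sub_smul, one_smul]
      abel

lemma identity_AB (hq0 : 0 < q) (hq1 : q < 1) (A B : H2 →L[ℂ] H2)
    (hB : ∀ n : ℕ, B (Phi n) = (Real.sqrt ((1 - q ^ (n + 1)) / (1 - q)) : ℂ) • Phi (n + 1))
    (hA : ∀ n : ℕ, A (Phi (n + 1)) = (Real.sqrt ((1 - q ^ (n + 1)) / (1 - q)) : ℂ) • Phi n) :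
    (1 : H2 →L[ℂ] H2) - ((1:ℂ) - (q:ℂ)) • (A * B) = (q:ℂ) • Mop q := by
  refine ext_Phi fun n => ?_
  rw [ContinuousLinearMap.smul_apply, Mop_apply_Phi hq0 hq1 n]
  rw [ContinuousLinearMap.sub_apply, ContinuousLinearMap.one_apply,
    ContinuousLinearMap.smul_apply, ContinuousLinearMap.mul_apply]
  rw [hB n, map_smul, hA n, smul_smul, smul_smul]
  have hkey : ((1:ℂ) - ↑q) * ↑(Real.sqrt ((1 - q ^ (n + 1)) / (1 - q))) *
      ↑(Real.sqrt ((1 - q ^ (n + 1)) / (1 - q))) = 1 - (q:ℂ) ^ (n+1) := by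
    rw [mul_assoc, mul_self_weight hq0 hq1 n]
    linear_combination -scalar_id (q := q) hq1 n
  rw [hkey, smul_smul, ← pow_succ', sub_smul, one_smul]
  abel

end Stmt15Aux


open Stmt15Aux in
set_option maxHeartbeats 1000000 in
/-- The image `π(ℋ(q))` of the unital subalgebra `ℋ(q)` generated by `A, B` in the
Calkin algebra (realized as any unital `ℂ`-algebra quotient of `B(H)` by exactly the
compact operators) is isomorphic as a unital `ℂ`-algebra to the Laurent polynomial
algebra `ℂ[x, x⁻¹]`, via an isomorphism sending `π(B)` to `x`. -/
theorem stmt_15 (q : ℝ) (hq0 : 0 < q) (hq1 : q < 1)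
    (A B : H2 →L[ℂ] H2)
    (hB : ∀ n : ℕ, B (Phi n) = (Real.sqrt ((1 - q ^ (n + 1)) / (1 - q)) : ℂ) • Phi (n + 1))
    (hA0 : A (Phi 0) = 0)
    (hA : ∀ n : ℕ, A (Phi (n + 1)) = (Real.sqrt ((1 - q ^ (n + 1)) / (1 - q)) : ℂ) • Phi n)
    (Q : Type) [Ring Q] [Algebra ℂ Q] (π : (H2 →L[ℂ] H2) →ₐ[ℂ] Q)
    (hπsurj : Function.Surjective π)
    (hπker : ∀ T : H2 →L[ℂ] H2, π T = 0 ↔ IsCompactOperator (⇑T)) :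
    ∃ φ : ((Algebra.adjoin ℂ ({A, B} : Set (H2 →L[ℂ] H2))).map π) ≃ₐ[ℂ]
        LaurentPolynomial ℂ,
      ∀ y : ((Algebra.adjoin ℂ ({A, B} : Set (H2 →L[ℂ] H2))).map π),
        (y : Q) = π B → φ y = LaurentPolynomial.T 1 := by
  classical
  set R : Subalgebra ℂ Q := (Algebra.adjoin ℂ ({A, B} : Set (H2 →L[ℂ] H2))).map π with hRdef
  have hq1c : ((1:ℂ) - (q:ℂ)) ≠ 0 := by
    have h1 : ((1 - q : ℝ) : ℂ) ≠ 0 := Complex.ofReal_ne_zero.2 (by linarith)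
    simpa [Complex.ofReal_sub] using h1
  -- kernel facts
  have hπM : π (Mop q) = 0 := (hπker _).2 (Mop_compact hq0 hq1)
  have hba : ((1:ℂ) - (q:ℂ)) • (π B * π A) = 1 := by
    have h := congrArg π (identity_BA hq0 hq1 A B hB hA0 hA)
    rw [map_sub, map_one, map_smul, map_mul, hπM, sub_eq_zero] at h
    exact h.symm
  have hab : ((1:ℂ) - (q:ℂ)) • (π A * π B) = 1 := by
    have h := congrArg π (identity_AB hq0 hq1 A B hB hA)
    rw [map_sub, map_one, map_smul, map_mul, map_smul, hπM, smul_zero, sub_eq_zero] at h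
    exact h.symm
  -- elements of R
  have hBmem : π B ∈ R := ⟨B, Algebra.subset_adjoin (by simp), rfl⟩
  have hAmem : π A ∈ R := ⟨A, Algebra.subset_adjoin (by simp), rfl⟩
  set bR : R := ⟨π B, hBmem⟩ with hbRdef
  set aR : R := ⟨((1:ℂ) - (q:ℂ)) • π A, R.smul_mem hAmem _⟩ with haRdef
  have hmul1 : bR * aR = 1 := by
    refine Subtype.ext ?_
    show π B * (((1:ℂ) - (q:ℂ)) • π A) = 1
    rw [mul_smul_comm]
    exact hba
  have hmul2 : aR * bR = 1 := by
    refine Subtype.ext ?_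
    show (((1:ℂ) - (q:ℂ)) • π A) * π B = 1
    rw [smul_mul_assoc]
    exact hab
  set u : Rˣ := ⟨bR, aR, hmul1, hmul2⟩ with hudef
  set ψ : LaurentPolynomial ℂ →ₐ[ℂ] R :=
    AddMonoidAlgebra.lift ℂ R ℤ ((Units.coeHom R).comp (zpowersHom Rˣ u)) with hψdef
  have hψT : ∀ k : ℤ, ψ (LaurentPolynomial.T k) = ((u ^ k : Rˣ) : R) := by
    intro k
    rw [LaurentPolynomial.T, hψdef, AddMonoidAlgebra.lift_single]
    simp [zpowersHom_apply]
  -- the unit in Q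
  set ρ : R →* Q := R.val.toRingHom.toMonoidHom with hρdef
  set v : Qˣ := Units.map ρ u with hvdef
  have hvval : (v : Q) = π B := rfl
  have hcoe : ∀ k : ℤ, (((u ^ k : Rˣ) : R) : Q) = ((v ^ k : Qˣ) : Q) := by
    intro k
    rw [hvdef, ← map_zpow (Units.map ρ) u k]
    rfl
  -- surjectivity
  have hsurj : Function.Surjective ψ := by
    rintro ⟨x, hx⟩
    have hx' : x ∈ Algebra.adjoin ℂ ({π A, π B} : Set Q) := by
      rw [hRdef, AlgHom.map_adjoin] at hx
      rwa [Set.image_insert_eq, Set.image_singleton] at hx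
    have hmain : ∀ y, y ∈ Algebra.adjoin ℂ ({π A, π B} : Set Q) →
        ∃ F : LaurentPolynomial ℂ, ((ψ F : R) : Q) = y := by
      intro y hy
      induction hy using Algebra.adjoin_induction with
      | mem z hz =>
          rcases Set.mem_insert_iff.1 hz with h | h
          · refine ⟨(((1:ℂ) - (q:ℂ))⁻¹) • LaurentPolynomial.T (-1), ?_⟩
            rw [map_smul, hψT (-1), zpow_neg_one]
            have : ((u⁻¹ : Rˣ) : R) = aR := rfl
            rw [this, h]
            show (((1:ℂ) - (q:ℂ))⁻¹ • (((1:ℂ) - (q:ℂ)) • π A) : Q) = π A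
            rw [smul_smul, inv_mul_cancel₀ hq1c, one_smul]
          · refine ⟨LaurentPolynomial.T 1, ?_⟩
            rw [hψT 1, zpow_one, Set.mem_singleton_iff.1 h]
      | algebraMap r =>
          refine ⟨algebraMap ℂ _ r, ?_⟩
          rw [AlgHom.commutes]
          rfl
      | add x y hx hy ihx ihy =>
          obtain ⟨F, hF⟩ := ihx
          obtain ⟨G, hG⟩ := ihy
          exact ⟨F + G, by rw [map_add]; push_cast; rw [hF, hG]⟩
      | mul x y hx hy ihx ihy =>
          obtain ⟨F, hF⟩ := ihx
          obtain ⟨G, hG⟩ := ihy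
          exact ⟨F * G, by rw [map_mul]; push_cast; rw [hF, hG]⟩
    obtain ⟨F, hF⟩ := hmain x hx'
    exact ⟨F, Subtype.ext hF⟩
  -- injectivity
  have hinj : Function.Injective ψ := by
    rw [injective_iff_map_eq_zero]
    intro F hF
    set m : ℕ := F.coeff.support.sup (fun k => (-k).toNat) with hmdef
    have hkm : ∀ k ∈ F.coeff.support, (0:ℤ) ≤ k + m := by
      intro k hk
      have h1 : ((-k).toNat : ℤ) ≤ (m : ℤ) :=
        Int.ofNat_le.2 (Finset.le_sup (f := fun k : ℤ => (-k).toNat) hk)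
      have h2 : -k ≤ ((-k).toNat : ℤ) := Int.self_le_toNat _
      linarith
    have h0 : (0:Q) = F.coeff.sum fun k c => c • ((v ^ k : Qˣ) : Q) := by
      have h1 := congrArg (R.val) hF
      rw [map_zero] at h1
      rw [hψdef, AddMonoidAlgebra.lift_apply, map_finsuppSum] at h1
      rw [← h1]
      refine Finsupp.sum_congr fun k hk => ?_
      rw [map_smul]
      rw [show ((Units.coeHom R).comp (zpowersHom Rˣ u)) (Multiplicative.ofAdd k)
        = ((u ^ k : Rˣ) : R) from by simp [zpowersHom_apply]]
      exact congrArg (fun z => F.coeff k • z) (hcoe k)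
    have h1 : (0:Q) = F.coeff.sum fun k c => c • π (B ^ ((k + (m:ℤ)).toNat)) := by
      have h2 := congrArg (fun z : Q => z * ((v ^ (m:ℤ) : Qˣ) : Q)) h0
      simp only [zero_mul] at h2
      rw [Finsupp.sum_mul] at h2
      rw [h2]
      refine Finsupp.sum_congr fun k hk => ?_
      rw [smul_mul_assoc, ← Units.val_mul, ← zpow_add]
      have h3 : (((k + (m:ℤ)).toNat : ℤ)) = k + (m:ℤ) := Int.toNat_of_nonneg (hkm k hk)
      have h4 : ((v ^ (k + (m:ℤ)) : Qˣ) : Q) = π (B ^ ((k + (m:ℤ)).toNat)) := by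
        calc ((v ^ (k + (m:ℤ)) : Qˣ) : Q)
            = ((v ^ ((((k + (m:ℤ)).toNat : ℤ))) : Qˣ) : Q) := by rw [h3]
          _ = ((v ^ ((k + (m:ℤ)).toNat) : Qˣ) : Q) := by rw [zpow_natCast]
          _ = (π B) ^ ((k + (m:ℤ)).toNat) := by rw [Units.val_pow_eq_pow_val, hvval]
          _ = π (B ^ ((k + (m:ℤ)).toNat)) := by rw [map_pow]
      rw [h4]
    set T₀ : H2 →L[ℂ] H2 := F.coeff.sum fun k c => c • B ^ ((k + (m:ℤ)).toNat) with hT₀def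
    have hπT₀ : π T₀ = 0 := by
      have h2 : π T₀ = F.coeff.sum fun k c => c • π (B ^ ((k + (m:ℤ)).toNat)) := by
        rw [hT₀def, map_finsuppSum]
        exact Finsupp.sum_congr fun k hk => by rw [map_smul]
      rw [h2, ← h1]
    have hcpt : IsCompactOperator ⇑T₀ := (hπker T₀).1 hπT₀
    ext k₀
    rw [AddMonoidAlgebra.coeff_zero, Finsupp.coe_zero, Pi.zero_apply]
    by_contra hk0
    have hk₀mem : k₀ ∈ F.coeff.support := Finsupp.mem_support_iff.2 hk0
    set j₀ : ℕ := (k₀ + (m:ℤ)).toNat with hj₀def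
    have hgen := pow_B_Phi hq0 hq1 B hB
    have hcoordv : ∀ n : ℕ, ∃ c : ℝ, 1 ≤ c ∧ T₀ (Phi n) (n + j₀) = F.coeff k₀ * (c:ℂ) := by
      intro n
      obtain ⟨c, hc1, hc2⟩ := hgen j₀ n
      refine ⟨c, hc1, ?_⟩
      have hT0app : T₀ (Phi n) =
          ∑ k ∈ F.coeff.support, F.coeff k • ((B ^ ((k + (m:ℤ)).toNat)) (Phi n)) := by
        rw [hT₀def, Finsupp.sum, ContinuousLinearMap.sum_apply]
        exact Finset.sum_congr rfl fun k hk => by rw [ContinuousLinearMap.smul_apply]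
      have hstep : T₀ (Phi n) (n + j₀) =
          ∑ k ∈ F.coeff.support, F.coeff k • coordL (n + j₀) ((B ^ ((k + (m:ℤ)).toNat)) (Phi n)) := by
        have : T₀ (Phi n) (n + j₀) = coordL (n + j₀) (T₀ (Phi n)) := rfl
        rw [this, hT0app, map_sum]
        exact Finset.sum_congr rfl fun k _ => by rw [map_smul]
      have hterm : ∀ k ∈ F.coeff.support, k ≠ k₀ →
          F.coeff k • coordL (n + j₀) ((B ^ ((k + (m:ℤ)).toNat)) (Phi n)) = 0 := by
        intro k hk hne
        obtain ⟨c', hc'1, hc'2⟩ := hgen ((k + (m:ℤ)).toNat) n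
        rw [hc'2, map_smul]
        have e1 : (((k + (m:ℤ)).toNat : ℤ)) = k + (m:ℤ) := Int.toNat_of_nonneg (hkm k hk)
        have e2 : ((j₀ : ℤ)) = k₀ + (m:ℤ) := Int.toNat_of_nonneg (hkm k₀ hk₀mem)
        have hne' : (k + (m:ℤ)).toNat ≠ j₀ := by
          intro hcontra; apply hne; omega
        have hPhi0 : coordL (n + j₀) (Phi (n + (k + (m:ℤ)).toNat)) = 0 := by
          have : (Phi (n + (k + (m:ℤ)).toNat)) (n + j₀) = 0 := by
            rw [Phi_apply, if_neg (by omega)]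
          exact this
        rw [hPhi0, smul_zero, smul_zero]
      have hsum := Finset.sum_eq_single_of_mem k₀ hk₀mem hterm
      rw [hstep, hsum, ← hj₀def, hc2, map_smul]
      have hone : coordL (n + j₀) (Phi (n + j₀)) = 1 := by
        have : (Phi (n + j₀)) (n + j₀) = 1 := by rw [Phi_apply, if_pos rfl]
        exact this
      rw [hone]
      simp [smul_eq_mul]
    have hge : ∀ n : ℕ, ‖F.coeff k₀‖ ≤ ‖T₀ (Phi n) (n + j₀)‖ := by
      intro n
      obtain ⟨c, hc1, hc2⟩ := hcoordv n
      rw [hc2, norm_mul]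
      have hcn : ‖((c:ℝ):ℂ)‖ = c := by
        rw [Complex.norm_real, Real.norm_eq_abs, abs_of_nonneg (by linarith)]
      rw [hcn]
      nlinarith [norm_nonneg (F.coeff k₀)]
    have hlim := compact_coord_tendsto T₀ hcpt j₀
    have hle : ‖F.coeff k₀‖ ≤ 0 := ge_of_tendsto' hlim hge
    exact hk0 (norm_le_zero_iff.1 hle)
  -- conclusion
  let e : LaurentPolynomial ℂ ≃ₐ[ℂ] R := AlgEquiv.ofBijective ψ ⟨hinj, hsurj⟩
  refine ⟨e.symm, fun y hy => ?_⟩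
  have hyy : y = bR := Subtype.ext hy
  have he : e (LaurentPolynomial.T 1) = y := by
    rw [hyy]
    show ψ (LaurentPolynomial.T 1) = bR
    rw [hψT 1, zpow_one]
  rw [← he, AlgEquiv.symm_apply_apply]
end
end
end

section
/- 𝔏₀⁽²⁾(q) is a Lie ideal of ℋ(q): for every X ∈ 𝔏₀⁽²⁾(q) and every Y ∈ ℋ(q), the commutator [X,Y] = XY − YX belongs to 𝔏₀⁽²⁾(q). -/
noncomputable section

lemma ext_basis (T S : H2 →L[ℂ] H2) (h : ∀ n, T (Phi n) = S (Phi n)) : T = S := by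
  refine ContinuousLinearMap.ext fun x => ?_
  have hx : HasSum (fun n : ℕ => lp.single 2 n (x n)) x :=
    lp.hasSum_single (by norm_num) x
  have hsingle : ∀ n : ℕ, lp.single 2 n (x n) = x n • Phi n := by
    intro n
    rw [Phi, ← lp.single_smul]
    norm_num
  have hT : HasSum (fun n : ℕ => x n • T (Phi n)) (T x) := by
    simpa [hsingle] using T.hasSum hx
  have hS : HasSum (fun n : ℕ => x n • S (Phi n)) (S x) := by
    simpa [hsingle] using S.hasSum hx
  exact hT.unique (by simpa [h] using hS)

set_option maxHeartbeats 2000000 in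
/-- `𝔏₀⁽²⁾(q)` is a Lie ideal of `ℋ(q)`: for every `X ∈ 𝔏₀⁽²⁾(q)` and every
`Y ∈ ℋ(q)`, the commutator `XY − YX` belongs to `𝔏₀⁽²⁾(q)`. -/
theorem stmt_16 (q : ℝ) (hq0 : 0 < q) (hq1 : q < 1)
    (A B : H2 →L[ℂ] H2)
    (hB : ∀ n : ℕ, B (Phi n) = (Real.sqrt ((1 - q ^ (n + 1)) / (1 - q)) : ℂ) • Phi (n + 1))
    (hA0 : A (Phi 0) = 0)
    (hA : ∀ n : ℕ, A (Phi (n + 1)) = (Real.sqrt ((1 - q ^ (n + 1)) / (1 - q)) : ℂ) • Phi n) :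
    ∀ X ∈ Submodule.span ℂ {T : H2 →L[ℂ] H2 | ∃ k l : ℕ, 0 < k ∧ 0 < l ∧
        (T = (A * B - B * A) ^ k ∨ T = (A * B - B * A) ^ k * A ^ l ∨
          T = B ^ l * (A * B - B * A) ^ k)},
      ∀ Y ∈ Algebra.adjoin ℂ ({A, B} : Set (H2 →L[ℂ] H2)),
        X * Y - Y * X ∈ Submodule.span ℂ {T : H2 →L[ℂ] H2 | ∃ k l : ℕ, 0 < k ∧ 0 < l ∧
          (T = (A * B - B * A) ^ k ∨ T = (A * B - B * A) ^ k * A ^ l ∨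
            T = B ^ l * (A * B - B * A) ^ k)} := by
  have hq : (1 : ℝ) - q ≠ 0 := by linarith
  have hqc : (1 : ℂ) - (q : ℂ) ≠ 0 := by exact_mod_cast hq
  set C : H2 →L[ℂ] H2 := A * B - B * A with hCdef
  set Sg : Set (H2 →L[ℂ] H2) := {T : H2 →L[ℂ] H2 | ∃ k l : ℕ, 0 < k ∧ 0 < l ∧
      (T = C ^ k ∨ T = C ^ k * A ^ l ∨ T = B ^ l * C ^ k)} with hSgdef
  set L : Submodule ℂ (H2 →L[ℂ] H2) := Submodule.span ℂ Sg with hLdef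
  -- nonnegativity and sqrt facts
  have hr : ∀ n : ℕ, (0:ℝ) ≤ (1 - q ^ (n+1)) / (1 - q) := by
    intro n
    apply div_nonneg
    · have : q ^ (n+1) ≤ 1 := pow_le_one₀ hq0.le hq1.le
      linarith
    · linarith
  have hsq : ∀ n : ℕ, ((Real.sqrt ((1 - q ^ (n+1)) / (1 - q)) : ℝ) : ℂ) *
      ((Real.sqrt ((1 - q ^ (n+1)) / (1 - q)) : ℝ) : ℂ)
      = (((1 - q ^ (n+1)) / (1 - q) : ℝ) : ℂ) := by
    intro n
    rw [← Complex.ofReal_mul, Real.mul_self_sqrt (hr n)]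
  -- action of C on basis
  have hC : ∀ n : ℕ, C (Phi n) = ((q:ℂ) ^ n) • Phi n := by
    intro n
    cases n with
    | zero =>
      simp only [hCdef, ContinuousLinearMap.sub_apply, ContinuousLinearMap.mul_apply,
        hA0, map_zero, hB 0, map_smul, hA 0, sub_zero, smul_smul, hsq 0]
      norm_num
      rw [div_self hqc, one_smul]
    | succ n =>
      simp only [hCdef, ContinuousLinearMap.sub_apply, ContinuousLinearMap.mul_apply,
        hB (n+1), hA n, hA (n+1), hB n, map_smul, smul_smul, hsq, ← sub_smul]
      congr 1
      push_cast
      field_simp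
      ring
  -- basic commutation relations
  have hAC1 : A * C = (q:ℂ) • (C * A) := by
    apply ext_basis
    intro n
    cases n with
    | zero =>
      simp only [ContinuousLinearMap.smul_apply, ContinuousLinearMap.mul_apply, hC, hA0,
        map_smul, map_zero, smul_zero]
    | succ n =>
      simp only [ContinuousLinearMap.mul_apply, ContinuousLinearMap.smul_apply,
        hC, hA, map_smul, smul_smul]
      congr 1
      ring
  have hCB1 : C * B = (q:ℂ) • (B * C) := by
    apply ext_basis
    intro n
    simp only [ContinuousLinearMap.mul_apply, ContinuousLinearMap.smul_apply,
      hC, hB, map_smul, smul_smul]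
    congr 1
    ring
  have hBA : B * A = ((((1:ℝ) - q : ℝ)) : ℂ)⁻¹ • (1 - C) := by
    apply ext_basis
    intro n
    cases n with
    | zero =>
      simp [ContinuousLinearMap.mul_apply, hA0, hC]
    | succ n =>
      simp only [ContinuousLinearMap.mul_apply, ContinuousLinearMap.smul_apply,
        ContinuousLinearMap.sub_apply, ContinuousLinearMap.one_apply,
        hA, hB, map_smul, smul_smul, hsq, hC]
      rw [show Phi (n+1) - (q:ℂ)^(n+1) • Phi (n+1) = ((1:ℂ) - (q:ℂ)^(n+1)) • Phi (n+1) from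
        by rw [sub_smul, one_smul], smul_smul]
      congr 1
      push_cast
      field_simp
  have hAB' : A * B = ((((1:ℝ) - q : ℝ)) : ℂ)⁻¹ • (1 - C) + C := by
    rw [← hBA, hCdef]; abel
  -- power commutation relations
  have pACk : ∀ k : ℕ, A * C ^ k = ((q:ℂ) ^ k) • (C ^ k * A) := by
    intro k
    induction k with
    | zero => simp
    | succ k ih =>
      rw [pow_succ, ← mul_assoc, ih, smul_mul_assoc, mul_assoc, hAC1,
        mul_smul_comm, ← mul_assoc, ← pow_succ, smul_smul, ← pow_succ]
  have pCBk : ∀ k : ℕ, C ^ k * B = ((q:ℂ) ^ k) • (B * C ^ k) := by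
    intro k
    induction k with
    | zero => simp
    | succ k ih =>
      rw [pow_succ, mul_assoc, hCB1, mul_smul_comm, ← mul_assoc, ih,
        smul_mul_assoc, mul_assoc, smul_smul, ← pow_succ']
  have pAlC : ∀ l : ℕ, A ^ l * C = ((q:ℂ) ^ l) • (C * A ^ l) := by
    intro l
    induction l with
    | zero => simp
    | succ l ih =>
      rw [pow_succ, mul_assoc, hAC1, mul_smul_comm, ← mul_assoc, ih,
        smul_mul_assoc, mul_assoc, smul_smul, ← pow_succ']
  have pClB : ∀ l : ℕ, C * B ^ l = ((q:ℂ) ^ l) • (B ^ l * C) := by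
    intro l
    induction l with
    | zero => simp
    | succ l ih =>
      rw [pow_succ, ← mul_assoc, ih, smul_mul_assoc, mul_assoc, hCB1,
        mul_smul_comm, ← mul_assoc, ← pow_succ, smul_smul, ← pow_succ]
  have hqk : ∀ k : ℕ, ((q:ℂ) ^ k) ≠ 0 := by
    intro k
    apply pow_ne_zero
    simpa using (Complex.ofReal_ne_zero.mpr hq0.ne')
  have hBCk : ∀ k : ℕ, B * C ^ k = ((q:ℂ) ^ k)⁻¹ • (C ^ k * B) := by
    intro k
    rw [pCBk, smul_smul, inv_mul_cancel₀ (hqk k), one_smul]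
  have hmix1 : ∀ k m : ℕ, (C ^ k * A ^ m) * C = ((q:ℂ) ^ m) • (C ^ (k+1) * A ^ m) := by
    intro k m
    rw [mul_assoc, pAlC m, mul_smul_comm, ← mul_assoc, ← pow_succ]
  have hmix2 : ∀ k m : ℕ, C * (B ^ m * C ^ k) = ((q:ℂ) ^ m) • (B ^ m * C ^ (k+1)) := by
    intro k m
    rw [← mul_assoc, pClB m, smul_mul_assoc, mul_assoc, ← pow_succ']
  -- membership helpers
  have hmem1 : ∀ k l : ℕ, 0 < k → C ^ k * A ^ l ∈ L := by
    intro k l hk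
    rcases Nat.eq_zero_or_pos l with h | h
    · subst h
      have hmem : (C ^ k : H2 →L[ℂ] H2) ∈ Sg := ⟨k, 1, hk, one_pos, Or.inl rfl⟩
      simpa using Submodule.subset_span hmem
    · have hmem : (C ^ k * A ^ l : H2 →L[ℂ] H2) ∈ Sg := ⟨k, l, hk, h, Or.inr (Or.inl rfl)⟩
      exact Submodule.subset_span hmem
  have hmem2 : ∀ k l : ℕ, 0 < k → B ^ l * C ^ k ∈ L := by
    intro k l hk
    rcases Nat.eq_zero_or_pos l with h | h
    · subst h
      have hmem : (C ^ k : H2 →L[ℂ] H2) ∈ Sg := ⟨k, 1, hk, one_pos, Or.inl rfl⟩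
      simpa using Submodule.subset_span hmem
    · have hmem : (B ^ l * C ^ k : H2 →L[ℂ] H2) ∈ Sg := ⟨k, l, hk, h, Or.inr (Or.inr rfl)⟩
      exact Submodule.subset_span hmem
  -- closure of generators under multiplication by A and B
  have hTA : ∀ T ∈ Sg, T * A ∈ L := by
    rintro T ⟨k, l, hk, hl, (rfl | rfl | rfl)⟩
    · have := hmem1 k 1 hk; rwa [pow_one] at this
    · rw [mul_assoc, ← pow_succ]
      exact hmem1 k (l+1) hk
    · obtain ⟨m, rfl⟩ := Nat.exists_eq_succ_of_ne_zero hl.ne'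
      have e : B ^ (m+1) * C ^ k * A
          = ((q:ℂ) ^ k)⁻¹ • (((((1:ℝ) - q : ℝ)) : ℂ)⁻¹ •
            (B ^ m * C ^ k - B ^ m * C ^ (k+1))) := by
        rw [pow_succ, mul_assoc (B ^ m) B (C ^ k), hBCk, mul_smul_comm, smul_mul_assoc,
          mul_assoc, mul_assoc, hBA, mul_smul_comm, mul_smul_comm, mul_sub, mul_one,
          ← pow_succ, mul_sub]
      rw [e]
      exact Submodule.smul_mem _ _ (Submodule.smul_mem _ _
        (sub_mem (hmem2 k m hk) (hmem2 (k+1) m (by omega))))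
  have hAT : ∀ T ∈ Sg, A * T ∈ L := by
    rintro T ⟨k, l, hk, hl, (rfl | rfl | rfl)⟩
    · rw [pACk]
      exact Submodule.smul_mem _ _ (by have := hmem1 k 1 hk; rwa [pow_one] at this)
    · rw [← mul_assoc, pACk, smul_mul_assoc, mul_assoc, ← pow_succ']
      exact Submodule.smul_mem _ _ (hmem1 k (l+1) hk)
    · obtain ⟨m, rfl⟩ := Nat.exists_eq_succ_of_ne_zero hl.ne'
      have e : A * (B ^ (m+1) * C ^ k)
          = ((((1:ℝ) - q : ℝ)) : ℂ)⁻¹ • (B ^ m * C ^ k - ((q:ℂ) ^ m) • (B ^ m * C ^ (k+1)))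
            + ((q:ℂ) ^ m) • (B ^ m * C ^ (k+1)) := by
        rw [pow_succ', mul_assoc B (B ^ m) (C ^ k), ← mul_assoc A B, hAB',
          add_mul, smul_mul_assoc, sub_mul, one_mul, hmix2]
      rw [e]
      exact add_mem (Submodule.smul_mem _ _ (sub_mem (hmem2 k m hk)
        (Submodule.smul_mem _ _ (hmem2 (k+1) m (by omega)))))
        (Submodule.smul_mem _ _ (hmem2 (k+1) m (by omega)))
  have hTB : ∀ T ∈ Sg, T * B ∈ L := by
    rintro T ⟨k, l, hk, hl, (rfl | rfl | rfl)⟩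
    · rw [pCBk]
      exact Submodule.smul_mem _ _ (by have := hmem2 k 1 hk; rwa [pow_one] at this)
    · obtain ⟨m, rfl⟩ := Nat.exists_eq_succ_of_ne_zero hl.ne'
      have e : C ^ k * A ^ (m+1) * B
          = ((((1:ℝ) - q : ℝ)) : ℂ)⁻¹ • (C ^ k * A ^ m - ((q:ℂ) ^ m) • (C ^ (k+1) * A ^ m))
            + ((q:ℂ) ^ m) • (C ^ (k+1) * A ^ m) := by
        rw [pow_succ, ← mul_assoc, mul_assoc (C ^ k * A ^ m) A B, hAB',
          mul_add, mul_smul_comm, mul_sub, mul_one, hmix1]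
      rw [e]
      exact add_mem (Submodule.smul_mem _ _ (sub_mem (hmem1 k m hk)
        (Submodule.smul_mem _ _ (hmem1 (k+1) m (by omega)))))
        (Submodule.smul_mem _ _ (hmem1 (k+1) m (by omega)))
    · rw [mul_assoc, pCBk, mul_smul_comm, ← mul_assoc, ← pow_succ]
      exact Submodule.smul_mem _ _ (hmem2 k (l+1) hk)
  have hBT : ∀ T ∈ Sg, B * T ∈ L := by
    rintro T ⟨k, l, hk, hl, (rfl | rfl | rfl)⟩
    · have := hmem2 k 1 hk; rwa [pow_one] at this
    · obtain ⟨m, rfl⟩ := Nat.exists_eq_succ_of_ne_zero hl.ne'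
      have e : B * (C ^ k * A ^ (m+1))
          = ((q:ℂ) ^ k)⁻¹ • (((((1:ℝ) - q : ℝ)) : ℂ)⁻¹ •
            (C ^ k * A ^ m - C ^ (k+1) * A ^ m)) := by
        rw [← mul_assoc, hBCk, smul_mul_assoc, mul_assoc, pow_succ',
          ← mul_assoc B A (A ^ m), hBA, smul_mul_assoc, mul_smul_comm,
          sub_mul, one_mul, mul_sub, ← mul_assoc, ← pow_succ]
      rw [e]
      exact Submodule.smul_mem _ _ (Submodule.smul_mem _ _
        (sub_mem (hmem1 k m hk) (hmem1 (k+1) m (by omega))))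
    · rw [← mul_assoc, ← pow_succ']
      exact hmem2 k (l+1) hk
  -- closure of L under multiplication by A and B
  have hmul : ∀ X ∈ L, (X * A ∈ L ∧ A * X ∈ L) ∧ (X * B ∈ L ∧ B * X ∈ L) := by
    intro X hX
    induction hX using Submodule.span_induction with
    | mem T hT => exact ⟨⟨hTA T hT, hAT T hT⟩, hTB T hT, hBT T hT⟩
    | zero => simp [zero_mem]
    | add x y hx hy ihx ihy =>
      refine ⟨⟨?_, ?_⟩, ?_, ?_⟩
      · rw [add_mul]; exact add_mem ihx.1.1 ihy.1.1
      · rw [mul_add]; exact add_mem ihx.1.2 ihy.1.2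
      · rw [add_mul]; exact add_mem ihx.2.1 ihy.2.1
      · rw [mul_add]; exact add_mem ihx.2.2 ihy.2.2
    | smul a x hx ih =>
      refine ⟨⟨?_, ?_⟩, ?_, ?_⟩
      · rw [smul_mul_assoc]; exact Submodule.smul_mem _ _ ih.1.1
      · rw [mul_smul_comm]; exact Submodule.smul_mem _ _ ih.1.2
      · rw [smul_mul_assoc]; exact Submodule.smul_mem _ _ ih.2.1
      · rw [mul_smul_comm]; exact Submodule.smul_mem _ _ ih.2.2
  -- L is a two-sided ideal of the adjoin
  have hadj : ∀ Y ∈ Algebra.adjoin ℂ ({A, B} : Set (H2 →L[ℂ] H2)),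
      ∀ X ∈ L, X * Y ∈ L ∧ Y * X ∈ L := by
    intro Y hY
    induction hY using Algebra.adjoin_induction with
    | mem Z hZ =>
      intro X hX
      rcases hZ with rfl | hZ
      · exact ⟨(hmul X hX).1.1, (hmul X hX).1.2⟩
      · rw [Set.mem_singleton_iff] at hZ
        subst hZ
        exact ⟨(hmul X hX).2.1, (hmul X hX).2.2⟩
    | algebraMap c =>
      intro X hX
      constructor
      · rw [Algebra.algebraMap_eq_smul_one, mul_smul_comm, mul_one]
        exact Submodule.smul_mem _ _ hX
      · rw [Algebra.algebraMap_eq_smul_one, smul_mul_assoc, one_mul]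
        exact Submodule.smul_mem _ _ hX
    | add y z hy hz ihy ihz =>
      intro X hX
      constructor
      · rw [mul_add]; exact add_mem (ihy X hX).1 (ihz X hX).1
      · rw [add_mul]; exact add_mem (ihy X hX).2 (ihz X hX).2
    | mul y z hy hz ihy ihz =>
      intro X hX
      constructor
      · rw [← mul_assoc]; exact (ihz _ (ihy X hX).1).1
      · rw [mul_assoc]; exact (ihy _ (ihz X hX).2).2
  intro X hX Y hY
  exact sub_mem ((hadj Y hY X hX).1) ((hadj Y hY X hX).2)

end
end

section
/- The Lie subalgebra of the bounded operators on H generated by {A, B} — i.e., the smallest complex linear subspace containing A and B and closed under the commutator bracket [X,Y] = XY − YX, whose elements are the Lie polynomials in A and B — is equal to the linear span of the set {A, B} ∪ {[A,B]^k, [A,B]^k A^l, B^l [A,B]^k : k, l positive integers}. -/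
noncomputable section

attribute [local instance 100] LieRing.ofAssociativeRing

open Submodule in

theorem auxLie {R : Type*} [Ring R] [Algebra ℂ R] (A B C : R) (q u : ℂ)
    (hC : A * B - B * A = C)
    (r3 : B * A = u • (1 : R) - u • C)
    (hu : u * (1 - q) = 1)
    (hqz : q ≠ 0)
    (hqk : ∀ k : ℕ, 1 ≤ k → (1 : ℂ) - q ^ k ≠ 0) :
    (LieSubalgebra.lieSpan ℂ R {A, B}).toSubmodule =
      Submodule.span ℂ ({A, B} ∪ {T : R | ∃ k l : ℕ, 0 < k ∧ 0 < l ∧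
        (T = C ^ k ∨ T = C ^ k * A ^ l ∨ T = B ^ l * C ^ k)}) := by
  have hu0 : u ≠ 0 := left_ne_zero_of_mul (hu ▸ one_ne_zero)
  have hq1 : (1:ℂ) - q ≠ 0 := by
    intro h; rw [h, mul_zero] at hu; exact zero_ne_one hu
  have hueq : u = (1 - q)⁻¹ := by field_simp; linear_combination hu
  subst hueq
  set u : ℂ := (1 - q)⁻¹ with hudef
  have r4 : A * B = u • (1 : R) - (u * q) • C := by
    have h1 : A * B = C + (u • (1:R) - u • C) := by rw [← r3, ← hC]; abel
    rw [h1]; match_scalars <;> simp only [hudef] <;> (try field_simp) <;> (try ring)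
  have hC2 : C = (1 : R) - ((1:ℂ) - q) • (B * A) := by
    rw [r3]; match_scalars <;> simp only [hudef] <;> (try field_simp) <;> (try ring)
  have r1 : A * C = q • (C * A) := by
    calc A * C = A * ((1:R) - ((1:ℂ)-q) • (B*A)) := by rw [← hC2]
      _ = A - ((1:ℂ)-q) • ((A*B)*A) := by
          rw [mul_sub, mul_one, mul_smul_comm, ← mul_assoc]
      _ = A - ((1:ℂ)-q) • ((u • (1:R) - (u*q) • C)*A) := by rw [r4]
      _ = q • (C*A) := by
          rw [sub_mul, smul_mul_assoc, smul_mul_assoc, one_mul]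
          match_scalars <;> simp only [hudef] <;> (try field_simp) <;> (try ring)
  have r2 : C * B = q • (B * C) := by
    calc C * B = ((1:R) - ((1:ℂ)-q) • (B*A)) * B := by rw [← hC2]
      _ = B - ((1:ℂ)-q) • (B*(A*B)) := by
          rw [sub_mul, one_mul, smul_mul_assoc, mul_assoc]
      _ = B - ((1:ℂ)-q) • (B*(u • (1:R) - (u*q) • C)) := by rw [r4]
      _ = q • (B*C) := by
          rw [mul_sub, mul_smul_comm, mul_smul_comm, mul_one]
          match_scalars <;> simp only [hudef] <;> (try field_simp) <;> (try ring)
  -- power commutation lemmas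
  have pA : ∀ k : ℕ, A * C ^ k = q ^ k • (C ^ k * A) := by
    intro k; induction k with
    | zero => simp
    | succ n ih =>
      calc A * C ^ (n+1) = (A * C ^ n) * C := by rw [pow_succ, mul_assoc]
        _ = q ^ n • (C ^ n * (A * C)) := by rw [ih, smul_mul_assoc, mul_assoc]
        _ = q ^ n • (C ^ n * (q • (C * A))) := by rw [r1]
        _ = q ^ (n+1) • (C ^ (n+1) * A) := by
            rw [mul_smul_comm, smul_smul, ← mul_assoc, ← pow_succ, ← pow_succ]
  have pB : ∀ k : ℕ, C ^ k * B = q ^ k • (B * C ^ k) := by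
    intro k; induction k with
    | zero => simp
    | succ n ih =>
      calc C ^ (n+1) * B = C * (C ^ n * B) := by rw [pow_succ', mul_assoc]
        _ = q ^ n • ((C * B) * C ^ n) := by rw [ih, mul_smul_comm, mul_assoc]
        _ = q ^ n • ((q • (B * C)) * C ^ n) := by rw [r2]
        _ = q ^ (n+1) • (B * C ^ (n+1)) := by
            rw [smul_mul_assoc, smul_smul, mul_assoc, ← pow_succ', ← pow_succ]
  have pAl : ∀ l k : ℕ, A ^ l * C ^ k = ((q ^ k) ^ l) • (C ^ k * A ^ l) := by
    intro l k; induction l with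
    | zero => simp
    | succ n ih =>
      calc A ^ (n+1) * C ^ k = A * (A ^ n * C ^ k) := by rw [pow_succ', mul_assoc]
        _ = (q ^ k) ^ n • ((A * C ^ k) * A ^ n) := by rw [ih, mul_smul_comm, mul_assoc]
        _ = (q ^ k) ^ n • ((q ^ k • (C ^ k * A)) * A ^ n) := by rw [pA]
        _ = ((q ^ k) ^ (n+1)) • (C ^ k * A ^ (n+1)) := by
            rw [smul_mul_assoc, smul_smul, mul_assoc, ← pow_succ', ← pow_succ]
  have pBm : ∀ m k : ℕ, C ^ k * B ^ m = ((q ^ k) ^ m) • (B ^ m * C ^ k) := by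
    intro m k; induction m with
    | zero => simp
    | succ n ih =>
      calc C ^ k * B ^ (n+1) = (C ^ k * B ^ n) * B := by rw [pow_succ, mul_assoc]
        _ = (q ^ k) ^ n • (B ^ n * (C ^ k * B)) := by rw [ih, smul_mul_assoc, mul_assoc]
        _ = (q ^ k) ^ n • (B ^ n * (q ^ k • (B * C ^ k))) := by rw [pB]
        _ = ((q ^ k) ^ (n+1)) • (B ^ (n+1) * C ^ k) := by
            rw [mul_smul_comm, smul_smul, ← mul_assoc, ← pow_succ, ← pow_succ]
  -- E7
  have keyBA : ∀ b : ℕ, q ^ b • ((B * C ^ b) * A) = u • C ^ b - u • C ^ (b+1) := by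
    intro b
    calc q ^ b • ((B * C ^ b) * A) = (C ^ b * B) * A := by rw [pB, smul_mul_assoc]
      _ = C ^ b * (B * A) := by rw [mul_assoc]
      _ = C ^ b * (u • (1:R) - u • C) := by rw [r3]
      _ = u • C ^ b - u • C ^ (b+1) := by
          rw [mul_sub, mul_smul_comm, mul_smul_comm, mul_one, ← pow_succ]
  -- E8
  have idAB : ∀ l m : ℕ, A ^ (l+1) * B ^ (m+1)
      = u • (A ^ l * B ^ m) - (u * q ^ (m+1)) • ((A ^ l * B ^ m) * C) := by
    intro l m
    calc A ^ (l+1) * B ^ (m+1) = A ^ l * ((A * B) * B ^ m) := by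
          rw [pow_succ, pow_succ', mul_assoc, ← mul_assoc A B, ← mul_assoc]
      _ = A ^ l * ((u • (1:R) - (u*q) • C) * B ^ m) := by rw [r4]
      _ = u • (A ^ l * B ^ m) - (u*q) • (A ^ l * (C * B ^ m)) := by
          rw [sub_mul, smul_mul_assoc, smul_mul_assoc, one_mul, mul_sub,
            mul_smul_comm, mul_smul_comm]
      _ = u • (A ^ l * B ^ m) - (u * q ^ (m+1)) • ((A ^ l * B ^ m) * C) := by
          have h1 : C * B ^ m = (q ^ m) • (B ^ m * C) := by simpa using pBm m 1
          rw [h1, mul_smul_comm, smul_smul, ← mul_assoc]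
          match_scalars <;> ring
  set Sgen : Set R := ({A, B} ∪ {T : R | ∃ k l : ℕ, 0 < k ∧ 0 < l ∧
        (T = C ^ k ∨ T = C ^ k * A ^ l ∨ T = B ^ l * C ^ k)}) with hSgen
  set V : Submodule ℂ R := Submodule.span ℂ Sgen with hV
  have mA : A ∈ V := Submodule.subset_span (Set.mem_union_left _ (by simp))
  have mB : B ∈ V := Submodule.subset_span (Set.mem_union_left _ (by simp))
  have mc : ∀ k : ℕ, 1 ≤ k → C ^ k ∈ V := fun k hk =>
    Submodule.subset_span (Set.mem_union_right _ ⟨k, 1, hk, one_pos, Or.inl rfl⟩)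
  have mca : ∀ k l : ℕ, 1 ≤ k → C ^ k * A ^ l ∈ V := by
    intro k l hk
    match l with
    | 0 => simpa using mc k hk
    | l+1 =>
      exact Submodule.subset_span
        (Set.mem_union_right _ ⟨k, l+1, hk, l.succ_pos, Or.inr (Or.inl rfl)⟩)
  have mbc : ∀ m k : ℕ, 1 ≤ k → B ^ m * C ^ k ∈ V := by
    intro m k hk
    match m with
    | 0 => simpa using mc k hk
    | m+1 =>
      exact Submodule.subset_span
        (Set.mem_union_right _ ⟨k, m+1, hk, m.succ_pos, Or.inr (Or.inr rfl)⟩)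
  -- La
  have La : ∀ l m b : ℕ, 1 ≤ b → (B ^ m * C ^ b) * A ^ l ∈ V := by
    intro l; induction l with
    | zero => intro m b hb; simpa using mbc m b hb
    | succ n ih =>
      intro m b hb
      match m with
      | 0 => simpa using mca b (n+1) hb
      | m+1 =>
        have key : q ^ b • ((B ^ (m+1) * C ^ b) * A ^ (n+1))
            = u • ((B ^ m * C ^ b) * A ^ n) - u • ((B ^ m * C ^ (b+1)) * A ^ n) := by
          calc q ^ b • ((B ^ (m+1) * C ^ b) * A ^ (n+1))
              = B ^ m * ((q ^ b • ((B * C ^ b) * A)) * A ^ n) := by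
                rw [pow_succ B, pow_succ' A]
                simp only [smul_mul_assoc, mul_smul_comm, mul_assoc]
            _ = B ^ m * ((u • C ^ b - u • C ^ (b+1)) * A ^ n) := by rw [keyBA]
            _ = u • ((B ^ m * C ^ b) * A ^ n) - u • ((B ^ m * C ^ (b+1)) * A ^ n) := by
                rw [sub_mul, smul_mul_assoc, smul_mul_assoc, mul_sub,
                  mul_smul_comm, mul_smul_comm, ← mul_assoc, ← mul_assoc]
        have hmem : q ^ b • ((B ^ (m+1) * C ^ b) * A ^ (n+1)) ∈ V := by
          rw [key]
          exact sub_mem (V.smul_mem u (ih m b hb)) (V.smul_mem u (ih m (b+1) (by omega)))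
        exact (Submodule.smul_mem_iff V (pow_ne_zero b hqz)).mp hmem
  -- ML1
  have ML1 : ∀ l m k j : ℕ, 1 ≤ k + j → ((C ^ k * A ^ l) * B ^ m) * C ^ j ∈ V := by
    intro l; induction l with
    | zero =>
      intro m k j h
      have e : ((C ^ k * A ^ 0) * B ^ m) * C ^ j = (q ^ k) ^ m • (B ^ m * C ^ (k+j)) := by
        rw [pow_zero, mul_one, pBm m k, smul_mul_assoc, mul_assoc, ← pow_add]
      rw [e]; exact V.smul_mem _ (mbc m (k+j) h)
    | succ n ih =>
      intro m k j h
      match m with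
      | 0 =>
        have e : ((C ^ k * A ^ (n+1)) * B ^ 0) * C ^ j
            = (q ^ j) ^ (n+1) • (C ^ (k+j) * A ^ (n+1)) := by
          rw [pow_zero, mul_one, mul_assoc, pAl (n+1) j, mul_smul_comm, ← mul_assoc, ← pow_add]
        rw [e]; exact V.smul_mem _ (mca (k+j) (n+1) h)
      | m+1 =>
        have e : ((C ^ k * A ^ (n+1)) * B ^ (m+1)) * C ^ j
            = u • (((C ^ k * A ^ n) * B ^ m) * C ^ j)
              - (u * q ^ (m+1)) • (((C ^ k * A ^ n) * B ^ m) * C ^ (j+1)) := by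
          calc ((C ^ k * A ^ (n+1)) * B ^ (m+1)) * C ^ j
              = (C ^ k * (A ^ (n+1) * B ^ (m+1))) * C ^ j := by
                rw [mul_assoc (C ^ k) (A ^ (n+1)) (B ^ (m+1))]
            _ = (C ^ k * (u • (A ^ n * B ^ m) - (u * q ^ (m+1)) • ((A ^ n * B ^ m) * C))) * C ^ j := by
                rw [idAB]
            _ = u • (((C ^ k * A ^ n) * B ^ m) * C ^ j)
              - (u * q ^ (m+1)) • (((C ^ k * A ^ n) * B ^ m) * C ^ (j+1)) := by
                simp only [mul_sub, sub_mul, smul_mul_assoc, mul_smul_comm, mul_assoc,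
                  pow_succ']
        rw [e]
        exact sub_mem (V.smul_mem _ (ih m k j h)) (V.smul_mem _ (ih m k (j+1) (by omega)))
  -- products of generator shapes
  have prodAA : ∀ k l k' l' : ℕ, 1 ≤ k + k' → (C ^ k * A ^ l) * (C ^ k' * A ^ l') ∈ V := by
    intro k l k' l' h
    have e : (C ^ k * A ^ l) * (C ^ k' * A ^ l')
        = ((q ^ k') ^ l) • (C ^ (k+k') * A ^ (l+l')) := by
      calc (C ^ k * A ^ l) * (C ^ k' * A ^ l') = C ^ k * ((A ^ l * C ^ k') * A ^ l') := by
            rw [mul_assoc, mul_assoc]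
        _ = ((q ^ k') ^ l) • (C ^ k * ((C ^ k' * A ^ l) * A ^ l')) := by
            rw [pAl l k', smul_mul_assoc, mul_smul_comm]
        _ = ((q ^ k') ^ l) • (C ^ (k+k') * A ^ (l+l')) := by
            rw [mul_assoc, ← mul_assoc, ← pow_add, ← pow_add]
    rw [e]; exact V.smul_mem _ (mca (k+k') (l+l') h)
  have prodBB : ∀ m j m' j' : ℕ, 1 ≤ j + j' → (B ^ m * C ^ j) * (B ^ m' * C ^ j') ∈ V := by
    intro m j m' j' h
    have e : (B ^ m * C ^ j) * (B ^ m' * C ^ j')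
        = ((q ^ j) ^ m') • (B ^ (m+m') * C ^ (j+j')) := by
      calc (B ^ m * C ^ j) * (B ^ m' * C ^ j') = B ^ m * ((C ^ j * B ^ m') * C ^ j') := by
            rw [mul_assoc, mul_assoc]
        _ = ((q ^ j) ^ m') • (B ^ m * ((B ^ m' * C ^ j) * C ^ j')) := by
            rw [pBm m' j, smul_mul_assoc, mul_smul_comm]
        _ = ((q ^ j) ^ m') • (B ^ (m+m') * C ^ (j+j')) := by
            rw [mul_assoc, ← mul_assoc, ← pow_add, ← pow_add]
    rw [e]; exact V.smul_mem _ (mbc (m+m') (j+j') h)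
  have prodAB : ∀ k l m j : ℕ, 1 ≤ k + j → (C ^ k * A ^ l) * (B ^ m * C ^ j) ∈ V := by
    intro k l m j h
    have e : (C ^ k * A ^ l) * (B ^ m * C ^ j) = ((C ^ k * A ^ l) * B ^ m) * C ^ j := by
      rw [← mul_assoc]
    rw [e]; exact ML1 l m k j h
  have prodBA : ∀ m j k l : ℕ, 1 ≤ j + k → (B ^ m * C ^ j) * (C ^ k * A ^ l) ∈ V := by
    intro m j k l h
    have e : (B ^ m * C ^ j) * (C ^ k * A ^ l) = (B ^ m * C ^ (j+k)) * A ^ l := by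
      rw [mul_assoc, ← mul_assoc (C ^ j), ← pow_add, ← mul_assoc]
    rw [e]; exact La l m (j+k) h
  -- classification of generators
  have classify : ∀ g ∈ Sgen,
      (∃ k l : ℕ, g = C ^ k * A ^ l ∧ (k = 0 → l = 1)) ∨
      (∃ m j : ℕ, g = B ^ m * C ^ j ∧ (j = 0 → m = 1)) := by
    intro g hg
    rcases hg with (rfl | rfl) | ⟨k, l, hk, hl, (rfl | rfl | rfl)⟩
    · exact Or.inl ⟨0, 1, by simp, fun _ => rfl⟩
    · exact Or.inr ⟨1, 0, by simp, fun _ => rfl⟩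
    · exact Or.inl ⟨k, 0, by simp, fun h0 => absurd h0 (by omega)⟩
    · exact Or.inl ⟨k, l, rfl, fun h0 => absurd h0 (by omega)⟩
    · exact Or.inr ⟨l, k, rfl, fun h0 => absurd h0 (by omega)⟩
  have base : ∀ x ∈ Sgen, ∀ y ∈ Sgen, x * y - y * x ∈ V := by
    intro x hx y hy
    rcases classify x hx with ⟨k, l, rfl, hcA⟩ | ⟨m, j, rfl, hcB⟩ <;>
      rcases classify y hy with ⟨k', l', rfl, hcA'⟩ | ⟨m', j', rfl, hcB'⟩
    · by_cases h0 : k + k' = 0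
      · have hk0 : k = 0 := by omega
        have hk0' : k' = 0 := by omega
        subst hk0; subst hk0'
        rw [hcA rfl, hcA' rfl, sub_self]
        exact V.zero_mem
      · exact sub_mem (prodAA k l k' l' (by omega)) (prodAA k' l' k l (by omega))
    · by_cases h0 : k + j' = 0
      · have hk0 : k = 0 := by omega
        have hj0 : j' = 0 := by omega
        subst hk0; subst hj0
        rw [hcA rfl, hcB' rfl]
        have e : C ^ 0 * A ^ 1 * (B ^ 1 * C ^ 0) - B ^ 1 * C ^ 0 * (C ^ 0 * A ^ 1) = C := by
          simp only [pow_zero, pow_one, one_mul, mul_one]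
          exact hC
        rw [e]
        simpa using mc 1 le_rfl
      · exact sub_mem (prodAB k l m' j' (by omega)) (prodBA m' j' k l (by omega))
    · by_cases h0 : j + k' = 0
      · have hj0 : j = 0 := by omega
        have hk0 : k' = 0 := by omega
        subst hj0; subst hk0
        rw [hcB rfl, hcA' rfl]
        have e : B ^ 1 * C ^ 0 * (C ^ 0 * A ^ 1) - C ^ 0 * A ^ 1 * (B ^ 1 * C ^ 0) = -C := by
          simp only [pow_zero, pow_one, one_mul, mul_one]
          rw [← hC]; abel
        rw [e]
        exact V.neg_mem (by simpa using mc 1 le_rfl)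
      · exact sub_mem (prodBA m j k' l' (by omega)) (prodAB k' l' m j (by omega))
    · by_cases h0 : j + j' = 0
      · have hj0 : j = 0 := by omega
        have hj0' : j' = 0 := by omega
        subst hj0; subst hj0'
        rw [hcB rfl, hcB' rfl, sub_self]
        exact V.zero_mem
      · exact sub_mem (prodBB m j m' j' (by omega)) (prodBB m' j' m j (by omega))
  have stepcl : ∀ x ∈ Sgen, ∀ y ∈ V, x * y - y * x ∈ V := by
    intro x hx y hy
    induction hy using Submodule.span_induction with
    | mem z hz => exact base x hx z hz
    | zero => simpa using V.zero_mem
    | add a b ha hb iha ihb =>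
      have h := add_mem iha ihb
      convert h using 1
      rw [mul_add, add_mul]; abel
    | smul c a ha iha =>
      have h := V.smul_mem c iha
      convert h using 1
      rw [mul_smul_comm, smul_mul_assoc, smul_sub]
  have closure : ∀ x ∈ V, ∀ y ∈ V, x * y - y * x ∈ V := by
    intro x hx y hy
    induction hx using Submodule.span_induction with
    | mem z hz => exact stepcl z hz y hy
    | zero => simpa using V.zero_mem
    | add a b ha hb iha ihb =>
      have h := add_mem iha ihb
      convert h using 1
      rw [add_mul, mul_add]; abel
    | smul c a ha iha =>
      have h := V.smul_mem c iha
      convert h using 1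
      rw [smul_mul_assoc, mul_smul_comm, smul_sub]
  let K : LieSubalgebra ℂ R :=
    { toSubmodule := V
      lie_mem' := fun {x y} hx hy => by
        simp only [Ring.lie_def]
        exact closure x hx y hy }
  have hsubK : LieSubalgebra.lieSpan ℂ R {A, B} ≤ K := by
    apply LieSubalgebra.lieSpan_le.mpr
    rintro z (rfl | rfl)
    · exact mA
    · exact mB
  set L := LieSubalgebra.lieSpan ℂ R {A, B} with hLdef
  have LA : A ∈ L := LieSubalgebra.subset_lieSpan (Set.mem_insert _ _)
  have LB : B ∈ L := LieSubalgebra.subset_lieSpan (Set.mem_insert_iff.mpr (Or.inr rfl))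
  have LC1 : C ∈ L := by
    have h := L.lie_mem LA LB
    rwa [Ring.lie_def, hC] at h
  have hsm : ∀ (s : ℂ) (z w : R), s ≠ 0 → z = s • w → z ∈ L → w ∈ L := by
    intro s z w hs hzw hz
    have h := L.smul_mem s⁻¹ hz
    rw [hzw, inv_smul_smul₀ hs] at h
    exact h
  have haveCA : ∀ k : ℕ, 1 ≤ k → C ^ k ∈ L → C ^ k * A ∈ L := by
    intro k hk hCk
    refine hsm ((1:ℂ) - q ^ k) ⁅C ^ k, A⁆ (C ^ k * A) (hqk k hk) ?_ (L.lie_mem hCk LA)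
    rw [Ring.lie_def, pA k, sub_smul, one_smul]
  have stepC : ∀ k : ℕ, 1 ≤ k → C ^ k ∈ L → C ^ (k+1) ∈ L := by
    intro k hk hCk
    have hCkA : C ^ k * A ∈ L := haveCA k hk hCk
    have h1 : (C ^ k * A) * B = u • C ^ k - (u*q) • C ^ (k+1) := by
      rw [mul_assoc, r4, mul_sub, mul_smul_comm, mul_smul_comm, mul_one, ← pow_succ]
    have h2 : B * (C ^ k * A) = ((q ^ k)⁻¹ * u) • C ^ k - ((q ^ k)⁻¹ * u) • C ^ (k+1) := by
      have hBC : B * C ^ k = (q ^ k)⁻¹ • (C ^ k * B) := by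
        rw [pB k, inv_smul_smul₀ (pow_ne_zero _ hqz)]
      rw [← mul_assoc, hBC, smul_mul_assoc, mul_assoc, r3, mul_sub, mul_smul_comm,
        mul_smul_comm, mul_one, ← pow_succ, smul_sub, smul_smul, smul_smul]
    have hbr : ⁅C ^ k * A, B⁆
        = (u - (q ^ k)⁻¹ * u) • C ^ k + ((q ^ k)⁻¹ * u - u * q) • C ^ (k+1) := by
      rw [Ring.lie_def, h1, h2]
      match_scalars <;> ring
    have hβ : ((q ^ k)⁻¹ * u - u * q) ≠ 0 := by
      have e : (q ^ k)⁻¹ * u - u * q = (q ^ k)⁻¹ * u * (1 - q ^ (k+1)) := by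
        field_simp
        ring
      rw [e]
      exact mul_ne_zero (mul_ne_zero (inv_ne_zero (pow_ne_zero _ hqz)) hu0)
        (hqk (k+1) (by omega))
    refine hsm _ (⁅C ^ k * A, B⁆ - (u - (q ^ k)⁻¹ * u) • C ^ k) _ hβ ?_
      (sub_mem (L.lie_mem hCkA LB) (L.smul_mem _ hCk))
    rw [hbr]; abel
  have LCk : ∀ k : ℕ, 1 ≤ k → C ^ k ∈ L := by
    intro k hk
    obtain ⟨n, rfl⟩ : ∃ n, k = n + 1 := ⟨k - 1, by omega⟩
    clear hk
    induction n with
    | zero => simpa [pow_one] using LC1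
    | succ n ih => exact stepC (n+1) (by omega) ih
  have LCA : ∀ l k : ℕ, 1 ≤ k → C ^ k * A ^ l ∈ L := by
    intro l
    induction l with
    | zero => intro k hk; simpa using LCk k hk
    | succ n ih =>
      intro k hk
      have hbr : ⁅C ^ k * A ^ n, A⁆ = ((1:ℂ) - q ^ k) • (C ^ k * A ^ (n+1)) := by
        rw [Ring.lie_def]
        have h1 : (C ^ k * A ^ n) * A = C ^ k * A ^ (n+1) := by rw [mul_assoc, ← pow_succ]
        have h2 : A * (C ^ k * A ^ n) = q ^ k • (C ^ k * A ^ (n+1)) := by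
          rw [← mul_assoc, pA k, smul_mul_assoc, mul_assoc, ← pow_succ']
        rw [h1, h2, sub_smul, one_smul]
      exact hsm _ _ _ (hqk k hk) hbr (L.lie_mem (ih k hk) LA)
  have LBC : ∀ m k : ℕ, 1 ≤ k → B ^ m * C ^ k ∈ L := by
    intro m
    induction m with
    | zero => intro k hk; simpa using LCk k hk
    | succ n ih =>
      intro k hk
      have hbr : ⁅B, B ^ n * C ^ k⁆ = ((1:ℂ) - q ^ k) • (B ^ (n+1) * C ^ k) := by
        rw [Ring.lie_def]
        have h1 : B * (B ^ n * C ^ k) = B ^ (n+1) * C ^ k := by rw [← mul_assoc, ← pow_succ']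
        have h2 : (B ^ n * C ^ k) * B = q ^ k • (B ^ (n+1) * C ^ k) := by
          rw [mul_assoc, pB k, mul_smul_comm, ← mul_assoc, ← pow_succ]
        rw [h1, h2, sub_smul, one_smul]
      exact hsm _ _ _ (hqk k hk) hbr (L.lie_mem LB (ih k hk))
  apply le_antisymm
  · intro x hx
    exact hsubK hx
  · apply Submodule.span_le.mpr
    rintro g ((rfl | rfl) | ⟨k, l, hk, hl, (rfl | rfl | rfl)⟩)
    · exact LA
    · exact LB
    · exact LCk k hk
    · exact LCA l k hk
    · exact LBC l k hk

/-- The Lie subalgebra of the bounded operators on `H` generated by `{A, B}` (the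
smallest complex subspace containing `A, B` and closed under the commutator bracket,
i.e. the Lie polynomials in `A, B`) equals the linear span of
`{A, B} ∪ {[A,B]^k, [A,B]^k A^l, B^l [A,B]^k : k, l ≥ 1}`. -/
theorem stmt_17 (q : ℝ) (hq0 : 0 < q) (hq1 : q < 1)
    (A B : H2 →L[ℂ] H2)
    (hB : ∀ n : ℕ, B (Phi n) = (Real.sqrt ((1 - q ^ (n + 1)) / (1 - q)) : ℂ) • Phi (n + 1))
    (hA0 : A (Phi 0) = 0)
    (hA : ∀ n : ℕ, A (Phi (n + 1)) = (Real.sqrt ((1 - q ^ (n + 1)) / (1 - q)) : ℂ) • Phi n) :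
    (LieSubalgebra.lieSpan ℂ (H2 →L[ℂ] H2) {A, B}).toSubmodule =
      Submodule.span ℂ ({A, B} ∪ {T : H2 →L[ℂ] H2 | ∃ k l : ℕ, 0 < k ∧ 0 < l ∧
        (T = (A * B - B * A) ^ k ∨ T = (A * B - B * A) ^ k * A ^ l ∨
          T = B ^ l * (A * B - B * A) ^ k)}) := by
  have hq1c : ((1:ℂ) - (q:ℂ)) ≠ 0 := by
    have : ((1 - q : ℝ) : ℂ) ≠ 0 := by
      exact_mod_cast (by linarith : (1:ℝ) - q ≠ 0)
    simpa using this
  have hqz : (q:ℂ) ≠ 0 := by exact_mod_cast hq0.ne'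
  have hqk : ∀ k : ℕ, 1 ≤ k → (1:ℂ) - (q:ℂ) ^ k ≠ 0 := by
    intro k hk
    have h1 : q ^ k < 1 := pow_lt_one₀ hq0.le hq1 (by omega)
    have : ((1 - q ^ k : ℝ) : ℂ) ≠ 0 := by
      exact_mod_cast (by linarith : (1:ℝ) - q ^ k ≠ 0)
    simpa using this
  set u : ℂ := ((1:ℂ) - (q:ℂ))⁻¹ with hudef
  have hu : u * (1 - (q:ℂ)) = 1 := inv_mul_cancel₀ hq1c
  -- density of the span of the Phi's
  have hdense : Dense (↑(Submodule.span ℂ (Set.range Phi)) : Set H2) := by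
    intro x
    have hsum : HasSum (fun n : ℕ => lp.single 2 n (x n)) x :=
      lp.hasSum_single (by norm_num) x
    refine mem_closure_of_tendsto hsum ?_
    filter_upwards with s
    refine Submodule.sum_mem _ (fun i _ => ?_)
    have e : lp.single 2 i (x i) = (x i) • Phi i := by
      rw [Phi, ← lp.single_smul, smul_eq_mul, mul_one]
    rw [e]
    exact Submodule.smul_mem _ _ (Submodule.subset_span ⟨i, rfl⟩)
  -- pointwise computations
  have hnn : ∀ n : ℕ, (0:ℝ) ≤ (1 - q ^ (n+1)) / (1 - q) := by
    intro n
    have h1 : q ^ (n+1) ≤ 1 := (pow_le_one₀ hq0.le hq1.le)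
    have h2 : (0:ℝ) < 1 - q := by linarith
    exact div_nonneg (by linarith) h2.le
  have sq : ∀ n : ℕ, ((Real.sqrt ((1 - q ^ (n+1)) / (1 - q)) : ℝ) : ℂ) *
      ((Real.sqrt ((1 - q ^ (n+1)) / (1 - q)) : ℝ) : ℂ)
      = (((1 - q ^ (n+1)) / (1 - q) : ℝ) : ℂ) := by
    intro n
    rw [← Complex.ofReal_mul, Real.mul_self_sqrt (hnn n)]
  have hABn : ∀ n : ℕ, (A * B) (Phi n) = (((1 - q ^ (n+1)) / (1 - q) : ℝ) : ℂ) • Phi n := by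
    intro n
    rw [ContinuousLinearMap.mul_apply, hB n, map_smul, hA n, smul_smul, sq]
  have hBAn : ∀ n : ℕ, (B * A) (Phi n) = (((1 - q ^ n) / (1 - q) : ℝ) : ℂ) • Phi n := by
    intro n
    cases n with
    | zero =>
      rw [ContinuousLinearMap.mul_apply, hA0, map_zero]
      simp
    | succ n =>
      rw [ContinuousLinearMap.mul_apply, hA n, map_smul, hB n, smul_smul, sq]
  have r3 : B * A = u • (1 : H2 →L[ℂ] H2) - u • (A * B - B * A) := by
    apply ContinuousLinearMap.ext_on hdense
    rintro _ ⟨n, rfl⟩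
    rw [ContinuousLinearMap.sub_apply, ContinuousLinearMap.smul_apply,
      ContinuousLinearMap.smul_apply, ContinuousLinearMap.one_apply,
      ContinuousLinearMap.sub_apply, hABn n, hBAn n]
    match_scalars
    simp only [hudef]
    push_cast
    field_simp
    ring
  exact auxLie A B (A * B - B * A) (q:ℂ) u rfl r3 hu hqz hqk

end
end

section
/- For every X ∈ 𝔈(q) and every n ∈ ℕ, there exists a sequence (Y_m)_{m∈ℕ} of elements of the Lie subalgebra of the bounded operators on H generated by {A, B} (i.e., of Lie polynomials in A, B) such that X Φ_n = Σ_{m=0}^∞ Y_m Φ_n, the series converging in the norm of H. -/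
open Filter Topology

noncomputable section

attribute [local instance] LieRing.ofAssociativeRing

namespace Stmt18Aux

def aC (q : ℝ) (k : ℕ) : ℂ := ((Real.sqrt ((1 - q ^ k) / (1 - q)) : ℝ) : ℂ)

lemma lie_apply (X Y : H2 →L[ℂ] H2) (x : H2) : ⁅X, Y⁆ x = X (Y x) - Y (X x) := by
  rw [Ring.lie_def]; simp [ContinuousLinearMap.mul_apply]

lemma sq_aC {q : ℝ} (hq0 : 0 < q) (hq1 : q < 1) (k : ℕ) :
    aC q (k + 1) * aC q (k + 1) = (((1 - q ^ (k + 1)) / (1 - q) : ℝ) : ℂ) := by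
  have h1 : q ^ (k+1) < 1 := pow_lt_one₀ (le_of_lt hq0) hq1 (Nat.succ_ne_zero k)
  have hnn : (0:ℝ) ≤ (1 - q ^ (k + 1)) / (1 - q) :=
    div_nonneg (by linarith) (by linarith)
  have := Real.mul_self_sqrt hnn
  unfold aC
  exact_mod_cast congrArg (fun r : ℝ => (r : ℂ)) this

lemma D_apply {q : ℝ} (hq0 : 0 < q) (hq1 : q < 1) (A B : H2 →L[ℂ] H2)
    (hB : ∀ n : ℕ, B (Phi n) = aC q (n+1) • Phi (n+1))
    (hA0 : A (Phi 0) = 0)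
    (hA : ∀ n : ℕ, A (Phi (n+1)) = aC q (n+1) • Phi n) :
    ∀ k : ℕ, (⁅A, B⁆ : H2 →L[ℂ] H2) (Phi k) = ((q:ℂ) ^ k) • Phi k := by
  have hq : (1:ℝ) - q ≠ 0 := by linarith
  intro k
  rw [lie_apply]
  cases k with
  | zero =>
    rw [hB 0, map_smul, hA 0, hA0, map_zero, sub_zero, smul_smul, sq_aC hq0 hq1]
    have : ((1 - q ^ (0+1)) / (1 - q) : ℝ) = 1 := by field_simp; ring
    rw [this]
    norm_num
  | succ k =>
    rw [hB (k+1), map_smul, hA (k+1), hA k, map_smul, hB k, smul_smul, smul_smul,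
      ← sub_smul, sq_aC hq0 hq1, sq_aC hq0 hq1]
    congr 1
    have : ((1 - q ^ (k+1+1)) / (1 - q) : ℝ) - ((1 - q ^ (k+1)) / (1 - q) : ℝ) = q ^ (k+1) := by
      field_simp; ring
    exact_mod_cast congrArg (fun r : ℝ => (r : ℂ)) this

lemma lowering {q : ℝ} (hq0 : 0 < q) (hq1 : q < 1) (A B : H2 →L[ℂ] H2)
    (hA : ∀ n : ℕ, A (Phi (n+1)) = aC q (n+1) • Phi n)
    (hD : ∀ k : ℕ, (⁅A, B⁆ : H2 →L[ℂ] H2) (Phi k) = ((q:ℂ) ^ k) • Phi k) :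
    ∀ l : ℕ, 2 ≤ l →
      ∃ L ∈ LieSubalgebra.lieSpan ℂ (H2 →L[ℂ] H2) {A, B}, ∃ γ : ℂ, γ ≠ 0 ∧
        ∀ m : ℕ, L (Phi (l + m)) =
          (γ * (q:ℂ) ^ ((l - 1) * m) * ∏ i ∈ Finset.range l, aC q (m + 1 + i)) • Phi m := by
  have hAmem : A ∈ LieSubalgebra.lieSpan ℂ (H2 →L[ℂ] H2) {A, B} :=
    LieSubalgebra.subset_lieSpan (by simp)
  have hBmem : B ∈ LieSubalgebra.lieSpan ℂ (H2 →L[ℂ] H2) {A, B} :=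
    LieSubalgebra.subset_lieSpan (by simp)
  have hql : ∀ l : ℕ, 1 ≤ l → (1 : ℂ) - (q:ℂ)^l ≠ 0 := by
    intro l hl
    have h1 : q ^ l < 1 := pow_lt_one₀ (le_of_lt hq0) hq1 (by omega)
    have h2 : (1:ℝ) - q ^ l ≠ 0 := by linarith
    intro h
    exact h2 (by exact_mod_cast h)
  have hDL : ∀ (L : H2 →L[ℂ] H2) (l : ℕ) (c : ℕ → ℂ),
      (∀ m : ℕ, L (Phi (l + m)) = c m • Phi m) →
      ∀ m : ℕ, (⁅(⁅A, B⁆ : H2 →L[ℂ] H2), L⁆) (Phi (l + m)) =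
        (((q:ℂ) ^ m - (q:ℂ) ^ (l + m)) * c m) • Phi m := by
    intro L l c hL m
    rw [lie_apply, hL m, map_smul, hD m, hD (l+m), map_smul, hL m, smul_smul, smul_smul,
      ← sub_smul]
    congr 1
    ring
  have hDA : ∀ k : ℕ, (⁅(⁅A, B⁆ : H2 →L[ℂ] H2), A⁆) (Phi (k+1)) =
      (((q:ℂ) ^ k - (q:ℂ) ^ (k+1)) * aC q (k+1)) • Phi k := by
    intro k
    have := hDL A 1 (fun m => aC q (m+1)) (fun m => by rw [Nat.add_comm 1 m]; exact hA m) k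
    rw [Nat.add_comm 1 k] at this
    exact this
  intro l hl
  induction l, hl using Nat.le_induction with
  | base =>
    refine ⟨⁅A, ⁅(⁅A, B⁆ : H2 →L[ℂ] H2), A⁆⁆, ?_, -(1 - (q:ℂ))^2, ?_, ?_⟩
    · exact LieSubalgebra.lie_mem _ hAmem
        (LieSubalgebra.lie_mem _ (LieSubalgebra.lie_mem _ hAmem hBmem) hAmem)
    · have h := hql 1 le_rfl
      rw [pow_one] at h
      exact neg_ne_zero.2 (pow_ne_zero _ h)
    · intro m
      rw [show 2 + m = m + 1 + 1 from by omega, lie_apply, hDA (m+1), map_smul, hA m,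
        hA (m+1), map_smul, hDA m, smul_smul, smul_smul, ← sub_smul]
      congr 1
      simp only [Finset.prod_range_succ, Finset.prod_range_zero, one_mul, add_zero]
      norm_num
      ring
  | succ l hl IH =>
    obtain ⟨L, hLmem, γ, hγ, hL⟩ := IH
    refine ⟨⁅A, ⁅(⁅A, B⁆ : H2 →L[ℂ] H2), L⁆⁆, ?_, -(1 - (q:ℂ)^l)^2 * γ, ?_, ?_⟩
    · exact LieSubalgebra.lie_mem _ hAmem
        (LieSubalgebra.lie_mem _ (LieSubalgebra.lie_mem _ hAmem hBmem) hLmem)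
    · exact mul_ne_zero (neg_ne_zero.2 (pow_ne_zero _ (hql l (by omega)))) hγ
    · intro m
      have hDL' := hDL L l _ hL
      rw [show l + 1 + m = (l + m) + 1 from by omega, lie_apply, hA (l+m), map_smul]
      rw [show (l + m) + 1 = l + (m + 1) from by omega, hDL' (m+1), map_smul, hA m,
        hDL' m, smul_smul, smul_smul, ← sub_smul]
      congr 1
      rw [show (l + 1 - 1) = l from by omega, Finset.prod_range_succ]
      have hP2 : aC q (l + (m + 1)) = aC q (m + 1 + l) := by congr 1; omega
      rw [hP2]
      obtain ⟨t, rfl⟩ : ∃ t, l = t + 1 := ⟨l - 1, by omega⟩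
      simp only [Nat.add_sub_cancel]
      have hP3 : (∏ i ∈ Finset.range (t+1), aC q (m + 1 + 1 + i)) * aC q (m + 1)
          = (∏ i ∈ Finset.range (t+1), aC q (m + 1 + i)) * aC q (m + 1 + (t + 1)) := by
        have h := Finset.prod_range_succ' (fun i => aC q (m + 1 + i)) (t+1)
        rw [Finset.prod_range_succ] at h
        calc (∏ i ∈ Finset.range (t+1), aC q (m + 1 + 1 + i)) * aC q (m + 1)
            = (∏ i ∈ Finset.range (t+1), aC q (m + 1 + (i + 1))) * aC q (m + 1 + 0) := by
              refine congrArg₂ (· * ·) ?_ (by norm_num)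
              exact Finset.prod_congr rfl (fun i _ => by congr 1; omega)
          _ = (∏ i ∈ Finset.range (t+1), aC q (m + 1 + i)) * aC q (m + 1 + (t + 1)) := h.symm
      linear_combination ((((q:ℂ)) ^ (m+1) - ((q:ℂ)) ^ (t + 1 + (m + 1)))
        * (γ * ((q:ℂ)) ^ (t * (m + 1)))) * hP3

lemma raising {q : ℝ} (hq0 : 0 < q) (hq1 : q < 1) (A B : H2 →L[ℂ] H2)
    (hB : ∀ n : ℕ, B (Phi n) = aC q (n+1) • Phi (n+1))
    (hD : ∀ k : ℕ, (⁅A, B⁆ : H2 →L[ℂ] H2) (Phi k) = ((q:ℂ) ^ k) • Phi k) :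
    ∀ l : ℕ, 2 ≤ l →
      ∃ R ∈ LieSubalgebra.lieSpan ℂ (H2 →L[ℂ] H2) {A, B}, ∃ γ : ℂ, γ ≠ 0 ∧
        ∀ m : ℕ, R (Phi m) =
          (γ * (q:ℂ) ^ ((l - 1) * m) * ∏ i ∈ Finset.range l, aC q (m + 1 + i)) • Phi (m + l) := by
  have hAmem : A ∈ LieSubalgebra.lieSpan ℂ (H2 →L[ℂ] H2) {A, B} :=
    LieSubalgebra.subset_lieSpan (by simp)
  have hBmem : B ∈ LieSubalgebra.lieSpan ℂ (H2 →L[ℂ] H2) {A, B} :=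
    LieSubalgebra.subset_lieSpan (by simp)
  have hql : ∀ l : ℕ, 1 ≤ l → (1 : ℂ) - (q:ℂ)^l ≠ 0 := by
    intro l hl
    have h1 : q ^ l < 1 := pow_lt_one₀ (le_of_lt hq0) hq1 (by omega)
    have h2 : (1:ℝ) - q ^ l ≠ 0 := by linarith
    intro h
    exact h2 (by exact_mod_cast h)
  have hDR : ∀ (R : H2 →L[ℂ] H2) (l : ℕ) (c : ℕ → ℂ),
      (∀ m : ℕ, R (Phi m) = c m • Phi (m + l)) →
      ∀ m : ℕ, (⁅(⁅A, B⁆ : H2 →L[ℂ] H2), R⁆) (Phi m) =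
        (((q:ℂ) ^ (m + l) - (q:ℂ) ^ m) * c m) • Phi (m + l) := by
    intro R l c hR m
    rw [lie_apply, hR m, map_smul, hD (m+l), hD m, map_smul, hR m, smul_smul, smul_smul,
      ← sub_smul]
    congr 1
    ring
  have hDB : ∀ m : ℕ, (⁅(⁅A, B⁆ : H2 →L[ℂ] H2), B⁆) (Phi m) =
      (((q:ℂ) ^ (m + 1) - (q:ℂ) ^ m) * aC q (m+1)) • Phi (m + 1) :=
    hDR B 1 (fun m => aC q (m+1)) hB
  intro l hl
  induction l, hl using Nat.le_induction with
  | base =>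
    refine ⟨⁅B, ⁅(⁅A, B⁆ : H2 →L[ℂ] H2), B⁆⁆, ?_, -(1 - (q:ℂ))^2, ?_, ?_⟩
    · exact LieSubalgebra.lie_mem _ hBmem
        (LieSubalgebra.lie_mem _ (LieSubalgebra.lie_mem _ hAmem hBmem) hBmem)
    · have h := hql 1 le_rfl
      rw [pow_one] at h
      exact neg_ne_zero.2 (pow_ne_zero _ h)
    · intro m
      rw [lie_apply, hDB m, map_smul, hB (m+1), hB m, map_smul, hDB (m+1),
        smul_smul, smul_smul, ← sub_smul, show m + 1 + 1 = m + 2 from by omega]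
      congr 1
      simp only [Finset.prod_range_succ, Finset.prod_range_zero, one_mul, add_zero]
      have : aC q (m + 1 + 1) = aC q (m + 2) := by congr 1
      rw [this]
      norm_num
      ring
  | succ l hl IH =>
    obtain ⟨R, hRmem, γ, hγ, hR⟩ := IH
    refine ⟨⁅B, ⁅(⁅A, B⁆ : H2 →L[ℂ] H2), R⁆⁆, ?_, -(1 - (q:ℂ)^l)^2 * γ, ?_, ?_⟩
    · exact LieSubalgebra.lie_mem _ hBmem
        (LieSubalgebra.lie_mem _ (LieSubalgebra.lie_mem _ hAmem hBmem) hRmem)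
    · exact mul_ne_zero (neg_ne_zero.2 (pow_ne_zero _ (hql l (by omega)))) hγ
    · intro m
      have hDR' := hDR R l _ hR
      rw [lie_apply, hDR' m, map_smul, hB (m+l), hB m, map_smul, hDR' (m+1),
        smul_smul, smul_smul,
        show m + l + 1 = m + (l + 1) from by omega,
        show m + 1 + l = m + (l + 1) from by omega, ← sub_smul]
      congr 1
      rw [show (l + 1 - 1) = l from by omega, Finset.prod_range_succ]
      have hP2 : aC q (m + (l + 1)) = aC q (m + 1 + l) := by congr 1; omega
      rw [hP2]
      obtain ⟨t, rfl⟩ : ∃ t, l = t + 1 := ⟨l - 1, by omega⟩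
      simp only [Nat.add_sub_cancel]
      have hP3 : (∏ i ∈ Finset.range (t+1), aC q (m + 1 + 1 + i)) * aC q (m + 1)
          = (∏ i ∈ Finset.range (t+1), aC q (m + 1 + i)) * aC q (m + 1 + (t + 1)) := by
        have h := Finset.prod_range_succ' (fun i => aC q (m + 1 + i)) (t+1)
        rw [Finset.prod_range_succ] at h
        calc (∏ i ∈ Finset.range (t+1), aC q (m + 1 + 1 + i)) * aC q (m + 1)
            = (∏ i ∈ Finset.range (t+1), aC q (m + 1 + (i + 1))) * aC q (m + 1 + 0) := by
              refine congrArg₂ (· * ·) ?_ (by norm_num)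
              exact Finset.prod_congr rfl (fun i _ => by congr 1; omega)
          _ = (∏ i ∈ Finset.range (t+1), aC q (m + 1 + i)) * aC q (m + 1 + (t + 1)) := h.symm
      linear_combination (-((((q:ℂ)) ^ (m + 1 + (t + 1)) - ((q:ℂ)) ^ (m + 1))
        * (γ * ((q:ℂ)) ^ (t * (m + 1))))) * hP3

lemma pow_A {q : ℝ} (A : H2 →L[ℂ] H2)
    (hA : ∀ n : ℕ, A (Phi (n+1)) = aC q (n+1) • Phi n) :
    ∀ l m : ℕ, (A ^ l) (Phi (l + m)) = (∏ i ∈ Finset.range l, aC q (m + 1 + i)) • Phi m := by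
  intro l
  induction l with
  | zero => intro m; simp [ContinuousLinearMap.one_apply]
  | succ l IH =>
    intro m
    rw [pow_succ, ContinuousLinearMap.mul_apply,
      show l + 1 + m = (l + m) + 1 from by omega, hA (l+m), map_smul, IH m,
      smul_smul, Finset.prod_range_succ]
    congr 1
    have : aC q (l + m + 1) = aC q (m + 1 + l) := by congr 1; omega
    rw [this]
    ring

lemma pow_A_zero {q : ℝ} (A : H2 →L[ℂ] H2)
    (hA0 : A (Phi 0) = 0)
    (hA : ∀ n : ℕ, A (Phi (n+1)) = aC q (n+1) • Phi n) :
    ∀ l n : ℕ, n < l → (A ^ l) (Phi n) = 0 := by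
  intro l n hn
  obtain ⟨k, rfl⟩ : ∃ k, l = (k + 1) + n := ⟨l - n - 1, by omega⟩
  rw [pow_add, ContinuousLinearMap.mul_apply,
    show Phi n = Phi (n + 0) from rfl, pow_A A hA n 0, map_smul,
    pow_succ, ContinuousLinearMap.mul_apply, hA0, map_zero, smul_zero]

lemma pow_B {q : ℝ} (B : H2 →L[ℂ] H2)
    (hB : ∀ n : ℕ, B (Phi n) = aC q (n+1) • Phi (n+1)) :
    ∀ l m : ℕ, (B ^ l) (Phi m) = (∏ i ∈ Finset.range l, aC q (m + 1 + i)) • Phi (m + l) := by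
  intro l
  induction l with
  | zero => intro m; simp [ContinuousLinearMap.one_apply]
  | succ l IH =>
    intro m
    rw [pow_succ', ContinuousLinearMap.mul_apply, IH m, map_smul, hB (m+l), smul_smul,
      show m + l + 1 = m + (l + 1) from by omega, Finset.prod_range_succ,
      show aC q (m + (l + 1)) = aC q (m + 1 + l) from by congr 1; omega]

lemma sum_single_tendsto (f : ℕ → H2) (hf : ∀ m : ℕ, m ≠ 0 → f m = 0) :
    Tendsto (fun N : ℕ => ∑ m ∈ Finset.range N, f m) atTop (𝓝 (f 0)) := by
  apply tendsto_const_nhds.congr'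
  filter_upwards [eventually_ge_atTop 1] with N hN
  exact (Finset.sum_eq_single_of_mem 0 (Finset.mem_range.2 hN) (fun b _ hb => hf b hb)).symm

end Stmt18Aux

open Stmt18Aux in
/-- For every `X ∈ 𝔈(q)` (the span of `{I} ∪ {A^l, B^l : l ≥ 2}`) and every `n ∈ ℕ`,
there is a sequence `(Y_m)` of Lie polynomials in `A, B` (elements of the Lie
subalgebra generated by `{A, B}`) such that `X Φ_n = Σ_{m=0}^∞ Y_m Φ_n`, the series
converging in the norm of `H`. -/
theorem stmt_18 (q : ℝ) (hq0 : 0 < q) (hq1 : q < 1)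
    (A B : H2 →L[ℂ] H2)
    (hB : ∀ n : ℕ, B (Phi n) = (Real.sqrt ((1 - q ^ (n + 1)) / (1 - q)) : ℂ) • Phi (n + 1))
    (hA0 : A (Phi 0) = 0)
    (hA : ∀ n : ℕ, A (Phi (n + 1)) = (Real.sqrt ((1 - q ^ (n + 1)) / (1 - q)) : ℂ) • Phi n) :
    ∀ X ∈ Submodule.span ℂ ({(1 : H2 →L[ℂ] H2)} ∪
        {T : H2 →L[ℂ] H2 | ∃ l : ℕ, 2 ≤ l ∧ (T = A ^ l ∨ T = B ^ l)}),
      ∀ n : ℕ, ∃ Y : ℕ → (H2 →L[ℂ] H2),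
        (∀ m : ℕ, Y m ∈ LieSubalgebra.lieSpan ℂ (H2 →L[ℂ] H2) {A, B}) ∧
        Tendsto (fun N : ℕ => ∑ m ∈ Finset.range N, (Y m) (Phi n)) atTop
          (𝓝 (X (Phi n))) := by
  classical
  have hA' : ∀ n : ℕ, A (Phi (n+1)) = aC q (n+1) • Phi n := hA
  have hB' : ∀ n : ℕ, B (Phi n) = aC q (n+1) • Phi (n+1) := hB
  have hD := D_apply hq0 hq1 A B hB' hA0 hA'
  have hqC : (q:ℂ) ≠ 0 := by exact_mod_cast hq0.ne'
  -- helper: a single-term series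
  have single : ∀ (x T : H2 →L[ℂ] H2) (n : ℕ),
      T ∈ LieSubalgebra.lieSpan ℂ (H2 →L[ℂ] H2) {A, B} → T (Phi n) = x (Phi n) →
      ∃ Y : ℕ → (H2 →L[ℂ] H2),
        (∀ m : ℕ, Y m ∈ LieSubalgebra.lieSpan ℂ (H2 →L[ℂ] H2) {A, B}) ∧
        Tendsto (fun N : ℕ => ∑ m ∈ Finset.range N, (Y m) (Phi n)) atTop
          (𝓝 (x (Phi n))) := by
    intro x T n hT hTx
    refine ⟨fun m => if m = 0 then T else 0, ?_, ?_⟩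
    · intro m
      dsimp only
      split
      · exact hT
      · exact (LieSubalgebra.lieSpan ℂ (H2 →L[ℂ] H2) {A, B}).zero_mem
    · have h := sum_single_tendsto
        (fun m => (if m = 0 then T else (0 : H2 →L[ℂ] H2)) (Phi n))
        (fun m hm => by simp [if_neg hm])
      simpa [hTx] using h
  intro X hX
  induction hX using Submodule.span_induction with
  | mem x hx =>
    intro n
    rcases hx with hx | hx
    · -- x = 1
      rw [Set.mem_singleton_iff] at hx
      subst hx
      refine single 1 (((q:ℂ) ^ n)⁻¹ • ⁅A, B⁆) n
        ((LieSubalgebra.lieSpan ℂ (H2 →L[ℂ] H2) {A, B}).smul_mem _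
          (LieSubalgebra.lie_mem _ (LieSubalgebra.subset_lieSpan (by simp))
            (LieSubalgebra.subset_lieSpan (by simp)))) ?_
      rw [ContinuousLinearMap.smul_apply, hD n, smul_smul,
        inv_mul_cancel₀ (pow_ne_zero _ hqC), one_smul, ContinuousLinearMap.one_apply]
    · obtain ⟨l, hl, rfl | rfl⟩ := hx
      · -- x = A ^ l
        rcases lt_or_ge n l with hn | hn
        · refine single (A ^ l) 0 n
            ((LieSubalgebra.lieSpan ℂ (H2 →L[ℂ] H2) {A, B}).zero_mem) ?_
          rw [pow_A_zero A hA0 hA' l n hn, ContinuousLinearMap.zero_apply]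
        · obtain ⟨m, rfl⟩ : ∃ m, n = l + m := ⟨n - l, by omega⟩
          obtain ⟨L, hLmem, γ, hγ, hL⟩ := lowering hq0 hq1 A B hA' hD l hl
          have he : γ * (q:ℂ) ^ ((l - 1) * m) ≠ 0 := mul_ne_zero hγ (pow_ne_zero _ hqC)
          refine single (A ^ l) ((γ * (q:ℂ) ^ ((l - 1) * m))⁻¹ • L) (l + m)
            ((LieSubalgebra.lieSpan ℂ (H2 →L[ℂ] H2) {A, B}).smul_mem _ hLmem) ?_
          rw [ContinuousLinearMap.smul_apply, hL m, smul_smul, pow_A A hA' l m,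
            ← mul_assoc, inv_mul_cancel₀ he, one_mul]
      · -- x = B ^ l
        obtain ⟨R, hRmem, γ, hγ, hR⟩ := raising hq0 hq1 A B hB' hD l hl
        have he : γ * (q:ℂ) ^ ((l - 1) * n) ≠ 0 := mul_ne_zero hγ (pow_ne_zero _ hqC)
        refine single (B ^ l) ((γ * (q:ℂ) ^ ((l - 1) * n))⁻¹ • R) n
          ((LieSubalgebra.lieSpan ℂ (H2 →L[ℂ] H2) {A, B}).smul_mem _ hRmem) ?_
        rw [ContinuousLinearMap.smul_apply, hR n, smul_smul, pow_B B hB' l n,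
          ← mul_assoc, inv_mul_cancel₀ he, one_mul]
  | zero =>
    intro n
    refine ⟨fun _ => 0, fun m => (LieSubalgebra.lieSpan ℂ (H2 →L[ℂ] H2) {A, B}).zero_mem, ?_⟩
    simp only [ContinuousLinearMap.zero_apply, Finset.sum_const, smul_zero]
    exact tendsto_const_nhds
  | add x y hx hy ihx ihy =>
    intro n
    obtain ⟨Y1, h1, t1⟩ := ihx n
    obtain ⟨Y2, h2, t2⟩ := ihy n
    refine ⟨fun m => Y1 m + Y2 m, fun m =>
      (LieSubalgebra.lieSpan ℂ (H2 →L[ℂ] H2) {A, B}).add_mem (h1 m) (h2 m), ?_⟩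
    simp only [ContinuousLinearMap.add_apply, Finset.sum_add_distrib]
    exact t1.add t2
  | smul a x hx ih =>
    intro n
    obtain ⟨Y, h, t⟩ := ih n
    refine ⟨fun m => a • Y m, fun m =>
      (LieSubalgebra.lieSpan ℂ (H2 →L[ℂ] H2) {A, B}).smul_mem a (h m), ?_⟩
    simp only [ContinuousLinearMap.smul_apply, ← Finset.smul_sum]
    exact t.const_smul a

end
end
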